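/- arXiv:2309.06689 — 6 statements merged into one kernel-verified Lean document; each statement's English description precedes it below -/
import Mathlib

section
/- For |q| < 1, the theta function φ(-q) := Σ_{k∈ℤ} (-q)^{k²} satisfies the product identity φ(-q) = (q;q)_∞² / (q²;q²)_∞, where (A;q)_∞ = Π_{k≥0}(1 - A q^k). -/
open Finset Filter Topology


lemma mult_one_add {a : ℕ → ℂ} (ha : Summable a) (h1 : ∀ k, ‖a k‖ < 1) :
    Multipliable (fun k => 1 + a k) ∧ (∏' k, (1 + a k)) ≠ 0 := by
  have hne : ∀ (u : Unit) (k : ℕ), 1 + a k ≠ 0 := by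
    intro _ k h
    have h2 : a k = -1 := by linear_combination h
    have := h1 k
    rw [h2] at this
    simp at this
  have hsm : ∀ (u : Unit), Summable (fun k => Complex.log (1 + a k)) := by
    intro _
    apply Summable.of_norm_bounded_eventually_nat (g := fun k => (3/2) * ‖a k‖)
      (ha.norm.mul_left _)
    have h0 : Tendsto (fun k => ‖a k‖) atTop (𝓝 0) := by
      simpa using ha.tendsto_atTop_zero.norm
    filter_upwards [h0.eventually_le_const (by norm_num : (0:ℝ) < 1/2)] with k hk
    exact Complex.norm_log_one_add_half_le_self hk
  constructor
  · exact Complex.multipliable_of_summable_log (hsm ())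
  · have := Complex.cexp_tsum_eq_tprod (f := fun k => 1 + a k) (hne ()) (hsm ())
    rw [← this]
    exact Complex.exp_ne_zero _

noncomputable section PhiAux

variable (q : ℂ)

/-- partial q-Pochhammer (Q; Q)_m with Q = q^2 -/
def Pp (m : ℕ) : ℂ := ∏ i ∈ Finset.range m, (1 - (q ^ 2) ^ (i + 1))

/-- Gaussian binomial [m, k]_{q²} -/
def gB (m k : ℕ) : ℂ := if k ≤ m then Pp q m / (Pp q k * Pp q (m - k)) else 0

variable {q}

lemma norm_ppow_lt (hq : ‖q‖ < 1) (i : ℕ) : ‖(q ^ 2) ^ (i + 1)‖ < 1 := by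
  rw [norm_pow, norm_pow]
  calc (‖q‖ ^ 2) ^ (i + 1) ≤ (‖q‖ ^ 2) ^ 1 :=
        pow_le_pow_of_le_one (by positivity) (by nlinarith [norm_nonneg q]) (by omega)
  _ < 1 := by nlinarith [norm_nonneg q]

lemma pow_ne_one' (hq : ‖q‖ < 1) (i : ℕ) : (1 : ℂ) - (q ^ 2) ^ (i + 1) ≠ 0 := by
  intro h
  have h2 : (q ^ 2) ^ (i + 1) = 1 := by linear_combination -h
  have := norm_ppow_lt hq i
  rw [h2] at this; simp at this

lemma Pp_ne (hq : ‖q‖ < 1) (m : ℕ) : Pp q m ≠ 0 := by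
  rw [Pp, Finset.prod_ne_zero_iff]
  exact fun i _ => pow_ne_one' hq i

lemma Pp_succ (m : ℕ) : Pp q (m + 1) = Pp q m * (1 - (q ^ 2) ^ (m + 1)) :=
  Finset.prod_range_succ _ _

lemma gB_zero (hq : ‖q‖ < 1) (m : ℕ) : gB q m 0 = 1 := by
  simp [gB, Pp, div_self (Pp_ne hq m)]
  exact Pp_ne hq m

lemma gB_self (hq : ‖q‖ < 1) (m : ℕ) : gB q m m = 1 := by
  simp [gB, Pp]
  exact Pp_ne hq m

lemma gB_of_gt {m k : ℕ} (h : m < k) : gB q m k = 0 := by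
  simp [gB, Nat.not_le.2 h]

/-- Pascal recurrence I -/
lemma gB_pascal1 (hq : ‖q‖ < 1) {m k : ℕ} (hk : k ≤ m) :
    gB q (m + 1) (k + 1) = gB q m (k + 1) + (q ^ 2) ^ (m - k) * gB q m k := by
  rcases eq_or_lt_of_le hk with rfl | hk'
  · rw [gB_self hq, gB_of_gt (by omega), gB_self hq]; simp
  · have h1 : k + 1 ≤ m := hk'
    rw [gB, gB, gB, if_pos (by omega), if_pos h1, if_pos hk]
    have e1 : m + 1 - (k + 1) = (m - (k+1)) + 1 := by omega
    have e2 : m - k = (m - (k+1)) + 1 := by omega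
    rw [e1, e2, Pp_succ, Pp_succ, Pp_succ]
    have hA := Pp_ne hq m
    have hB := Pp_ne hq (k+1)
    have hC := Pp_ne hq k
    have hD := Pp_ne hq (m - (k+1))
    have h5 := pow_ne_one' hq m
    have h6 := pow_ne_one' hq (m - (k+1))
    have h7 := pow_ne_one' hq k
    have hpow : (q^2)^((m - (k+1)) + 1) * (q^2)^(k+1) = (q^2)^(m+1) := by
      rw [← pow_add]; congr 1; omega
    set X := (q ^ 2) ^ (k + 1) with hX
    set Y := (q ^ 2) ^ (m - (k + 1) + 1) with hY
    clear_value X Y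
    have key : (1 : ℂ) - (q^2)^(m+1) = (1 - Y) + Y * (1 - X) := by
      linear_combination hpow
    rw [key]
    field_simp

/-- Pascal recurrence II -/
lemma gB_pascal2 (hq : ‖q‖ < 1) {m k : ℕ} (hk : k ≤ m) :
    gB q (m + 1) (k + 1) = (q ^ 2) ^ (k + 1) * gB q m (k + 1) + gB q m k := by
  rcases eq_or_lt_of_le hk with rfl | hk'
  · rw [gB_self hq, gB_of_gt (by omega), gB_self hq]; simp
  · have h1 : k + 1 ≤ m := hk'
    rw [gB, gB, gB, if_pos (by omega), if_pos h1, if_pos hk]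
    have e1 : m + 1 - (k + 1) = (m - (k+1)) + 1 := by omega
    have e2 : m - k = (m - (k+1)) + 1 := by omega
    rw [e1, e2, Pp_succ, Pp_succ, Pp_succ]
    have hA := Pp_ne hq m
    have hB := Pp_ne hq (k+1)
    have hC := Pp_ne hq k
    have hD := Pp_ne hq (m - (k+1))
    have h5 := pow_ne_one' hq m
    have h6 := pow_ne_one' hq (m - (k+1))
    have h7 := pow_ne_one' hq k
    have hpow : (q^2)^(k+1) * (q^2)^((m - (k+1)) + 1) = (q^2)^(m+1) := by
      rw [← pow_add]; congr 1; omega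
    set X := (q ^ 2) ^ (k + 1) with hX
    set Y := (q ^ 2) ^ (m - (k + 1) + 1) with hY
    clear_value X Y
    have key : (1 : ℂ) - (q^2)^(m+1) = X * (1 - Y) + (1 - X) := by
      linear_combination hpow
    rw [key]
    field_simp

variable (q) in
/-- weight (-1)^(i-n) q^((i-n)^2) -/
def wgt (n i : ℕ) : ℂ := (-1) ^ (i + n) * q ^ (((i : ℤ) - n) ^ 2)

variable (q) in
/-- the finite theta sum -/
def Sn (n : ℕ) : ℂ := ∑ i ∈ Finset.range (2 * n + 1), wgt q n i * gB q (2 * n) i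

variable (q) in
def Tn (n : ℕ) : ℂ := ∑ i ∈ Finset.range (2 * n + 2), wgt q (n + 1) i * gB q (2 * n + 1) i

lemma zpow_sq_int (hq0 : q ≠ 0) {a b : ℤ} (h : a = b) : q ^ a = q ^ b := by rw [h]

lemma wgt_shift_b (n i : ℕ) : wgt q (n + 1) (i + 1) = wgt q n i := by
  unfold wgt
  congr 1
  · rw [show i + 1 + (n + 1) = i + n + 2 by ring, pow_succ, pow_succ]; ring
  · congr 1; push_cast; ring

lemma wgt_shift_a (hq0 : q ≠ 0) (n i : ℕ) (hi : i ≤ 2 * n + 1) :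
    wgt q (n + 1) (i + 1) * (q ^ 2) ^ (2 * n + 1 - i) =
      -(q ^ (2 * n + 1)) * wgt q (n + 1) i := by
  unfold wgt
  rw [← pow_mul, ← zpow_natCast q (2 * (2 * n + 1 - i)), ← zpow_natCast q (2 * n + 1)]
  have hE : (((i : ℤ) + 1) - (n + 1)) ^ 2 + ((2 * (2 * n + 1 - i) : ℕ) : ℤ)
      = ((i : ℤ) - (n + 1)) ^ 2 + ((2 * n + 1 : ℕ) : ℤ) := by
    have : ((2 * (2 * n + 1 - i) : ℕ) : ℤ) = 2 * (2 * (n : ℤ) + 1 - i) := by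
      push_cast [Nat.cast_sub hi]; omega
    rw [this]; push_cast; ring
  have hsgn : ((-1 : ℂ)) ^ (i + 1 + (n + 1)) = (-1) ^ (i + (n + 1)) * (-1) := by
    rw [show i + 1 + (n + 1) = i + (n + 1) + 1 by ring, pow_succ]
  rw [mul_assoc, ← zpow_add₀ hq0, hsgn]
  push_cast at hE ⊢
  rw [zpow_sq_int (q := q) hq0 hE, zpow_add₀ hq0]
  ring

lemma wgt_shift_c (hq0 : q ≠ 0) (n i : ℕ) :
    wgt q (n + 1) (i + 1) * (q ^ 2) ^ (i + 1) =
      -(q ^ (2 * n + 1)) * wgt q n (i + 1) := by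
  unfold wgt
  rw [← pow_mul, ← zpow_natCast q (2 * (i + 1)), ← zpow_natCast q (2 * n + 1)]
  have hE : (((i : ℤ) + 1) - (n + 1)) ^ 2 + ((2 * (i + 1) : ℕ) : ℤ)
      = (((i : ℤ) + 1) - n) ^ 2 + ((2 * n + 1 : ℕ) : ℤ) := by push_cast; ring
  have hsgn : ((-1 : ℂ)) ^ (i + 1 + (n + 1)) = (-1) ^ (i + 1 + n) * (-1) := by
    rw [show i + 1 + (n + 1) = i + 1 + n + 1 by ring, pow_succ]
  rw [mul_assoc, ← zpow_add₀ hq0, hsgn]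
  push_cast at hE ⊢
  rw [zpow_sq_int (q := q) hq0 hE, zpow_add₀ hq0]
  ring

lemma wgt_zero_step (hq0 : q ≠ 0) (n : ℕ) :
    wgt q (n + 1) 0 = -(q ^ (2 * n + 1)) * wgt q n 0 := by
  unfold wgt
  rw [← zpow_natCast q (2 * n + 1)]
  have hE : ((0 : ℤ) - (n + 1)) ^ 2 = ((0 : ℤ) - n) ^ 2 + ((2 * n + 1 : ℕ) : ℤ) := by
    push_cast; ring
  have hsgn : ((-1 : ℂ)) ^ (0 + (n + 1)) = (-1) ^ (0 + n) * (-1) := by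
    rw [show 0 + (n + 1) = 0 + n + 1 by ring, pow_succ]
  push_cast at hE ⊢
  rw [zpow_sq_int (q := q) hq0 hE, zpow_add₀ hq0, hsgn]
  ring

lemma step1 (hq : ‖q‖ < 1) (hq0 : q ≠ 0) (n : ℕ) :
    Sn q (n + 1) = (1 - q ^ (2 * n + 1)) * Tn q n := by
  unfold Sn Tn
  rw [show 2 * (n + 1) + 1 = (2 * n + 2) + 1 by ring]
  rw [Finset.sum_range_succ']
  have hcong : ∀ i ∈ Finset.range (2 * n + 2),
      wgt q (n + 1) (i + 1) * gB q (2 * (n + 1)) (i + 1)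
      = wgt q (n + 1) (i + 1) * gB q (2 * n + 1) (i + 1)
        + -(q ^ (2 * n + 1)) * (wgt q (n + 1) i * gB q (2 * n + 1) i) := by
    intro i hi
    have hi' : i ≤ 2 * n + 1 := by
      simp only [Finset.mem_range] at hi; omega
    rw [show 2 * (n + 1) = (2 * n + 1) + 1 by ring, gB_pascal1 hq hi', mul_add]
    congr 1
    rw [← mul_assoc, wgt_shift_a hq0 n i hi']
    ring
  rw [Finset.sum_congr rfl hcong, Finset.sum_add_distrib]
  have h1 : ∑ i ∈ Finset.range (2 * n + 2), wgt q (n + 1) (i + 1) * gB q (2 * n + 1) (i + 1)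
      = ∑ i ∈ Finset.range (2 * n + 1), wgt q (n + 1) (i + 1) * gB q (2 * n + 1) (i + 1) := by
    rw [Finset.sum_range_succ, gB_of_gt (by omega)]
    simp
  have h2 : ∑ i ∈ Finset.range (2 * n + 2),
        -(q ^ (2 * n + 1)) * (wgt q (n + 1) i * gB q (2 * n + 1) i)
      = -(q ^ (2 * n + 1)) * ∑ i ∈ Finset.range (2 * n + 2),
          wgt q (n + 1) i * gB q (2 * n + 1) i := by
    rw [Finset.mul_sum]
  have h3 : wgt q (n + 1) 0 * gB q (2 * (n + 1)) 0 = wgt q (n + 1) 0 * gB q (2 * n + 1) 0 := by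
    rw [gB_zero hq, gB_zero hq]
  have h4 : ∑ i ∈ Finset.range (2 * n + 2), wgt q (n + 1) i * gB q (2 * n + 1) i
      = (∑ i ∈ Finset.range (2 * n + 1), wgt q (n + 1) (i + 1) * gB q (2 * n + 1) (i + 1))
        + wgt q (n + 1) 0 * gB q (2 * n + 1) 0 := by
    rw [show 2 * n + 2 = (2 * n + 1) + 1 by ring, Finset.sum_range_succ']
  rw [h1, h2, h3, sub_mul, one_mul, h4]
  ring

lemma step2 (hq : ‖q‖ < 1) (hq0 : q ≠ 0) (n : ℕ) :
    Tn q n = (1 - q ^ (2 * n + 1)) * Sn q n := by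
  unfold Sn Tn
  rw [show 2 * n + 2 = (2 * n + 1) + 1 by ring, Finset.sum_range_succ']
  have hcong : ∀ i ∈ Finset.range (2 * n + 1),
      wgt q (n + 1) (i + 1) * gB q (2 * n + 1) (i + 1)
      = -(q ^ (2 * n + 1)) * (wgt q n (i + 1) * gB q (2 * n) (i + 1))
        + wgt q n i * gB q (2 * n) i := by
    intro i hi
    have hi' : i ≤ 2 * n := by
      simp only [Finset.mem_range] at hi; omega
    rw [show 2 * n + 1 = 2 * n + 1 by rfl, gB_pascal2 hq hi', mul_add]
    congr 1
    · rw [← mul_assoc, wgt_shift_c hq0 n i]; ring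
    · rw [wgt_shift_b]
  rw [Finset.sum_congr rfl hcong, Finset.sum_add_distrib]
  have h2 : ∑ i ∈ Finset.range (2 * n + 1),
        -(q ^ (2 * n + 1)) * (wgt q n (i + 1) * gB q (2 * n) (i + 1))
      = -(q ^ (2 * n + 1)) * ∑ i ∈ Finset.range (2 * n + 1),
          wgt q n (i + 1) * gB q (2 * n) (i + 1) := by
    rw [Finset.mul_sum]
  have h5 : ∑ i ∈ Finset.range (2 * n + 1), wgt q n (i + 1) * gB q (2 * n) (i + 1)
      = ∑ i ∈ Finset.range (2 * n), wgt q n (i + 1) * gB q (2 * n) (i + 1) := by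
    rw [Finset.sum_range_succ, gB_of_gt (by omega)]
    simp
  have h3 : wgt q (n + 1) 0 * gB q (2 * n + 1) 0
      = -(q ^ (2 * n + 1)) * (wgt q n 0 * gB q (2 * n) 0) := by
    rw [gB_zero hq, gB_zero hq, wgt_zero_step hq0]
    ring
  have h4 : ∑ i ∈ Finset.range (2 * n + 1), wgt q n i * gB q (2 * n) i
      = (∑ i ∈ Finset.range (2 * n), wgt q n (i + 1) * gB q (2 * n) (i + 1))
        + wgt q n 0 * gB q (2 * n) 0 := by
    rw [show 2 * n + 1 = (2 * n) + 1 by ring, Finset.sum_range_succ']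
  rw [h2, h5, h3, sub_mul, one_mul, h4]
  ring

/-- the closed form of the finite theta sum -/
lemma Sn_eq (hq : ‖q‖ < 1) (hq0 : q ≠ 0) (n : ℕ) :
    Sn q n = (∏ k ∈ Finset.range n, (1 - q ^ (2 * k + 1))) ^ 2 := by
  induction n with
  | zero =>
      simp [Sn, wgt, gB_zero hq, wgt]
  | succ n ih =>
      rw [step1 hq hq0, step2 hq hq0, ih, Finset.prod_range_succ]
      ring

section RealBounds

variable {r : ℝ}

lemma summable_geom_shift (hr0 : 0 ≤ r) (hr : r < 1) : Summable (fun i : ℕ => r ^ (i + 1)) := by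
  simpa [pow_succ'] using (summable_geometric_of_lt_one hr0 hr).mul_left r

lemma summable_log_plus (hr0 : 0 ≤ r) (hr : r < 1) :
    Summable (fun i : ℕ => Real.log (1 + r ^ (i + 1))) := by
  apply Summable.of_norm_bounded (summable_geom_shift hr0 hr)
  intro i
  have hx0 : (0:ℝ) ≤ r ^ (i+1) := by positivity
  have h1 : (0:ℝ) ≤ Real.log (1 + r ^ (i+1)) := Real.log_nonneg (by linarith)
  rw [Real.norm_eq_abs, abs_of_nonneg h1]
  have := Real.log_le_sub_one_of_pos (show (0:ℝ) < 1 + r ^ (i+1) by linarith)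
  linarith

lemma summable_log_minus (hr0 : 0 ≤ r) (hr : r < 1) :
    Summable (fun i : ℕ => Real.log (1 - r ^ (i + 1))) := by
  apply Summable.of_norm_bounded (g := fun i => (1 - r)⁻¹ * r ^ (i + 1))
    ((summable_geom_shift hr0 hr).mul_left _)
  intro i
  have hx0 : (0:ℝ) ≤ r ^ (i+1) := by positivity
  have hxr : r ^ (i+1) ≤ r := by
    calc r ^ (i+1) ≤ r ^ 1 := pow_le_pow_of_le_one hr0 hr.le (by omega)
    _ = r := pow_one r
  have hpos : (0:ℝ) < 1 - r ^ (i+1) := by nlinarith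
  have h1 : Real.log (1 - r ^ (i+1)) ≤ 0 := Real.log_nonpos (by linarith) (by linarith)
  rw [Real.norm_eq_abs, abs_of_nonpos h1]
  have h2 := Real.log_le_sub_one_of_pos (show (0:ℝ) < (1 - r ^ (i+1))⁻¹ by positivity)
  rw [Real.log_inv] at h2
  have h3 : (1 - r ^ (i+1))⁻¹ - 1 = r ^ (i+1) / (1 - r ^ (i+1)) := by
    field_simp
    ring
  rw [h3] at h2
  have h4 : r ^ (i+1) / (1 - r ^ (i+1)) ≤ r ^ (i+1) / (1 - r) := by
    apply div_le_div_of_nonneg_left hx0 (by linarith) (by nlinarith)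
  calc -Real.log (1 - r ^ (i+1)) ≤ r ^ (i+1) / (1 - r ^ (i+1)) := by linarith
  _ ≤ r ^ (i+1) / (1 - r) := h4
  _ = (1 - r)⁻¹ * r ^ (i+1) := by ring

lemma partial_le_Aup (hr0 : 0 ≤ r) (hr : r < 1) (m : ℕ) :
    ∏ i ∈ Finset.range m, (1 + r ^ (i + 1))
      ≤ Real.exp (∑' i : ℕ, Real.log (1 + r ^ (i + 1))) := by
  have hpos : ∀ i, (0:ℝ) < 1 + r ^ (i+1) := fun i => by positivity
  have he : ∏ i ∈ Finset.range m, (1 + r ^ (i + 1))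
      = Real.exp (∑ i ∈ Finset.range m, Real.log (1 + r ^ (i + 1))) := by
    rw [Real.exp_sum]
    exact Finset.prod_congr rfl fun i _ => (Real.exp_log (hpos i)).symm
  rw [he, Real.exp_le_exp]
  have hsum := summable_log_plus hr0 hr
  have := (hsum.sum_add_tsum_nat_add m).symm
  have htail : 0 ≤ ∑' i : ℕ, Real.log (1 + r ^ (i + m + 1)) := by
    apply tsum_nonneg
    intro i
    have h0 : (0:ℝ) ≤ r ^ (i + m + 1) := by positivity
    exact Real.log_nonneg (by linarith)
  calc ∑ i ∈ Finset.range m, Real.log (1 + r ^ (i + 1))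
      ≤ ∑ i ∈ Finset.range m, Real.log (1 + r ^ (i + 1))
        + ∑' i : ℕ, Real.log (1 + r ^ (i + m + 1)) := by linarith
  _ = ∑' i : ℕ, Real.log (1 + r ^ (i + 1)) := by
        rw [← hsum.sum_add_tsum_nat_add m]

lemma Blo_le_partial (hr0 : 0 ≤ r) (hr : r < 1) (m : ℕ) :
    Real.exp (∑' i : ℕ, Real.log (1 - r ^ (i + 1)))
      ≤ ∏ i ∈ Finset.range m, (1 - r ^ (i + 1)) := by
  have hxr : ∀ i : ℕ, r ^ (i+1) ≤ r := by
    intro i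
    calc r ^ (i+1) ≤ r ^ 1 := pow_le_pow_of_le_one hr0 hr.le (by omega)
    _ = r := pow_one r
  have hpos : ∀ i, (0:ℝ) < 1 - r ^ (i+1) := fun i => by
    have := hxr i; nlinarith
  have he : ∏ i ∈ Finset.range m, (1 - r ^ (i + 1))
      = Real.exp (∑ i ∈ Finset.range m, Real.log (1 - r ^ (i + 1))) := by
    rw [Real.exp_sum]
    exact Finset.prod_congr rfl fun i _ => (Real.exp_log (hpos i)).symm
  rw [he, Real.exp_le_exp]
  have hsum := summable_log_minus hr0 hr
  have htail : ∑' i : ℕ, Real.log (1 - r ^ (i + m + 1)) ≤ 0 := by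
    apply tsum_nonpos
    intro i
    have h0 : (0:ℝ) ≤ r ^ (i + m + 1) := by positivity
    have h1 : r ^ (i + m + 1) ≤ r := by
      calc r ^ (i+m+1) ≤ r ^ 1 := pow_le_pow_of_le_one hr0 hr.le (by omega)
      _ = r := pow_one r
    exact Real.log_nonpos (by nlinarith) (by nlinarith)
  calc ∑' i : ℕ, Real.log (1 - r ^ (i + 1))
      = ∑ i ∈ Finset.range m, Real.log (1 - r ^ (i + 1))
        + ∑' i : ℕ, Real.log (1 - r ^ (i + m + 1)) := by
        rw [← hsum.sum_add_tsum_nat_add m]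
  _ ≤ ∑ i ∈ Finset.range m, Real.log (1 - r ^ (i + 1)) := by linarith

end RealBounds

section Limits

lemma mult_one_sub {a : ℕ → ℂ} (ha : Summable a) (h1 : ∀ k, ‖a k‖ < 1) :
    Multipliable (fun k => 1 - a k) ∧ (∏' k, (1 - a k)) ≠ 0 := by
  simpa [sub_eq_add_neg] using mult_one_add (a := fun k => -a k) ha.neg (by simpa using h1)

variable (q) in
noncomputable def Aq : ℝ := Real.exp (∑' i : ℕ, Real.log (1 + (‖q‖ ^ 2) ^ (i + 1)))

variable (q) in
noncomputable def Bq : ℝ := Real.exp (∑' i : ℕ, Real.log (1 - (‖q‖ ^ 2) ^ (i + 1)))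

lemma normsq_lt (hq : ‖q‖ < 1) : ‖q‖ ^ 2 < 1 := by nlinarith [norm_nonneg q]

lemma norm_Pp_le (hq : ‖q‖ < 1) (m : ℕ) : ‖Pp q m‖ ≤ Aq q := by
  have hr0 : (0:ℝ) ≤ ‖q‖ ^ 2 := by positivity
  calc ‖Pp q m‖ = ∏ i ∈ Finset.range m, ‖1 - (q ^ 2) ^ (i + 1)‖ := norm_prod _ _
  _ ≤ ∏ i ∈ Finset.range m, (1 + (‖q‖ ^ 2) ^ (i + 1)) := by
      apply Finset.prod_le_prod (fun i _ => norm_nonneg _)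
      intro i _
      calc ‖1 - (q ^ 2) ^ (i + 1)‖ ≤ ‖(1:ℂ)‖ + ‖(q ^ 2) ^ (i + 1)‖ := norm_sub_le _ _
      _ = 1 + (‖q‖ ^ 2) ^ (i + 1) := by rw [norm_one, norm_pow, norm_pow]
  _ ≤ Aq q := partial_le_Aup hr0 (normsq_lt hq) m

lemma Bq_le_norm_Pp (hq : ‖q‖ < 1) (m : ℕ) : Bq q ≤ ‖Pp q m‖ := by
  have hr0 : (0:ℝ) ≤ ‖q‖ ^ 2 := by positivity
  have hfac : ∀ i : ℕ, (0:ℝ) ≤ 1 - (‖q‖ ^ 2) ^ (i + 1) := by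
    intro i
    have h1 : (‖q‖ ^ 2) ^ (i + 1) ≤ (‖q‖ ^ 2) ^ 1 :=
      pow_le_pow_of_le_one hr0 (normsq_lt hq).le (by omega)
    have := normsq_lt hq
    simp only [pow_one] at h1
    linarith
  calc Bq q ≤ ∏ i ∈ Finset.range m, (1 - (‖q‖ ^ 2) ^ (i + 1)) :=
        Blo_le_partial hr0 (normsq_lt hq) m
  _ ≤ ∏ i ∈ Finset.range m, ‖1 - (q ^ 2) ^ (i + 1)‖ := by
      apply Finset.prod_le_prod (fun i _ => hfac i)
      intro i _
      have := norm_sub_norm_le (1 : ℂ) ((q ^ 2) ^ (i + 1))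
      rw [norm_one, norm_pow, norm_pow] at this
      linarith
  _ = ‖Pp q m‖ := (norm_prod _ _).symm

lemma Bq_pos : 0 < Bq q := Real.exp_pos _

lemma ABq_nonneg : 0 ≤ Aq q / (Bq q * Bq q) :=
  div_nonneg (Real.exp_pos _).le (mul_pos (Bq_pos (q := q)) (Bq_pos (q := q))).le

lemma norm_gB_le (hq : ‖q‖ < 1) (m k : ℕ) : ‖gB q m k‖ ≤ Aq q / (Bq q * Bq q) := by
  unfold gB
  split_ifs with h
  · rw [norm_div, norm_mul]
    apply div_le_div₀ (Real.exp_pos _).le (norm_Pp_le hq m)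
      (mul_pos (Bq_pos (q := q)) (Bq_pos (q := q)))
    exact mul_le_mul (Bq_le_norm_Pp hq k) (Bq_le_norm_Pp hq (m - k)) Bq_pos.le (norm_nonneg _)
  · simp only [norm_zero]
    exact ABq_nonneg

variable (q) in
noncomputable def Fz (n : ℕ) (j : ℤ) : ℂ :=
  if j.natAbs ≤ n then wgt q n (j + n).toNat * gB q (2 * n) (j + n).toNat else 0

lemma toNat_cast {j : ℤ} {n : ℕ} (h : j.natAbs ≤ n) : (((j + n).toNat : ℤ)) = j + n :=
  Int.toNat_of_nonneg (by omega)

lemma tsum_Fz (n : ℕ) : ∑' j : ℤ, Fz q n j = Sn q n := by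
  rw [tsum_eq_sum (s := Finset.Icc (-(n:ℤ)) n) (by
    intro j hj
    simp only [Finset.mem_Icc] at hj
    rw [Fz, if_neg (by omega)])]
  rw [Sn]
  apply Finset.sum_nbij' (i := fun j : ℤ => (j + n).toNat) (j := fun i : ℕ => (i : ℤ) - n)
  · intro j hj
    simp only [Finset.mem_Icc] at hj
    simp only [Finset.mem_range]
    omega
  · intro i hi
    simp only [Finset.mem_range] at hi
    simp only [Finset.mem_Icc]
    omega
  · intro j hj
    simp only [Finset.mem_Icc] at hj
    omega
  · intro i hi
    simp only [Finset.mem_range] at hi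
    omega
  · intro j hj
    simp only [Finset.mem_Icc] at hj
    rw [Fz, if_pos (by omega)]

lemma wgt_norm (n i : ℕ) : ‖wgt q n i‖ = ‖q‖ ^ (((i:ℤ) - n).natAbs ^ 2) := by
  unfold wgt
  rw [norm_mul, norm_pow, norm_neg, norm_one, one_pow, one_mul]
  rw [show ((i:ℤ) - n) ^ 2 = (((((i:ℤ) - n).natAbs ^ 2 : ℕ)) : ℤ) by
    rw [Nat.cast_pow, Int.natAbs_sq]]
  rw [zpow_natCast, norm_pow]

lemma norm_Fz_le (hq : ‖q‖ < 1) (n : ℕ) (j : ℤ) :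
    ‖Fz q n j‖ ≤ Aq q / (Bq q * Bq q) * ‖q‖ ^ j.natAbs := by
  rw [Fz]
  split_ifs with h
  · rw [norm_mul, wgt_norm]
    have habs : ((((j + n).toNat : ℤ)) - n).natAbs = j.natAbs := by
      have := toNat_cast h; omega
    rw [habs]
    have h1 : ‖q‖ ^ (j.natAbs ^ 2) ≤ ‖q‖ ^ j.natAbs :=
      pow_le_pow_of_le_one (norm_nonneg q) hq.le (Nat.le_self_pow two_ne_zero _)
    calc ‖q‖ ^ j.natAbs ^ 2 * ‖gB q (2 * n) (j + n).toNat‖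
        ≤ ‖q‖ ^ j.natAbs * (Aq q / (Bq q * Bq q)) :=
          mul_le_mul h1 (norm_gB_le hq _ _) (norm_nonneg _) (by positivity)
    _ = Aq q / (Bq q * Bq q) * ‖q‖ ^ j.natAbs := by ring
  · rw [norm_zero]
    exact mul_nonneg ABq_nonneg (pow_nonneg (norm_nonneg q) _)

lemma summable_bound (hq : ‖q‖ < 1) :
    Summable (fun j : ℤ => Aq q / (Bq q * Bq q) * ‖q‖ ^ j.natAbs) := by
  apply Summable.mul_left
  apply Summable.of_nat_of_neg <;>
    simpa using summable_geometric_of_lt_one (norm_nonneg q) hq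

lemma wgt_int (hq0 : q ≠ 0) {j : ℤ} {n : ℕ} (h : j.natAbs ≤ n) :
    wgt q n (j + n).toNat = (-1) ^ j * q ^ (j ^ 2) := by
  have hjn := toNat_cast h
  unfold wgt
  congr 1
  · calc ((-1 : ℂ)) ^ ((j + n).toNat + n) = ((-1 : ℂ)) ^ ((((j + n).toNat + n : ℕ)) : ℤ) :=
        (zpow_natCast _ _).symm
    _ = (-1) ^ (j + 2 * (n:ℤ)) := by
        congr 1
        push_cast [hjn]
        ring
    _ = (-1) ^ j * ((-1 : ℂ)) ^ (2 * (n:ℤ)) := zpow_add₀ (by norm_num) _ _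
    _ = (-1) ^ j := by
        rw [show (2 * (n:ℤ)) = ((2 * n : ℕ) : ℤ) by push_cast; ring, zpow_natCast]
        simp [pow_mul]
  · congr 1
    rw [hjn]
    ring

end Limits

section Main

lemma summable_cpow_shift (hq : ‖q‖ < 1) (c d : ℕ) (hc : 1 ≤ c) :
    Summable (fun k : ℕ => q ^ (c * k + d + 1)) := by
  apply Summable.of_norm_bounded (g := fun k : ℕ => ‖q‖ ^ (k + 1))
    (summable_geom_shift (norm_nonneg q) hq)
  intro k
  rw [norm_pow]
  exact pow_le_pow_of_le_one (norm_nonneg q) hq.le (by nlinarith)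

lemma norm_cpow_shift_lt (hq : ‖q‖ < 1) (c d : ℕ) (k : ℕ) : ‖q ^ (c * k + d + 1)‖ < 1 := by
  rw [norm_pow]
  calc ‖q‖ ^ (c * k + d + 1) ≤ ‖q‖ ^ 1 := pow_le_pow_of_le_one (norm_nonneg q) hq.le (by omega)
  _ < 1 := by simpa using hq

lemma theta_eq (hq : ‖q‖ < 1) (hq0 : q ≠ 0) :
    ∑' j : ℤ, (-1 : ℂ) ^ j * q ^ (j ^ 2)
      = (∏' k : ℕ, (1 - q ^ (2 * k + 1))) ^ 2 * ∏' i : ℕ, (1 - (q ^ 2) ^ (i + 1)) := by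
  have hr0 : (0:ℝ) ≤ ‖q‖ ^ 2 := by positivity
  -- the products
  have hQsum : Summable (fun i : ℕ => (q ^ 2) ^ (i + 1)) := by
    apply Summable.of_norm_bounded (g := fun i : ℕ => (‖q‖ ^ 2) ^ (i + 1))
      (summable_geom_shift hr0 (normsq_lt hq))
    intro i
    rw [norm_pow, norm_pow]
  obtain ⟨hPImult, hPIne⟩ := mult_one_sub hQsum (norm_ppow_lt hq)
  set PI := ∏' i : ℕ, (1 - (q ^ 2) ^ (i + 1)) with hPIdef
  have hOsum : Summable (fun k : ℕ => q ^ (2 * k + 1)) := by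
    simpa using summable_cpow_shift hq 2 0 (by omega)
  have hOnorm : ∀ k, ‖q ^ (2 * k + 1)‖ < 1 := by
    simpa using norm_cpow_shift_lt hq 2 0
  obtain ⟨hOmult, hOne⟩ := mult_one_sub hOsum hOnorm
  set Podd := ∏' k : ℕ, (1 - q ^ (2 * k + 1)) with hPodddef
  -- partial products of Pp tend to PI
  have hPp_tend : Tendsto (fun m => Pp q m) atTop (𝓝 PI) := hPImult.hasProd.tendsto_prod_nat
  -- pointwise limits
  have hlim : ∀ j : ℤ, Tendsto (fun n => Fz q n j) atTop (𝓝 ((-1) ^ j * q ^ (j ^ 2) / PI)) := by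
    intro j
    have hEv : (fun n => ((-1 : ℂ)) ^ j * q ^ (j ^ 2)
          * (Pp q (2 * n) / (Pp q ((j + n).toNat) * Pp q (2 * n - (j + n).toNat))))
        =ᶠ[atTop] (fun n => Fz q n j) := by
      filter_upwards [eventually_ge_atTop j.natAbs] with n hn
      have htc := toNat_cast hn
      rw [Fz, if_pos hn, wgt_int hq0 hn, gB, if_pos (by omega)]
    have h2n : Tendsto (fun n : ℕ => 2 * n) atTop atTop :=
      tendsto_atTop_mono (fun n => by simpa using (by omega : n ≤ 2 * n)) tendsto_id
    have hjn : Tendsto (fun n : ℕ => (j + n).toNat) atTop atTop := by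
      apply tendsto_atTop_mono (f := fun n : ℕ => n - j.natAbs)
        (fun n => by simpa using (by omega : n - j.natAbs ≤ (j + n).toNat))
        (tendsto_sub_atTop_nat _)
    have hmn : Tendsto (fun n : ℕ => 2 * n - (j + n).toNat) atTop atTop := by
      apply tendsto_atTop_mono (f := fun n : ℕ => n - j.natAbs)
        (fun n => by simpa using (by omega : n - j.natAbs ≤ 2 * n - (j + n).toNat))
        (tendsto_sub_atTop_nat _)
    have hT : Tendsto (fun n => ((-1 : ℂ)) ^ j * q ^ (j ^ 2)
          * (Pp q (2 * n) / (Pp q ((j + n).toNat) * Pp q (2 * n - (j + n).toNat))))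
        atTop (𝓝 (((-1 : ℂ)) ^ j * q ^ (j ^ 2) * (PI / (PI * PI)))) := by
      apply Tendsto.mul tendsto_const_nhds
      exact Tendsto.div (hPp_tend.comp h2n)
        (Tendsto.mul (hPp_tend.comp hjn) (hPp_tend.comp hmn)) (mul_ne_zero hPIne hPIne)
    have hval : ((-1 : ℂ)) ^ j * q ^ (j ^ 2) * (PI / (PI * PI))
        = (-1) ^ j * q ^ (j ^ 2) / PI := by
      field_simp
    rw [hval] at hT
    exact hT.congr' hEv
  -- dominated convergence
  have htt := tendsto_tsum_of_dominated_convergence (summable_bound hq) hlim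
    (Eventually.of_forall (fun n j => norm_Fz_le hq n j))
  have heq : (fun n => ∑' j : ℤ, Fz q n j)
      = fun n => (∏ k ∈ Finset.range n, (1 - q ^ (2 * k + 1))) ^ 2 := by
    funext n
    rw [tsum_Fz, Sn_eq hq hq0]
  rw [heq] at htt
  have hSn_tend : Tendsto (fun n => (∏ k ∈ Finset.range n, (1 - q ^ (2 * k + 1))) ^ 2)
      atTop (𝓝 (Podd ^ 2)) := (hOmult.hasProd.tendsto_prod_nat).pow 2
  have key : ∑' j : ℤ, ((-1 : ℂ)) ^ j * q ^ (j ^ 2) / PI = Podd ^ 2 :=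
    tendsto_nhds_unique htt hSn_tend
  rw [tsum_div_const] at key
  rw [div_eq_iff hPIne] at key
  exact key

end Main

end PhiAux


/-- For |q| < 1, φ(-q) = Σ_{k∈ℤ} (-q)^{k²} equals (q;q)_∞² / (q²;q²)_∞. -/
theorem phi_neg_product (q : ℂ) (hq : ‖q‖ < 1) :
    (∑' k : ℤ, (-q) ^ (k ^ 2)) =
      (∏' k : ℕ, (1 - q * q ^ k)) ^ 2 / (∏' k : ℕ, (1 - q ^ 2 * (q ^ 2) ^ k)) := by
  by_cases hq0 : q = 0
  · subst hq0
    have h1 : ∑' k : ℤ, ((-(0:ℂ)) ^ (k ^ 2)) = 1 := by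
      rw [neg_zero, tsum_eq_single 0 (fun j hj => zero_zpow _ (pow_ne_zero 2 hj))]
      norm_num
    rw [h1]
    norm_num
  · -- LHS rewriting
    have hLHS : ∑' k : ℤ, ((-q) ^ (k ^ 2)) = ∑' j : ℤ, ((-1:ℂ)) ^ j * q ^ (j ^ 2) := by
      apply tsum_congr
      intro k
      rw [show (-q) = (-1 : ℂ) * q from by ring, mul_zpow]
      congr 1
      have hev : Even (k ^ 2 - k) := by
        have h := Int.even_mul_pred_self k
        have : k ^ 2 - k = k * (k - 1) := by ring
        rwa [this]
      calc ((-1:ℂ)) ^ (k ^ 2) = (-1) ^ (k + (k ^ 2 - k)) := by congr 1; ring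
      _ = (-1) ^ k * ((-1:ℂ)) ^ (k ^ 2 - k) := zpow_add₀ (by norm_num) _ _
      _ = (-1) ^ k := by rw [hev.neg_one_zpow, mul_one]
    -- products
    have hr0 : (0:ℝ) ≤ ‖q‖ ^ 2 := by positivity
    have hQsum : Summable (fun i : ℕ => (q ^ 2) ^ (i + 1)) := by
      apply Summable.of_norm_bounded (g := fun i : ℕ => (‖q‖ ^ 2) ^ (i + 1))
        (summable_geom_shift hr0 (normsq_lt hq))
      intro i
      rw [norm_pow, norm_pow]
    obtain ⟨hPImult, hPIne⟩ := mult_one_sub hQsum (norm_ppow_lt hq)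
    have hOsum : Summable (fun k : ℕ => q ^ (2 * k + 1)) := by
      simpa using summable_cpow_shift hq 2 0 (by omega)
    have hOnorm : ∀ k, ‖q ^ (2 * k + 1)‖ < 1 := by
      simpa using norm_cpow_shift_lt hq 2 0
    obtain ⟨hOmult, hOne⟩ := mult_one_sub hOsum hOnorm
    have hEsum : Summable (fun k : ℕ => q ^ (2 * k + 1 + 1)) := summable_cpow_shift hq 2 1 (by omega)
    have hEnorm : ∀ k, ‖q ^ (2 * k + 1 + 1)‖ < 1 := norm_cpow_shift_lt hq 2 1
    obtain ⟨hEmult, hEne⟩ := mult_one_sub hEsum hEnorm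
    -- rewrite the two products in the goal
    have hprod1 : (∏' k : ℕ, (1 - q * q ^ k)) = ∏' k : ℕ, (1 - q ^ (k + 1)) := by
      apply tprod_congr
      intro k
      congr 1
      exact (pow_succ' q k).symm
    have hprod2 : (∏' k : ℕ, (1 - q ^ 2 * (q ^ 2) ^ k)) = ∏' i : ℕ, (1 - (q ^ 2) ^ (i + 1)) := by
      apply tprod_congr
      intro k
      congr 1
      exact (pow_succ' (q ^ 2) k).symm
    -- even/odd split
    have hsplit : (∏' k : ℕ, (1 - q ^ (k + 1)))
        = (∏' k : ℕ, (1 - q ^ (2 * k + 1))) * ∏' k : ℕ, (1 - q ^ (2 * k + 1 + 1)) :=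
      (tprod_even_mul_odd (f := fun k => 1 - q ^ (k + 1)) hOmult hEmult).symm
    have hE_PI : (∏' k : ℕ, (1 - q ^ (2 * k + 1 + 1))) = ∏' i : ℕ, (1 - (q ^ 2) ^ (i + 1)) := by
      apply tprod_congr
      intro k
      congr 1
      rw [show 2 * k + 1 + 1 = 2 * (k + 1) from by omega, pow_mul]
    rw [hLHS, theta_eq hq hq0, hprod1, hprod2, hsplit, hE_PI]
    rw [eq_div_iff hPIne]
    ring
end

section
/- Let ξ(q) := φ(-q⁹)/φ(-q) and let U be the operator sending Σ aₙ qⁿ to Σ a_{3n} qⁿ. Then U(ξ³) = ξ - 12ξ² + 66ξ³ - 216ξ⁴ + 486ξ⁵ - 810ξ⁶ + 972ξ⁷ - 729ξ⁸ + 243ξ⁹. -/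
open PowerSeries

/-- φ(-q) = Σ_{k∈ℤ} (-1)^k q^{k²} as a formal power series over ℤ. -/
noncomputable def phiNeg : PowerSeries ℤ :=
  PowerSeries.mk fun n =>
    if n = 0 then 1 else if Nat.sqrt n ^ 2 = n then 2 * (-1) ^ Nat.sqrt n else 0

open Classical in
/-- ψ(q) = Σ_{k≥0} q^{k(k+1)/2} as a formal power series over ℤ. -/
noncomputable def psi : PowerSeries ℤ :=
  PowerSeries.mk fun n =>
    if ∃ k ∈ Finset.range (n + 1), k * (k + 1) / 2 = n then 1 else 0

/-- Substitution q ↦ q^d in a formal power series. -/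
noncomputable def expand (d : ℕ) (f : PowerSeries ℤ) : PowerSeries ℤ :=
  PowerSeries.mk fun n => if d ∣ n then PowerSeries.coeff (n / d) f else 0

/-- The 3-dissection operator U(Σ aₙ qⁿ) = Σ a_{3n} qⁿ. -/
noncomputable def U (f : PowerSeries ℤ) : PowerSeries ℤ :=
  PowerSeries.mk fun n => PowerSeries.coeff (3 * n) f

/-- The multiplicative inverse of φ(-q) (constant coefficient 1). -/
noncomputable def phiNegInv : PowerSeries ℤ := PowerSeries.invOfUnit phiNeg 1

/-- The multiplicative inverse of ψ(q) (constant coefficient 1). -/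
noncomputable def psiInv : PowerSeries ℤ := PowerSeries.invOfUnit psi 1

/-- ph₃(n): coefficients of φ(-q³)/φ(-q). -/
noncomputable def ph3 (n : ℕ) : ℤ :=
  PowerSeries.coeff n (expand 3 phiNeg * phiNegInv)

/-- ps₃(n): coefficients of ψ(q³)/ψ(q). -/
noncomputable def ps3 (n : ℕ) : ℤ :=
  PowerSeries.coeff n (expand 3 psi * psiInv)

/-- ξ(q) := φ(-q⁹)/φ(-q). -/
noncomputable def xi : PowerSeries ℤ := expand 9 phiNeg * phiNegInv

/-- F(q) := φ(-q³)/φ(-q). -/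
noncomputable def Fph : PowerSeries ℤ := expand 3 phiNeg * phiNegInv

/-- γ(q) := F(q)/F(q⁹). -/
noncomputable def gam : PowerSeries ℤ := Fph * PowerSeries.invOfUnit (expand 9 Fph) 1

/-- G(q) := ψ(q³)/ψ(q). -/
noncomputable def Gps : PowerSeries ℤ := expand 3 psi * psiInv

/-- ζ(q) := q·ψ(q⁹)/ψ(q). -/
noncomputable def zeta : PowerSeries ℤ := PowerSeries.X * expand 9 psi * psiInv

namespace UXC

lemma coeff_expand (d n : ℕ) (f : PowerSeries ℤ) :
    coeff n (expand d f) = if d ∣ n then coeff (n / d) f else 0 := coeff_mk _ _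

lemma coeff_U (n : ℕ) (f : PowerSeries ℤ) : coeff n (U f) = coeff (3 * n) f := coeff_mk _ _

lemma expand_add (d : ℕ) (f g : PowerSeries ℤ) :
    expand d (f + g) = expand d f + expand d g := by
  ext n
  simp only [coeff_expand, map_add]
  split <;> simp

lemma expand_neg (d : ℕ) (f : PowerSeries ℤ) : expand d (-f) = - expand d f := by
  ext n
  simp only [coeff_expand, map_neg]
  split <;> simp

lemma expand_sub (d : ℕ) (f g : PowerSeries ℤ) :
    expand d (f - g) = expand d f - expand d g := by
  rw [sub_eq_add_neg, expand_add, expand_neg, sub_eq_add_neg]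

lemma expand_C (d : ℕ) (a : ℤ) : expand d (C a) = C a := by
  ext n
  simp only [coeff_expand, PowerSeries.coeff_C]
  rcases eq_or_ne n 0 with rfl | hn
  · simp
  · rw [if_neg hn]
    by_cases hd : d ∣ n
    · rw [if_pos hd]
      have h2 := Nat.div_mul_cancel hd
      have : n / d ≠ 0 := by
        intro h0
        rw [h0, zero_mul] at h2
        exact hn h2.symm
      rw [if_neg this]
    · rw [if_neg hd]

lemma expand_one (d : ℕ) : expand d (1 : PowerSeries ℤ) = 1 := by
  simpa using expand_C d 1

lemma expand_ofNat (d : ℕ) (n : ℕ) [n.AtLeastTwo] :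
    expand d (OfNat.ofNat n : PowerSeries ℤ) = OfNat.ofNat n := by
  rw [show (OfNat.ofNat n : PowerSeries ℤ) = C (OfNat.ofNat n) from (map_ofNat _ _).symm,
    expand_C]

lemma expand3_mul (f g : PowerSeries ℤ) :
    expand 3 (f * g) = expand 3 f * expand 3 g := by
  ext n
  have hR : coeff n (expand 3 f * expand 3 g)
      = ∑ p ∈ (Finset.HasAntidiagonal.antidiagonal n).filter (fun p => 3 ∣ p.1 ∧ 3 ∣ p.2),
          coeff (p.1/3) f * coeff (p.2/3) g := by
    rw [PowerSeries.coeff_mul, Finset.sum_filter]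
    refine Finset.sum_congr rfl fun p hp => ?_
    rw [coeff_expand, coeff_expand]
    by_cases h1 : 3 ∣ p.1 <;> by_cases h2 : 3 ∣ p.2 <;> simp [h1, h2]
  rw [hR, coeff_expand]
  by_cases h3 : 3 ∣ n
  · rw [if_pos h3, PowerSeries.coeff_mul]
    refine Finset.sum_nbij' (i := fun p => (3*p.1, 3*p.2)) (j := fun p => (p.1/3, p.2/3))
      ?_ ?_ ?_ ?_ ?_
    · intro p hp
      simp only [Finset.mem_filter, Finset.HasAntidiagonal.mem_antidiagonal] at hp ⊢
      omega
    · intro p hp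
      simp only [Finset.mem_filter, Finset.HasAntidiagonal.mem_antidiagonal] at hp ⊢
      omega
    · intro p hp
      simp only [Finset.HasAntidiagonal.mem_antidiagonal] at hp
      simp only [Prod.ext_iff]
      constructor <;> omega
    · intro p hp
      simp only [Finset.mem_filter, Finset.HasAntidiagonal.mem_antidiagonal] at hp
      simp only [Prod.ext_iff]
      constructor <;> omega
    · intro p hp
      simp only [Finset.HasAntidiagonal.mem_antidiagonal] at hp
      have e1 : 3 * p.1 / 3 = p.1 := by omega
      have e2 : 3 * p.2 / 3 = p.2 := by omega
      rw [e1, e2]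
  · rw [if_neg h3]
    have : (Finset.HasAntidiagonal.antidiagonal n).filter (fun p : ℕ × ℕ => 3 ∣ p.1 ∧ 3 ∣ p.2) = ∅ := by
      rw [Finset.filter_eq_empty_iff]
      intro p hp
      simp only [Finset.HasAntidiagonal.mem_antidiagonal] at hp
      omega
    rw [this, Finset.sum_empty]

lemma expand3_pow (f : PowerSeries ℤ) (k : ℕ) :
    expand 3 (f ^ k) = (expand 3 f) ^ k := by
  induction k with
  | zero => simpa using expand_one 3
  | succ k ih => rw [pow_succ, pow_succ, expand3_mul, ih]

lemma expand_X : expand 3 (X : PowerSeries ℤ) = X ^ 3 := by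
  ext n
  rw [coeff_expand, PowerSeries.coeff_X_pow]
  by_cases h3 : 3 ∣ n
  · rw [if_pos h3, PowerSeries.coeff_X]
    by_cases hn : n = 3
    · rw [if_pos hn, if_pos (by omega)]
    · rw [if_neg hn, if_neg (by omega)]
  · rw [if_neg h3, if_neg (by omega)]

lemma expand_expand (f : PowerSeries ℤ) : expand 3 (expand 3 f) = expand 9 f := by
  ext n
  simp only [coeff_expand]
  by_cases h9 : 9 ∣ n
  · obtain ⟨m, rfl⟩ := h9
    have e1 : 9 * m / 3 = 3 * m := by omega
    have e2 : 9 * m / 9 = m := by omega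
    have e3 : 3 * m / 3 = m := by omega
    have d1 : (3:ℕ) ∣ 9*m := ⟨3*m, by ring⟩
    have d2 : (3:ℕ) ∣ 3*m := ⟨m, rfl⟩
    have d3 : (9:ℕ) ∣ 9*m := ⟨m, rfl⟩
    rw [if_pos d1, e1, if_pos d2, e3, if_pos d3, e2]
  · rw [if_neg h9]
    by_cases h3 : 3 ∣ n
    · rw [if_pos h3]
      have : ¬ 3 ∣ n / 3 := by
        rintro ⟨k, hk⟩
        obtain ⟨j, rfl⟩ := h3
        exact h9 ⟨k, by omega⟩
      rw [if_neg this]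
    · rw [if_neg h3]

lemma expand3_inj {f g : PowerSeries ℤ} (h : expand 3 f = expand 3 g) : f = g := by
  ext n
  have := congrArg (coeff (3 * n)) h
  simpa [coeff_expand, Nat.mul_div_cancel_left _ (by norm_num : 0 < 3)] using this

lemma U_add (f g : PowerSeries ℤ) : U (f + g) = U f + U g := by
  ext n; simp [coeff_U]

lemma U_smul (a : ℤ) (f : PowerSeries ℤ) : U (C a * f) = C a * U f := by
  ext n
  rw [coeff_U, PowerSeries.coeff_C_mul, PowerSeries.coeff_C_mul, coeff_U]

lemma U_ofNat_mul (n : ℕ) [n.AtLeastTwo] (f : PowerSeries ℤ) :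
    U (OfNat.ofNat n * f) = OfNat.ofNat n * U f := by
  rw [show (OfNat.ofNat n : PowerSeries ℤ) = C (OfNat.ofNat n) from (map_ofNat _ _).symm,
    U_smul]

lemma U_mul_expand3 (f g : PowerSeries ℤ) : U (f * expand 3 g) = U f * g := by
  ext n
  have hL : coeff (3*n) (f * expand 3 g)
      = ∑ p ∈ (Finset.HasAntidiagonal.antidiagonal (3*n)).filter (fun p => 3 ∣ p.2),
          coeff p.1 f * coeff (p.2/3) g := by
    rw [PowerSeries.coeff_mul, Finset.sum_filter]
    refine Finset.sum_congr rfl fun p hp => ?_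
    rw [coeff_expand]
    by_cases h2 : 3 ∣ p.2 <;> simp [h2]
  rw [coeff_U, hL, PowerSeries.coeff_mul]
  refine Finset.sum_nbij' (i := fun p => (p.1/3, p.2/3)) (j := fun r => (3*r.1, 3*r.2))
    ?_ ?_ ?_ ?_ ?_
  · intro p hp
    simp only [Finset.mem_filter, Finset.HasAntidiagonal.mem_antidiagonal] at hp ⊢
    omega
  · intro r hr
    simp only [Finset.mem_filter, Finset.HasAntidiagonal.mem_antidiagonal] at hr ⊢
    omega
  · intro p hp
    simp only [Finset.mem_filter, Finset.HasAntidiagonal.mem_antidiagonal] at hp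
    simp only [Prod.ext_iff]
    constructor <;> omega
  · intro r hr
    simp only [Finset.HasAntidiagonal.mem_antidiagonal] at hr
    simp only [Prod.ext_iff]
    constructor <;> omega
  · intro p hp
    simp only [Finset.mem_filter, Finset.HasAntidiagonal.mem_antidiagonal] at hp
    rw [coeff_U]
    have e : 3 * (p.1/3) = p.1 := by omega
    rw [e]

lemma U_expand3 (g : PowerSeries ℤ) : U (expand 3 g) = g := by
  ext n
  rw [coeff_U, coeff_expand, if_pos ⟨n, rfl⟩, Nat.mul_div_cancel_left _ (by norm_num : 0 < 3)]

lemma U_X_pow_dvd (j : ℕ) : U ((X : PowerSeries ℤ)^(3*j)) = X^j := by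
  ext n
  rw [coeff_U, PowerSeries.coeff_X_pow, PowerSeries.coeff_X_pow]
  by_cases h : n = j
  · subst h; simp
  · rw [if_neg (by omega), if_neg h]

lemma U_X_pow_ndvd (k : ℕ) (h : ¬ 3 ∣ k) : U ((X : PowerSeries ℤ)^k) = 0 := by
  ext n
  rw [coeff_U, PowerSeries.coeff_X_pow, if_neg (by omega)]
  simp

lemma U_X_expand_3 (g : PowerSeries ℤ) : U ((X:PowerSeries ℤ)^3 * expand 3 g) = X * g := by
  rw [U_mul_expand3, show ((X:PowerSeries ℤ)^3) = X^(3*1) by norm_num, U_X_pow_dvd, pow_one]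

lemma U_X_expand_6 (g : PowerSeries ℤ) : U ((X:PowerSeries ℤ)^6 * expand 3 g) = X^2 * g := by
  rw [U_mul_expand3, show ((X:PowerSeries ℤ)^6) = X^(3*2) by norm_num, U_X_pow_dvd]

lemma U_X_expand_ndvd (k : ℕ) (h : ¬ 3 ∣ k) (g : PowerSeries ℤ) :
    U ((X:PowerSeries ℤ)^k * expand 3 g) = 0 := by
  rw [U_mul_expand3, U_X_pow_ndvd k h, zero_mul]

lemma constCoeff_phiNeg : constantCoeff phiNeg = 1 := by
  rw [← PowerSeries.coeff_zero_eq_constantCoeff]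
  simp [phiNeg, coeff_mk]

lemma phiNeg_mul_inv : phiNeg * phiNegInv = 1 :=
  PowerSeries.mul_invOfUnit _ 1 (by simpa using constCoeff_phiNeg)

-- ENGINE
lemma sqpos {a : ℤ} (h : 0 ≤ a) : ((a.toNat : ℤ)) = a := Int.toNat_of_nonneg h

noncomputable def sqS (S : ℤ → Prop) [DecidablePred S] (m : ℕ) : Finset ℤ :=
  (Finset.Icc (-(m:ℤ)) m).filter fun k => S k ∧ k^2 = (m:ℤ)

lemma mem_sqS {S : ℤ → Prop} [DecidablePred S] {m : ℕ} {k : ℤ} :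
    k ∈ sqS S m ↔ S k ∧ k^2 = (m:ℤ) := by
  simp only [sqS, Finset.mem_filter, Finset.mem_Icc]
  constructor
  · exact fun h => h.2
  · rintro ⟨hS, hk⟩
    have h1 := Int.le_self_sq k
    have h2 := Int.le_self_sq (-k)
    exact ⟨⟨by nlinarith, by nlinarith⟩, hS, hk⟩

noncomputable def tgen (S : ℤ → Prop) [DecidablePred S] : PowerSeries ℤ :=
  PowerSeries.mk fun m => (-1)^m * ((sqS S m).card : ℤ)

lemma coeff_tgen (S : ℤ → Prop) [DecidablePred S] (m : ℕ) :
    coeff m (tgen S) = (-1)^m * ((sqS S m).card : ℤ) := coeff_mk _ _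

noncomputable def pS (S₁ S₂ : ℤ → Prop) [DecidablePred S₁] [DecidablePred S₂] (n : ℕ) : Finset (ℤ×ℤ) :=
  ((Finset.Icc (-(n:ℤ)) n) ×ˢ (Finset.Icc (-(n:ℤ)) n)).filter
    fun y => (S₁ y.1 ∧ S₂ y.2) ∧ y.1^2 + y.2^2 = (n:ℤ)

lemma mem_pS {S₁ S₂ : ℤ → Prop} [DecidablePred S₁] [DecidablePred S₂] {n : ℕ} {y : ℤ×ℤ} :
    y ∈ pS S₁ S₂ n ↔ (S₁ y.1 ∧ S₂ y.2) ∧ y.1^2 + y.2^2 = (n:ℤ) := by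
  simp only [pS, Finset.mem_filter, Finset.mem_product, Finset.mem_Icc]
  constructor
  · exact fun h => h.2
  · rintro ⟨hS, hk⟩
    have h1 := Int.le_self_sq y.1
    have h2 := Int.le_self_sq (-y.1)
    have h3 := Int.le_self_sq y.2
    have h4 := Int.le_self_sq (-y.2)
    have s1 := sq_nonneg y.1
    have s2 := sq_nonneg y.2
    exact ⟨⟨⟨by nlinarith, by nlinarith⟩, ⟨by nlinarith, by nlinarith⟩⟩, hS, hk⟩

noncomputable def tS (S₁ S₂ S₃ : ℤ → Prop) [DecidablePred S₁] [DecidablePred S₂] [DecidablePred S₃]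
    (n : ℕ) : Finset (ℤ×ℤ×ℤ) :=
  ((Finset.Icc (-(n:ℤ)) n) ×ˢ (Finset.Icc (-(n:ℤ)) n) ×ˢ (Finset.Icc (-(n:ℤ)) n)).filter
    fun y => (S₁ y.1 ∧ S₂ y.2.1 ∧ S₃ y.2.2) ∧ y.1^2 + y.2.1^2 + y.2.2^2 = (n:ℤ)

lemma mem_tS {S₁ S₂ S₃ : ℤ → Prop} [DecidablePred S₁] [DecidablePred S₂] [DecidablePred S₃]
    {n : ℕ} {y : ℤ×ℤ×ℤ} :
    y ∈ tS S₁ S₂ S₃ n ↔ (S₁ y.1 ∧ S₂ y.2.1 ∧ S₃ y.2.2) ∧ y.1^2 + y.2.1^2 + y.2.2^2 = (n:ℤ) := by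
  simp only [tS, Finset.mem_filter, Finset.mem_product, Finset.mem_Icc]
  constructor
  · exact fun h => h.2
  · rintro ⟨hS, hk⟩
    have h1 := Int.le_self_sq y.1
    have h2 := Int.le_self_sq (-y.1)
    have h3 := Int.le_self_sq y.2.1
    have h4 := Int.le_self_sq (-y.2.1)
    have h5 := Int.le_self_sq y.2.2
    have h6 := Int.le_self_sq (-y.2.2)
    have s1 := sq_nonneg y.1
    have s2 := sq_nonneg y.2.1
    have s3 := sq_nonneg y.2.2
    refine ⟨⟨⟨by nlinarith, by nlinarith⟩, ⟨by nlinarith, by nlinarith⟩,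
      ⟨by nlinarith, by nlinarith⟩⟩, hS, hk⟩

noncomputable def qS (S₁ S₂ S₃ S₄ : ℤ → Prop) [DecidablePred S₁] [DecidablePred S₂] [DecidablePred S₃]
    [DecidablePred S₄] (n : ℕ) : Finset (ℤ×ℤ×ℤ×ℤ) :=
  ((Finset.Icc (-(n:ℤ)) n) ×ˢ (Finset.Icc (-(n:ℤ)) n) ×ˢ (Finset.Icc (-(n:ℤ)) n)
      ×ˢ (Finset.Icc (-(n:ℤ)) n)).filter
    fun y => (S₁ y.1 ∧ S₂ y.2.1 ∧ S₃ y.2.2.1 ∧ S₄ y.2.2.2)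
      ∧ y.1^2 + y.2.1^2 + y.2.2.1^2 + y.2.2.2^2 = (n:ℤ)

lemma mem_qS {S₁ S₂ S₃ S₄ : ℤ → Prop} [DecidablePred S₁] [DecidablePred S₂] [DecidablePred S₃]
    [DecidablePred S₄] {n : ℕ} {y : ℤ×ℤ×ℤ×ℤ} :
    y ∈ qS S₁ S₂ S₃ S₄ n ↔ (S₁ y.1 ∧ S₂ y.2.1 ∧ S₃ y.2.2.1 ∧ S₄ y.2.2.2)
      ∧ y.1^2 + y.2.1^2 + y.2.2.1^2 + y.2.2.2^2 = (n:ℤ) := by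
  simp only [qS, Finset.mem_filter, Finset.mem_product, Finset.mem_Icc]
  constructor
  · exact fun h => h.2
  · rintro ⟨hS, hk⟩
    have h1 := Int.le_self_sq y.1
    have h2 := Int.le_self_sq (-y.1)
    have h3 := Int.le_self_sq y.2.1
    have h4 := Int.le_self_sq (-y.2.1)
    have h5 := Int.le_self_sq y.2.2.1
    have h6 := Int.le_self_sq (-y.2.2.1)
    have h7 := Int.le_self_sq y.2.2.2
    have h8 := Int.le_self_sq (-y.2.2.2)
    have s1 := sq_nonneg y.1
    have s2 := sq_nonneg y.2.1
    have s3 := sq_nonneg y.2.2.1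
    have s4 := sq_nonneg y.2.2.2
    refine ⟨⟨⟨by nlinarith, by nlinarith⟩, ⟨by nlinarith, by nlinarith⟩,
      ⟨by nlinarith, by nlinarith⟩, ⟨by nlinarith, by nlinarith⟩⟩, hS, hk⟩

lemma card_pS (S₁ S₂ : ℤ → Prop) [DecidablePred S₁] [DecidablePred S₂] (n : ℕ) :
    (pS S₁ S₂ n).card
      = ∑ p ∈ Finset.HasAntidiagonal.antidiagonal n, (sqS S₁ p.1).card * (sqS S₂ p.2).card := by
  rw [Finset.card_eq_sum_card_fiberwise
    (f := fun y : ℤ×ℤ => ((y.1^2).toNat, (y.2^2).toNat)) (t := Finset.HasAntidiagonal.antidiagonal n) ?_]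
  · refine Finset.sum_congr rfl fun p hp => ?_
    have hps := Finset.HasAntidiagonal.mem_antidiagonal.mp hp
    rw [show (pS S₁ S₂ n).filter (fun y => ((y.1^2).toNat, (y.2^2).toNat) = p)
        = (sqS S₁ p.1) ×ˢ (sqS S₂ p.2) from ?_]
    · exact Finset.card_product _ _
    · ext y
      simp only [Finset.mem_filter, Finset.mem_product, mem_pS, mem_sqS, Prod.ext_iff]
      have e1 := sqpos (sq_nonneg y.1)
      have e2 := sqpos (sq_nonneg y.2)
      constructor
      · rintro ⟨⟨⟨hS1, hS2⟩, hsum⟩, hp1, hp2⟩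
        exact ⟨⟨hS1, by omega⟩, ⟨hS2, by omega⟩⟩
      · rintro ⟨⟨hS1, hq1⟩, ⟨hS2, hq2⟩⟩
        refine ⟨⟨⟨hS1, hS2⟩, by omega⟩, by omega, by omega⟩
  · intro y hy
    rw [Finset.mem_coe, mem_pS] at hy
    have e1 := sqpos (sq_nonneg y.1)
    have e2 := sqpos (sq_nonneg y.2)
    rw [Finset.mem_coe, Finset.HasAntidiagonal.mem_antidiagonal]
    dsimp only
    omega

lemma card_tS (S₁ S₂ S₃ : ℤ → Prop) [DecidablePred S₁] [DecidablePred S₂] [DecidablePred S₃]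
    (n : ℕ) :
    (tS S₁ S₂ S₃ n).card
      = ∑ p ∈ Finset.HasAntidiagonal.antidiagonal n, (sqS S₁ p.1).card * (pS S₂ S₃ p.2).card := by
  rw [Finset.card_eq_sum_card_fiberwise
    (f := fun y : ℤ×ℤ×ℤ => ((y.1^2).toNat, ((y.2.1^2+y.2.2^2)).toNat))
    (t := Finset.HasAntidiagonal.antidiagonal n) ?_]
  · refine Finset.sum_congr rfl fun p hp => ?_
    have hps := Finset.HasAntidiagonal.mem_antidiagonal.mp hp
    rw [show (tS S₁ S₂ S₃ n).filter
          (fun y => ((y.1^2).toNat, ((y.2.1^2+y.2.2^2)).toNat) = p)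
        = (sqS S₁ p.1) ×ˢ (pS S₂ S₃ p.2) from ?_]
    · exact Finset.card_product _ _
    · ext y
      simp only [Finset.mem_filter, Finset.mem_product, mem_tS, mem_sqS, mem_pS, Prod.ext_iff]
      have e1 := sqpos (sq_nonneg y.1)
      have e2 : (((y.2.1^2+y.2.2^2)).toNat : ℤ) = y.2.1^2+y.2.2^2 :=
        sqpos (by positivity)
      constructor
      · rintro ⟨⟨⟨hS1, hS2, hS3⟩, hsum⟩, hp1, hp2⟩
        exact ⟨⟨hS1, by omega⟩, ⟨hS2, hS3⟩, by omega⟩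
      · rintro ⟨⟨hS1, hq1⟩, ⟨hS2, hS3⟩, hq2⟩
        refine ⟨⟨⟨hS1, hS2, hS3⟩, by omega⟩, by omega, by omega⟩
  · intro y hy
    rw [Finset.mem_coe, mem_tS] at hy
    have e1 := sqpos (sq_nonneg y.1)
    have e2 : (((y.2.1^2+y.2.2^2)).toNat : ℤ) = y.2.1^2+y.2.2^2 := sqpos (by positivity)
    rw [Finset.mem_coe, Finset.HasAntidiagonal.mem_antidiagonal]
    dsimp only
    omega

lemma card_qS (S₁ S₂ S₃ S₄ : ℤ → Prop) [DecidablePred S₁] [DecidablePred S₂] [DecidablePred S₃]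
    [DecidablePred S₄] (n : ℕ) :
    (qS S₁ S₂ S₃ S₄ n).card
      = ∑ p ∈ Finset.HasAntidiagonal.antidiagonal n, (sqS S₁ p.1).card * (tS S₂ S₃ S₄ p.2).card := by
  rw [Finset.card_eq_sum_card_fiberwise
    (f := fun y : ℤ×ℤ×ℤ×ℤ => ((y.1^2).toNat, ((y.2.1^2+y.2.2.1^2+y.2.2.2^2)).toNat))
    (t := Finset.HasAntidiagonal.antidiagonal n) ?_]
  · refine Finset.sum_congr rfl fun p hp => ?_
    have hps := Finset.HasAntidiagonal.mem_antidiagonal.mp hp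
    rw [show (qS S₁ S₂ S₃ S₄ n).filter
          (fun y => ((y.1^2).toNat, ((y.2.1^2+y.2.2.1^2+y.2.2.2^2)).toNat) = p)
        = (sqS S₁ p.1) ×ˢ (tS S₂ S₃ S₄ p.2) from ?_]
    · exact Finset.card_product _ _
    · ext y
      simp only [Finset.mem_filter, Finset.mem_product, mem_qS, mem_sqS, mem_tS, Prod.ext_iff]
      have e1 := sqpos (sq_nonneg y.1)
      have e2 : (((y.2.1^2+y.2.2.1^2+y.2.2.2^2)).toNat : ℤ) = y.2.1^2+y.2.2.1^2+y.2.2.2^2 :=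
        sqpos (by positivity)
      constructor
      · rintro ⟨⟨⟨hS1, hS2, hS3, hS4⟩, hsum⟩, hp1, hp2⟩
        exact ⟨⟨hS1, by omega⟩, ⟨hS2, hS3, hS4⟩, by omega⟩
      · rintro ⟨⟨hS1, hq1⟩, ⟨hS2, hS3, hS4⟩, hq2⟩
        refine ⟨⟨⟨hS1, hS2, hS3, hS4⟩, by omega⟩, by omega, by omega⟩
  · intro y hy
    rw [Finset.mem_coe, mem_qS] at hy
    have e1 := sqpos (sq_nonneg y.1)
    have e2 : (((y.2.1^2+y.2.2.1^2+y.2.2.2^2)).toNat : ℤ) = y.2.1^2+y.2.2.1^2+y.2.2.2^2 :=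
      sqpos (by positivity)
    rw [Finset.mem_coe, Finset.HasAntidiagonal.mem_antidiagonal]
    dsimp only
    omega

lemma coeff_sc_mul {gf hf : ℕ → ℕ} {g h : PowerSeries ℤ}
    (hg : ∀ m, coeff m g = (-1)^m * (gf m : ℤ))
    (hh : ∀ m, coeff m h = (-1)^m * (hf m : ℤ)) (n : ℕ) :
    coeff n (g * h)
      = (-1)^n * ((∑ p ∈ Finset.HasAntidiagonal.antidiagonal n, gf p.1 * hf p.2 : ℕ) : ℤ) := by
  rw [PowerSeries.coeff_mul]
  push_cast
  rw [Finset.mul_sum]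
  refine Finset.sum_congr rfl fun p hp => ?_
  rw [hg, hh]
  have hn : p.1 + p.2 = n := Finset.HasAntidiagonal.mem_antidiagonal.mp hp
  rw [← hn, pow_add]
  ring

lemma E2 (S₁ S₂ : ℤ → Prop) [DecidablePred S₁] [DecidablePred S₂] (n : ℕ) :
    coeff n (tgen S₁ * tgen S₂) = (-1)^n * ((pS S₁ S₂ n).card : ℤ) := by
  rw [coeff_sc_mul (coeff_tgen S₁) (coeff_tgen S₂), card_pS]

lemma E3 (S₁ S₂ S₃ : ℤ → Prop) [DecidablePred S₁] [DecidablePred S₂] [DecidablePred S₃] (n : ℕ) :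
    coeff n (tgen S₁ * (tgen S₂ * tgen S₃))
      = (-1)^n * ((tS S₁ S₂ S₃ n).card : ℤ) := by
  rw [coeff_sc_mul (coeff_tgen S₁) (fun m => E2 S₂ S₃ m), card_tS]

lemma E4 (S₁ S₂ S₃ S₄ : ℤ → Prop) [DecidablePred S₁] [DecidablePred S₂] [DecidablePred S₃]
    [DecidablePred S₄] (n : ℕ) :
    coeff n (tgen S₁ * (tgen S₂ * (tgen S₃ * tgen S₄)))
      = (-1)^n * ((qS S₁ S₂ S₃ S₄ n).card : ℤ) := by
  rw [coeff_sc_mul (coeff_tgen S₁) (fun m => E3 S₂ S₃ S₄ m), card_qS]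

-- IDENTIFICATIONS
abbrev Tt : ℤ → Prop := fun _ => True
abbrev T0 : ℤ → Prop := fun k => (k : ZMod 3) = 0
abbrev T1 : ℤ → Prop := fun k => (k : ZMod 3) = 1
abbrev T2 : ℤ → Prop := fun k => (k : ZMod 3) = 2

lemma neg_one_pow_sq (r : ℕ) : ((-1 : ℤ))^(r^2) = (-1)^r := by
  rcases Nat.even_or_odd r with he | ho
  · rw [Even.neg_one_pow he, Even.neg_one_pow (by rw [pow_two]; exact he.mul_right r)]
  · rw [Odd.neg_one_pow ho, Odd.neg_one_pow (by rw [pow_two]; exact ho.mul ho)]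

lemma hphi : phiNeg = tgen Tt := by
  ext m
  rw [coeff_tgen]
  simp only [phiNeg, coeff_mk]
  rcases eq_or_ne m 0 with rfl | hm
  · rw [if_pos rfl]
    have : sqS Tt 0 = {0} := by
      ext k
      rw [mem_sqS]
      simp only [Finset.mem_singleton, Nat.cast_zero, true_and]
      constructor
      · exact fun h => by nlinarith [sq_nonneg k, h]
      · rintro rfl; ring
    rw [this]
    simp
  · rw [if_neg hm]
    by_cases hsq : Nat.sqrt m ^ 2 = m
    · rw [if_pos hsq]
      set r := Nat.sqrt m with hr
      have hrpos : 0 < r := by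
        rcases Nat.eq_zero_or_pos r with h0 | h
        · exfalso; rw [h0] at hsq; simp at hsq; omega
        · exact h
      have hcast : ((r:ℤ))^2 = (m:ℤ) := by exact_mod_cast congrArg (Nat.cast (R := ℤ)) hsq
      have hset : sqS Tt m = {(r:ℤ), -(r:ℤ)} := by
        ext k
        simp only [mem_sqS, Finset.mem_insert, Finset.mem_singleton, true_and]
        constructor
        · intro hk
          have : (k - r) * (k + r) = 0 := by nlinarith [hk, hcast]
          rcases mul_eq_zero.mp this with h | h
          · left; linarith
          · right; linarith
        · rintro (rfl | rfl)
          · exact hcast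
          · rw [neg_pow]; simp [hcast]
      rw [hset, Finset.card_insert_of_notMem (by simp; omega), Finset.card_singleton]
      rw [← hsq, neg_one_pow_sq]
      push_cast
      ring
    · rw [if_neg hsq]
      have hset : sqS Tt m = ∅ := by
        rw [Finset.eq_empty_iff_forall_notMem]
        intro k hk
        rw [mem_sqS] at hk
        have h1 : ((k.natAbs : ℤ))^2 = (m:ℤ) := by rw [Int.natAbs_sq]; exact hk.2
        have h2 : k.natAbs ^ 2 = m := by exact_mod_cast h1
        rw [← h2, Nat.sqrt_eq'] at hsq
        exact hsq rfl
      rw [hset]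
      simp

lemma hQtgen : expand 9 phiNeg = tgen T0 := by
  ext m
  rw [coeff_tgen, coeff_expand]
  by_cases h9 : 9 ∣ m
  · obtain ⟨mq, rfl⟩ := h9
    rw [if_pos ⟨mq, rfl⟩, show 9 * mq / 9 = mq by omega, hphi, coeff_tgen]
    have hcard : (sqS Tt mq).card = (sqS T0 (9*mq)).card := by
      refine Finset.card_bij' (fun k _ => 3*k) (fun k _ => k/3) ?_ ?_ ?_ ?_
      · intro k hk
        rw [mem_sqS] at hk ⊢
        constructor
        · show ((3*k : ℤ) : ZMod 3) = 0
          push_cast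
          rw [show ((3:ZMod 3)) = 0 by decide]
          ring
        · push_cast
          nlinarith [hk.2]
      · intro k hk
        rw [mem_sqS] at hk ⊢
        obtain ⟨h0, hsq⟩ := hk
        have hdvd : (3:ℤ) ∣ k := by
          exact_mod_cast (ZMod.intCast_zmod_eq_zero_iff_dvd k 3).mp h0
        obtain ⟨w, rfl⟩ := hdvd
        rw [show (3 * w) / 3 = w from Int.mul_ediv_cancel_left w (by norm_num)]
        refine ⟨trivial, ?_⟩
        have h9 : ((9*mq : ℕ) : ℤ) = 9 * (mq : ℤ) := by push_cast; ring
        rw [h9] at hsq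
        nlinarith [hsq]
      · intro k _
        exact Int.mul_ediv_cancel_left k (by norm_num)
      · intro k hk
        rw [mem_sqS] at hk
        have hdvd : (3:ℤ) ∣ k := by
          exact_mod_cast (ZMod.intCast_zmod_eq_zero_iff_dvd k 3).mp hk.1
        exact Int.mul_ediv_cancel' hdvd
    rw [hcard, show (9:ℕ)*mq = 3*(3*mq) by ring, pow_mul, pow_mul]
    norm_num
  · rw [if_neg h9]
    have hset : sqS T0 m = ∅ := by
      rw [Finset.eq_empty_iff_forall_notMem]
      intro k hk
      rw [mem_sqS] at hk
      have hdvd : (3:ℤ) ∣ k := by exact_mod_cast (ZMod.intCast_zmod_eq_zero_iff_dvd k 3).mp hk.1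
      obtain ⟨w, rfl⟩ := hdvd
      have h1 : (m:ℤ) = 9 * w^2 := by nlinarith [hk.2]
      have h2 : ((9:ℕ):ℤ) ∣ (m:ℤ) := ⟨w^2, by push_cast; linarith⟩
      exact h9 (by exact_mod_cast h2)
    rw [hset]
    simp

noncomputable def Bser : PowerSeries ℤ :=
  PowerSeries.mk fun ℓ => (-1)^ℓ * ((sqS T1 (3*ℓ+1)).card : ℤ)

lemma sqS_T1_empty {m : ℕ} (h : m % 3 ≠ 1) : sqS T1 m = ∅ := by
  rw [Finset.eq_empty_iff_forall_notMem]
  intro k hk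
  rw [mem_sqS] at hk
  obtain ⟨h1, h2⟩ := hk
  have h3 : ((m:ℕ) : ZMod 3) = 1 := by
    have := congrArg (fun z : ℤ => (z : ZMod 3)) h2
    push_cast at this
    rw [h1] at this
    simpa using this.symm
  rw [← ZMod.natCast_mod m 3] at h3
  have hlt : m % 3 = 0 ∨ m % 3 = 2 := by omega
  rcases hlt with h | h <;> rw [h] at h3 <;> revert h3 <;> decide

lemma hXB : X * expand 3 Bser = - tgen T1 := by
  ext m
  rw [map_neg, coeff_tgen]
  cases m with
  | zero =>
    have hz : coeff 0 (X * expand 3 Bser) = 0 := by simp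
    rw [hz, sqS_T1_empty (by norm_num)]
    simp
  | succ k =>
    rw [PowerSeries.coeff_succ_X_mul, coeff_expand]
    by_cases h3 : 3 ∣ k
    · obtain ⟨ℓ, rfl⟩ := h3
      rw [if_pos ⟨ℓ, rfl⟩, show 3 * ℓ / 3 = ℓ by omega]
      simp only [Bser, coeff_mk]
      rw [show (-1:ℤ)^(3*ℓ+1) = -((-1)^ℓ) by rw [pow_succ, pow_mul]; norm_num]
      ring
    · rw [if_neg h3, sqS_T1_empty (by omega)]
      simp

lemma hT2T1 : tgen T2 = tgen T1 := by
  ext m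
  rw [coeff_tgen, coeff_tgen]
  have hc : (sqS T2 m).card = (sqS T1 m).card := by
    refine Finset.card_bij' (fun k _ => -k) (fun k _ => -k) ?_ ?_ ?_ ?_ <;> intro k hk
    · rw [mem_sqS] at hk ⊢
      obtain ⟨h1, h2⟩ := hk
      have e1 : (k : ZMod 3) = 2 := h1
      constructor
      · show ((-k : ℤ) : ZMod 3) = 1
        push_cast
        rw [e1]
        decide
      · rw [neg_pow]; simp [h2]
    · rw [mem_sqS] at hk ⊢
      obtain ⟨h1, h2⟩ := hk
      have e1 : (k : ZMod 3) = 1 := h1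
      constructor
      · show ((-k : ℤ) : ZMod 3) = 2
        push_cast
        rw [e1]
        decide
      · rw [neg_pow]; simp [h2]
    · ring
    · ring
  rw [hc]

lemma hsplitP : phiNeg = tgen T0 + tgen T1 + tgen T2 := by
  ext m
  rw [hphi, map_add, map_add, coeff_tgen, coeff_tgen, coeff_tgen, coeff_tgen]
  have tri : ∀ z : ZMod 3, z = 0 ∨ z = 1 ∨ z = 2 := by decide
  have h01 : Disjoint (sqS T0 m) (sqS T1 m) := by
    rw [Finset.disjoint_left]
    intro k hk0 hk1
    rw [mem_sqS] at hk0 hk1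
    have e0 : (k : ZMod 3) = 0 := hk0.1
    have e1 : (k : ZMod 3) = 1 := hk1.1
    rw [e0] at e1
    exact absurd e1 (by decide)
  have h02 : Disjoint (sqS T0 m ∪ sqS T1 m) (sqS T2 m) := by
    rw [Finset.disjoint_left]
    intro k hk0 hk2
    rw [Finset.mem_union, mem_sqS, mem_sqS] at hk0
    rw [mem_sqS] at hk2
    have e2 : (k : ZMod 3) = 2 := hk2.1
    rcases hk0 with h | h
    · have e0 : (k : ZMod 3) = 0 := h.1
      rw [e2] at e0
      exact absurd e0 (by decide)
    · have e1 : (k : ZMod 3) = 1 := h.1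
      rw [e2] at e1
      exact absurd e1 (by decide)
  have hunion : sqS Tt m = (sqS T0 m ∪ sqS T1 m) ∪ sqS T2 m := by
    ext k
    simp only [Finset.mem_union, mem_sqS, true_and]
    constructor
    · intro hk
      rcases tri (k : ZMod 3) with h | h | h
      · exact Or.inl (Or.inl ⟨h, hk⟩)
      · exact Or.inl (Or.inr ⟨h, hk⟩)
      · exact Or.inr ⟨h, hk⟩
    · rintro ((⟨-, h⟩ | ⟨-, h⟩) | ⟨-, h⟩) <;> exact h
  rw [hunion, Finset.card_union_of_disjoint h02, Finset.card_union_of_disjoint h01]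
  push_cast
  ring

lemma hD : phiNeg = expand 9 phiNeg - 2 * (X * expand 3 Bser) := by
  calc phiNeg = tgen T0 + tgen T1 + tgen T2 := hsplitP
    _ = expand 9 phiNeg - 2 * (X * expand 3 Bser) := by
        rw [← hQtgen]
        linear_combination hT2T1 + 2 * hXB

-- COUNTING: quaternion bijection and residue classes
def nrm (y : ℤ×ℤ×ℤ×ℤ) : ℤ := y.1^2 + y.2.1^2 + y.2.2.1^2 + y.2.2.2^2

noncomputable def qJ (P : ℤ×ℤ×ℤ×ℤ → Prop) [DecidablePred P] (n : ℕ) : Finset (ℤ×ℤ×ℤ×ℤ) :=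
  ((Finset.Icc (-(n:ℤ)) n) ×ˢ (Finset.Icc (-(n:ℤ)) n) ×ˢ (Finset.Icc (-(n:ℤ)) n)
      ×ˢ (Finset.Icc (-(n:ℤ)) n)).filter
    fun y => P y ∧ nrm y = (n:ℤ)

lemma mem_qJ {P : ℤ×ℤ×ℤ×ℤ → Prop} [DecidablePred P] {n : ℕ} {y : ℤ×ℤ×ℤ×ℤ} :
    y ∈ qJ P n ↔ P y ∧ nrm y = (n:ℤ) := by
  rw [qJ, Finset.mem_filter]
  simp only [Finset.mem_product, Finset.mem_Icc, nrm]
  constructor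
  · exact fun h => h.2
  · rintro ⟨hS, hk⟩
    have h1 := Int.le_self_sq y.1
    have h2 := Int.le_self_sq (-y.1)
    have h3 := Int.le_self_sq y.2.1
    have h4 := Int.le_self_sq (-y.2.1)
    have h5 := Int.le_self_sq y.2.2.1
    have h6 := Int.le_self_sq (-y.2.2.1)
    have h7 := Int.le_self_sq y.2.2.2
    have h8 := Int.le_self_sq (-y.2.2.2)
    have s1 := sq_nonneg y.1
    have s2 := sq_nonneg y.2.1
    have s3 := sq_nonneg y.2.2.1
    have s4 := sq_nonneg y.2.2.2
    refine ⟨⟨⟨by nlinarith, by nlinarith⟩, ⟨by nlinarith, by nlinarith⟩,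
      ⟨by nlinarith, by nlinarith⟩, ⟨by nlinarith, by nlinarith⟩⟩, hS, hk⟩

lemma qS_eq_qJ (S₁ S₂ S₃ S₄ : ℤ → Prop) [DecidablePred S₁] [DecidablePred S₂]
    [DecidablePred S₃] [DecidablePred S₄] (n : ℕ) :
    qS S₁ S₂ S₃ S₄ n = qJ (fun y => S₁ y.1 ∧ S₂ y.2.1 ∧ S₃ y.2.2.1 ∧ S₄ y.2.2.2) n := by
  ext y
  rw [mem_qS, mem_qJ]
  rfl

def LPred : ℤ×ℤ×ℤ×ℤ → Prop := fun y =>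
  ((y.1 + y.2.1 + y.2.2.1 : ℤ) : ZMod 3) = 0 ∧
  ((-y.1 + y.2.1 + y.2.2.2 : ℤ) : ZMod 3) = 0 ∧
  ((-y.1 + y.2.2.1 - y.2.2.2 : ℤ) : ZMod 3) = 0 ∧
  ((-y.2.1 + y.2.2.1 + y.2.2.2 : ℤ) : ZMod 3) = 0

instance : DecidablePred LPred := fun y => by unfold LPred; infer_instance

def Phi (y : ℤ×ℤ×ℤ×ℤ) : ℤ×ℤ×ℤ×ℤ :=
  (y.1 - y.2.1 - y.2.2.1, y.1 + y.2.1 - y.2.2.2, y.1 + y.2.2.1 + y.2.2.2,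
    y.2.1 - y.2.2.1 + y.2.2.2)

def PsiD (y : ℤ×ℤ×ℤ×ℤ) : ℤ×ℤ×ℤ×ℤ :=
  ((y.1 + y.2.1 + y.2.2.1)/3, (-y.1 + y.2.1 + y.2.2.2)/3,
    (-y.1 + y.2.2.1 - y.2.2.2)/3, (-y.2.1 + y.2.2.1 + y.2.2.2)/3)

lemma three_zmod : (3 : ZMod 3) = 0 := by decide

lemma card_phi (m : ℕ) : (qJ (fun _ => True) m).card = (qJ LPred (3*m)).card := by
  refine Finset.card_bij' (fun y _ => Phi y) (fun y _ => PsiD y) ?_ ?_ ?_ ?_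
  · intro y hy
    rw [mem_qJ] at hy ⊢
    refine ⟨⟨?_, ?_, ?_, ?_⟩, ?_⟩
    · have e : (Phi y).1 + (Phi y).2.1 + (Phi y).2.2.1 = 3 * y.1 := by simp [Phi]; ring
      rw [e]; push_cast; rw [three_zmod]; ring
    · have e : -(Phi y).1 + (Phi y).2.1 + (Phi y).2.2.2 = 3 * y.2.1 := by simp [Phi]; ring
      rw [e]; push_cast; rw [three_zmod]; ring
    · have e : -(Phi y).1 + (Phi y).2.2.1 - (Phi y).2.2.2 = 3 * y.2.2.1 := by simp [Phi]; ring
      rw [e]; push_cast; rw [three_zmod]; ring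
    · have e : -(Phi y).2.1 + (Phi y).2.2.1 + (Phi y).2.2.2 = 3 * y.2.2.2 := by simp [Phi]; ring
      rw [e]; push_cast; rw [three_zmod]; ring
    · have e : nrm (Phi y) = 3 * nrm y := by simp [Phi, nrm]; ring
      rw [e, hy.2]; push_cast; ring
  · intro y hy
    rw [mem_qJ] at hy ⊢
    obtain ⟨⟨l1, l2, l3, l4⟩, hn⟩ := hy
    have d1 : (3:ℤ) ∣ (y.1 + y.2.1 + y.2.2.1) := by
      exact_mod_cast (ZMod.intCast_zmod_eq_zero_iff_dvd _ 3).mp l1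
    have d2 : (3:ℤ) ∣ (-y.1 + y.2.1 + y.2.2.2) := by
      exact_mod_cast (ZMod.intCast_zmod_eq_zero_iff_dvd _ 3).mp l2
    have d3 : (3:ℤ) ∣ (-y.1 + y.2.2.1 - y.2.2.2) := by
      exact_mod_cast (ZMod.intCast_zmod_eq_zero_iff_dvd _ 3).mp l3
    have d4 : (3:ℤ) ∣ (-y.2.1 + y.2.2.1 + y.2.2.2) := by
      exact_mod_cast (ZMod.intCast_zmod_eq_zero_iff_dvd _ 3).mp l4
    obtain ⟨a, ha⟩ := d1
    obtain ⟨b, hb⟩ := d2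
    obtain ⟨c, hc⟩ := d3
    obtain ⟨d, hd⟩ := d4
    have e1 : (y.1 + y.2.1 + y.2.2.1)/3 = a := by
      rw [ha]; exact Int.mul_ediv_cancel_left _ (by norm_num)
    have e2 : (-y.1 + y.2.1 + y.2.2.2)/3 = b := by
      rw [hb]; exact Int.mul_ediv_cancel_left _ (by norm_num)
    have e3 : (-y.1 + y.2.2.1 - y.2.2.2)/3 = c := by
      rw [hc]; exact Int.mul_ediv_cancel_left _ (by norm_num)
    have e4 : (-y.2.1 + y.2.2.1 + y.2.2.2)/3 = d := by
      rw [hd]; exact Int.mul_ediv_cancel_left _ (by norm_num)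
    have hcast : nrm y = 3 * (m:ℤ) := by rw [hn]; push_cast; ring
    have hkey : a^2 + b^2 + c^2 + d^2 = (m:ℤ) := by
      have hbig : (3*a)^2 + (3*b)^2 + (3*c)^2 + (3*d)^2 = 3 * nrm y := by
        rw [← ha, ← hb, ← hc, ← hd]
        simp only [nrm]
        ring
      rw [hcast] at hbig
      nlinarith [hbig]
    refine ⟨trivial, ?_⟩
    simp only [PsiD, nrm, e1, e2, e3, e4]
    exact hkey
  · intro y _
    have e1 : (Phi y).1 + (Phi y).2.1 + (Phi y).2.2.1 = 3 * y.1 := by simp [Phi]; ring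
    have e2 : -(Phi y).1 + (Phi y).2.1 + (Phi y).2.2.2 = 3 * y.2.1 := by simp [Phi]; ring
    have e3 : -(Phi y).1 + (Phi y).2.2.1 - (Phi y).2.2.2 = 3 * y.2.2.1 := by simp [Phi]; ring
    have e4 : -(Phi y).2.1 + (Phi y).2.2.1 + (Phi y).2.2.2 = 3 * y.2.2.2 := by simp [Phi]; ring
    simp only [PsiD, e1, e2, e3, e4]
    rw [Int.mul_ediv_cancel_left _ (by norm_num : (3:ℤ) ≠ 0),
      Int.mul_ediv_cancel_left _ (by norm_num : (3:ℤ) ≠ 0),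
      Int.mul_ediv_cancel_left _ (by norm_num : (3:ℤ) ≠ 0),
      Int.mul_ediv_cancel_left _ (by norm_num : (3:ℤ) ≠ 0)]
  · intro y hy
    rw [mem_qJ] at hy
    obtain ⟨⟨l1, l2, l3, l4⟩, hn⟩ := hy
    have d1 : (3:ℤ) ∣ (y.1 + y.2.1 + y.2.2.1) := by
      exact_mod_cast (ZMod.intCast_zmod_eq_zero_iff_dvd _ 3).mp l1
    have d2 : (3:ℤ) ∣ (-y.1 + y.2.1 + y.2.2.2) := by
      exact_mod_cast (ZMod.intCast_zmod_eq_zero_iff_dvd _ 3).mp l2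
    have d3 : (3:ℤ) ∣ (-y.1 + y.2.2.1 - y.2.2.2) := by
      exact_mod_cast (ZMod.intCast_zmod_eq_zero_iff_dvd _ 3).mp l3
    have d4 : (3:ℤ) ∣ (-y.2.1 + y.2.2.1 + y.2.2.2) := by
      exact_mod_cast (ZMod.intCast_zmod_eq_zero_iff_dvd _ 3).mp l4
    obtain ⟨a, ha⟩ := d1
    obtain ⟨b, hb⟩ := d2
    obtain ⟨c, hc⟩ := d3
    obtain ⟨d, hd⟩ := d4
    have e1 : (y.1 + y.2.1 + y.2.2.1)/3 = a := by
      rw [ha]; exact Int.mul_ediv_cancel_left _ (by norm_num)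
    have e2 : (-y.1 + y.2.1 + y.2.2.2)/3 = b := by
      rw [hb]; exact Int.mul_ediv_cancel_left _ (by norm_num)
    have e3 : (-y.1 + y.2.2.1 - y.2.2.2)/3 = c := by
      rw [hc]; exact Int.mul_ediv_cancel_left _ (by norm_num)
    have e4 : (-y.2.1 + y.2.2.1 + y.2.2.2)/3 = d := by
      rw [hd]; exact Int.mul_ediv_cancel_left _ (by norm_num)
    simp only [PsiD, Phi, e1, e2, e3, e4]
    have f1 : a - b - c = y.1 := by linarith
    have f2 : a + b - d = y.2.1 := by linarith
    have f3 : a + c + d = y.2.2.1 := by linarith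
    have f4 : b - c + d = y.2.2.2 := by linarith
    rw [f1, f2, f3, f4]

-- classes
def RvP (p q : ZMod 3) : ℤ×ℤ×ℤ×ℤ → Prop := fun y =>
  (y.1 : ZMod 3) = p ∧ (y.2.1 : ZMod 3) = q ∧ (y.2.2.1 : ZMod 3) = 2*p - q ∧
    (y.2.2.2 : ZMod 3) = p - q

instance (p q : ZMod 3) : DecidablePred (RvP p q) := fun y => by unfold RvP; infer_instance

lemma LP_iff (y : ℤ×ℤ×ℤ×ℤ) (p q : ZMod 3) :
    (LPred y ∧ ((y.1 : ZMod 3), (y.2.1 : ZMod 3)) = (p, q)) ↔ RvP p q y := by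
  unfold LPred RvP
  push_cast
  rw [Prod.ext_iff]
  generalize (y.1 : ZMod 3) = a
  generalize (y.2.1 : ZMod 3) = b
  generalize (y.2.2.1 : ZMod 3) = c
  generalize (y.2.2.2 : ZMod 3) = d
  revert a b c d p q
  decide

lemma card_LP_split (N : ℕ) :
    (qJ LPred N).card = ∑ pq ∈ (Finset.univ : Finset (ZMod 3 × ZMod 3)),
      (qJ (RvP pq.1 pq.2) N).card := by
  rw [Finset.card_eq_sum_card_fiberwise
    (f := fun y : ℤ×ℤ×ℤ×ℤ => ((y.1 : ZMod 3), (y.2.1 : ZMod 3)))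
    (t := (Finset.univ : Finset (ZMod 3 × ZMod 3))) (fun y _ => Finset.mem_univ _)]
  refine Finset.sum_congr rfl fun pq _ => ?_
  congr 1
  ext y
  simp only [Finset.mem_filter, mem_qJ]
  constructor
  · rintro ⟨⟨hL, hn⟩, hf⟩
    exact ⟨(LP_iff y pq.1 pq.2).mp ⟨hL, hf⟩, hn⟩
  · rintro ⟨hR, hn⟩
    have := (LP_iff y pq.1 pq.2).mpr hR
    exact ⟨⟨this.1, hn⟩, this.2⟩

lemma qJ_card_congr (P P' : ℤ×ℤ×ℤ×ℤ → Prop) [DecidablePred P] [DecidablePred P'] (n : ℕ)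
    (g g' : ℤ×ℤ×ℤ×ℤ → ℤ×ℤ×ℤ×ℤ)
    (hnrm : ∀ y, nrm (g y) = nrm y)
    (hP : ∀ y, P y → P' (g y)) (hP' : ∀ y, P' y → P (g' y))
    (hgg' : ∀ y, g' (g y) = y) (hg'g : ∀ y, g (g' y) = y) :
    (qJ P n).card = (qJ P' n).card := by
  refine Finset.card_bij' (fun y _ => g y) (fun y _ => g' y) ?_ ?_ ?_ ?_
  · intro y hy
    rw [mem_qJ] at hy ⊢
    exact ⟨hP y hy.1, by rw [hnrm]; exact hy.2⟩
  · intro y hy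
    rw [mem_qJ] at hy ⊢
    refine ⟨hP' y hy.1, ?_⟩
    have h := hnrm (g' y)
    rw [hg'g] at h
    rw [← h]
    exact hy.2
  · intro y _; exact hgg' y
  · intro y _; exact hg'g y

-- signed permutation maps
def gN (y : ℤ×ℤ×ℤ×ℤ) : ℤ×ℤ×ℤ×ℤ := (-y.1, -y.2.1, -y.2.2.1, -y.2.2.2)
def gA (y : ℤ×ℤ×ℤ×ℤ) : ℤ×ℤ×ℤ×ℤ := (y.1, -y.2.2.1, y.2.2.2, y.2.1)
def gA' (y : ℤ×ℤ×ℤ×ℤ) : ℤ×ℤ×ℤ×ℤ := (y.1, y.2.2.2, -y.2.1, y.2.2.1)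
def gB (y : ℤ×ℤ×ℤ×ℤ) : ℤ×ℤ×ℤ×ℤ := (y.2.1, -y.2.2.1, -y.2.2.2, y.1)
def gB' (y : ℤ×ℤ×ℤ×ℤ) : ℤ×ℤ×ℤ×ℤ := (y.2.2.2, y.1, -y.2.1, -y.2.2.1)
def gC (y : ℤ×ℤ×ℤ×ℤ) : ℤ×ℤ×ℤ×ℤ := (y.1, -y.2.1, -y.2.2.2, y.2.2.1)
def gC' (y : ℤ×ℤ×ℤ×ℤ) : ℤ×ℤ×ℤ×ℤ := (y.1, -y.2.1, y.2.2.2, -y.2.2.1)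

lemma cls_neg (p q : ZMod 3) (N : ℕ) :
    (qJ (RvP p q) N).card = (qJ (RvP (-p) (-q)) N).card := by
  refine qJ_card_congr _ _ N gN gN ?_ ?_ ?_ ?_ ?_
  · intro y; simp only [gN, nrm]; ring
  · intro y hy
    obtain ⟨h1, h2, h3, h4⟩ := hy
    refine ⟨?_, ?_, ?_, ?_⟩ <;> show ((- _ : ℤ) : ZMod 3) = _ <;> push_cast <;>
      [rw [h1]; rw [h2]; rw [h3]; rw [h4]] <;> ring
  · intro y hy
    obtain ⟨h1, h2, h3, h4⟩ := hy
    refine ⟨?_, ?_, ?_, ?_⟩ <;> show ((- _ : ℤ) : ZMod 3) = _ <;> push_cast <;>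
      [rw [h1]; rw [h2]; rw [h3]; rw [h4]] <;> ring
  · intro y; simp [gN]
  · intro y; simp [gN]

lemma cls_10 (N : ℕ) : (qJ (RvP 1 0) N).card = (qJ (RvP 1 1) N).card := by
  refine qJ_card_congr _ _ N gA gA' ?_ ?_ ?_ ?_ ?_
  · intro y; simp only [gA, gA', nrm]; ring
  · intro y hy
    obtain ⟨h1, h2, h3, h4⟩ := hy
    refine ⟨?_, ?_, ?_, ?_⟩
    · show ((y.1 : ℤ) : ZMod 3) = (1:ZMod 3)
      rw [h1] <;> decide
    · show ((-y.2.2.1 : ℤ) : ZMod 3) = (1:ZMod 3)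
      push_cast; rw [h3] <;> decide
    · show ((y.2.2.2 : ℤ) : ZMod 3) = 2*(1:ZMod 3) - (1:ZMod 3)
      rw [h4] <;> decide
    · show ((y.2.1 : ℤ) : ZMod 3) = (1:ZMod 3) - (1:ZMod 3)
      rw [h2] <;> decide
  · intro y hy
    obtain ⟨h1, h2, h3, h4⟩ := hy
    refine ⟨?_, ?_, ?_, ?_⟩
    · show ((y.1 : ℤ) : ZMod 3) = (1:ZMod 3)
      rw [h1] <;> decide
    · show ((y.2.2.2 : ℤ) : ZMod 3) = (0:ZMod 3)
      rw [h4] <;> decide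
    · show ((-y.2.1 : ℤ) : ZMod 3) = 2*(1:ZMod 3) - (0:ZMod 3)
      push_cast; rw [h2] <;> decide
    · show ((y.2.2.1 : ℤ) : ZMod 3) = (1:ZMod 3) - (0:ZMod 3)
      rw [h3] <;> decide
  · intro y; simp [gA, gA']
  · intro y; simp [gA, gA']

lemma cls_01 (N : ℕ) : (qJ (RvP 0 1) N).card = (qJ (RvP 1 1) N).card := by
  refine qJ_card_congr _ _ N gB gB' ?_ ?_ ?_ ?_ ?_
  · intro y; simp only [gB, gB', nrm]; ring
  · intro y hy
    obtain ⟨h1, h2, h3, h4⟩ := hy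
    refine ⟨?_, ?_, ?_, ?_⟩
    · show ((y.2.1 : ℤ) : ZMod 3) = (1:ZMod 3)
      rw [h2] <;> decide
    · show ((-y.2.2.1 : ℤ) : ZMod 3) = (1:ZMod 3)
      push_cast; rw [h3] <;> decide
    · show ((-y.2.2.2 : ℤ) : ZMod 3) = 2*(1:ZMod 3) - (1:ZMod 3)
      push_cast; rw [h4] <;> decide
    · show ((y.1 : ℤ) : ZMod 3) = (1:ZMod 3) - (1:ZMod 3)
      rw [h1] <;> decide
  · intro y hy
    obtain ⟨h1, h2, h3, h4⟩ := hy
    refine ⟨?_, ?_, ?_, ?_⟩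
    · show ((y.2.2.2 : ℤ) : ZMod 3) = (0:ZMod 3)
      rw [h4] <;> decide
    · show ((y.1 : ℤ) : ZMod 3) = (1:ZMod 3)
      rw [h1] <;> decide
    · show ((-y.2.1 : ℤ) : ZMod 3) = 2*(0:ZMod 3) - (1:ZMod 3)
      push_cast; rw [h2] <;> decide
    · show ((-y.2.2.1 : ℤ) : ZMod 3) = (0:ZMod 3) - (1:ZMod 3)
      push_cast; rw [h3] <;> decide
  · intro y; simp [gB, gB']
  · intro y; simp [gB, gB']

lemma cls_12 (N : ℕ) : (qJ (RvP 1 2) N).card = (qJ (RvP 1 1) N).card := by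
  refine qJ_card_congr _ _ N gC gC' ?_ ?_ ?_ ?_ ?_
  · intro y; simp only [gC, gC', nrm]; ring
  · intro y hy
    obtain ⟨h1, h2, h3, h4⟩ := hy
    refine ⟨?_, ?_, ?_, ?_⟩
    · show ((y.1 : ℤ) : ZMod 3) = (1:ZMod 3)
      rw [h1] <;> decide
    · show ((-y.2.1 : ℤ) : ZMod 3) = (1:ZMod 3)
      push_cast; rw [h2] <;> decide
    · show ((-y.2.2.2 : ℤ) : ZMod 3) = 2*(1:ZMod 3) - (1:ZMod 3)
      push_cast; rw [h4] <;> decide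
    · show ((y.2.2.1 : ℤ) : ZMod 3) = (1:ZMod 3) - (1:ZMod 3)
      rw [h3] <;> decide
  · intro y hy
    obtain ⟨h1, h2, h3, h4⟩ := hy
    refine ⟨?_, ?_, ?_, ?_⟩
    · show ((y.1 : ℤ) : ZMod 3) = (1:ZMod 3)
      rw [h1] <;> decide
    · show ((-y.2.1 : ℤ) : ZMod 3) = (2:ZMod 3)
      push_cast; rw [h2] <;> decide
    · show ((y.2.2.2 : ℤ) : ZMod 3) = 2*(1:ZMod 3) - (2:ZMod 3)
      rw [h4] <;> decide
    · show ((-y.2.2.1 : ℤ) : ZMod 3) = (1:ZMod 3) - (2:ZMod 3)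
      push_cast; rw [h3] <;> decide
  · intro y; simp [gC, gC']
  · intro y; simp [gC, gC']

lemma cls_22 (N : ℕ) : (qJ (RvP 2 2) N).card = (qJ (RvP 1 1) N).card := by
  have h := cls_neg 1 1 N
  rw [show (-1 : ZMod 3) = 2 from by decide] at h
  exact h.symm

lemma cls_20 (N : ℕ) : (qJ (RvP 2 0) N).card = (qJ (RvP 1 1) N).card := by
  have h := cls_neg 1 0 N
  rw [show (-1 : ZMod 3) = 2 from by decide, show (-0 : ZMod 3) = 0 from by decide] at h
  rw [← h]
  exact cls_10 N

lemma cls_02 (N : ℕ) : (qJ (RvP 0 2) N).card = (qJ (RvP 1 1) N).card := by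
  have h := cls_neg 0 1 N
  rw [show (-1 : ZMod 3) = 2 from by decide, show (-0 : ZMod 3) = 0 from by decide] at h
  rw [← h]
  exact cls_01 N

lemma cls_21 (N : ℕ) : (qJ (RvP 2 1) N).card = (qJ (RvP 1 1) N).card := by
  have h := cls_neg 1 2 N
  rw [show (-1 : ZMod 3) = 2 from by decide, show (-2 : ZMod 3) = 1 from by decide] at h
  rw [← h]
  exact cls_12 N

lemma master_count (m : ℕ) :
    (qJ (fun _ => True) m).card
      = (qJ (RvP 0 0) (3*m)).card + 8 * (qJ (RvP 1 1) (3*m)).card := by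
  rw [card_phi, card_LP_split]
  rw [show (Finset.univ : Finset (ZMod 3 × ZMod 3))
      = {((0:ZMod 3),(0:ZMod 3)), (0,1), (0,2), (1,0), (1,1), (1,2), (2,0), (2,1), (2,2)}
      from by decide]
  rw [Finset.sum_insert (by decide), Finset.sum_insert (by decide),
    Finset.sum_insert (by decide), Finset.sum_insert (by decide),
    Finset.sum_insert (by decide), Finset.sum_insert (by decide),
    Finset.sum_insert (by decide), Finset.sum_insert (by decide), Finset.sum_singleton]
  rw [cls_01, cls_02, cls_10, cls_12, cls_20, cls_21, cls_22]
  ring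

lemma cls_00_empty (n : ℕ) (h : ¬ 3 ∣ n) : qJ (RvP 0 0) n = ∅ := by
  rw [Finset.eq_empty_iff_forall_notMem]
  intro y hy
  rw [mem_qJ] at hy
  obtain ⟨⟨h1, h2, h3, h4⟩, hn⟩ := hy
  have hc := congrArg (fun z : ℤ => (z : ZMod 3)) hn
  simp only [nrm] at hc
  push_cast at hc
  rw [h1, h2, h3, h4] at hc
  have : ((n:ℕ) : ZMod 3) = 0 := by rw [← hc] <;> decide
  exact h ((ZMod.natCast_eq_zero_iff n 3).mp this)

lemma cls_11_empty (n : ℕ) (h : ¬ 3 ∣ n) : qJ (RvP 1 1) n = ∅ := by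
  rw [Finset.eq_empty_iff_forall_notMem]
  intro y hy
  rw [mem_qJ] at hy
  obtain ⟨⟨h1, h2, h3, h4⟩, hn⟩ := hy
  have hc := congrArg (fun z : ℤ => (z : ZMod 3)) hn
  simp only [nrm] at hc
  push_cast at hc
  rw [h1, h2, h3, h4] at hc
  have : ((n:ℕ) : ZMod 3) = 0 := by rw [← hc] <;> decide
  exact h ((ZMod.natCast_eq_zero_iff n 3).mp this)

-- star identities
lemma hphi4 : phiNeg^4 = tgen Tt * (tgen Tt * (tgen Tt * tgen Tt)) := by
  rw [hphi]; ring

lemma qJ_pred_T0 (N : ℕ) :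
    qJ (fun y : ℤ×ℤ×ℤ×ℤ => T0 y.1 ∧ T0 y.2.1 ∧ T0 y.2.2.1 ∧ T0 y.2.2.2) N
      = qJ (RvP 0 0) N := by
  ext y
  rw [mem_qJ, mem_qJ]
  refine and_congr_left fun _ => ?_
  unfold RvP
  constructor
  · rintro ⟨a, b, c, d⟩
    have c' : (y.2.2.1 : ZMod 3) = 0 := c
    have d' : (y.2.2.2 : ZMod 3) = 0 := d
    exact ⟨a, b, by rw [c'] <;> decide, by rw [d'] <;> decide⟩
  · rintro ⟨a, b, c, d⟩
    exact ⟨a, b, by show (y.2.2.1 : ZMod 3) = 0; rw [c] <;> decide,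
      by show (y.2.2.2 : ZMod 3) = 0; rw [d] <;> decide⟩

lemma qJ_pred_T1 (N : ℕ) :
    qJ (fun y : ℤ×ℤ×ℤ×ℤ => T1 y.1 ∧ T1 y.2.1 ∧ T1 y.2.2.1 ∧ T0 y.2.2.2) N
      = qJ (RvP 1 1) N := by
  ext y
  rw [mem_qJ, mem_qJ]
  refine and_congr_left fun _ => ?_
  unfold RvP
  constructor
  · rintro ⟨a, b, c, d⟩
    have c' : (y.2.2.1 : ZMod 3) = 1 := c
    have d' : (y.2.2.2 : ZMod 3) = 0 := d
    exact ⟨a, b, by rw [c'] <;> decide, by rw [d'] <;> decide⟩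
  · rintro ⟨a, b, c, d⟩
    exact ⟨a, b, by show (y.2.2.1 : ZMod 3) = 1; rw [c] <;> decide,
      by show (y.2.2.2 : ZMod 3) = 0; rw [d] <;> decide⟩

lemma hstar3' : expand 3 (phiNeg^4)
    = tgen T0 * (tgen T0 * (tgen T0 * tgen T0))
      + 8 * (tgen T1 * (tgen T1 * (tgen T1 * tgen T0))) := by
  ext n
  rw [map_add, show (8 : PowerSeries ℤ) = C 8 from (map_ofNat _ _).symm,
    PowerSeries.coeff_C_mul, E4, E4, qS_eq_qJ, qS_eq_qJ, qJ_pred_T0, qJ_pred_T1, coeff_expand]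
  by_cases h3 : 3 ∣ n
  · obtain ⟨m, rfl⟩ := h3
    rw [if_pos ⟨m, rfl⟩, show 3 * m / 3 = m by omega, hphi4, E4, qS_eq_qJ,
      show (qJ (fun y : ℤ×ℤ×ℤ×ℤ => Tt y.1 ∧ Tt y.2.1 ∧ Tt y.2.2.1 ∧ Tt y.2.2.2) m)
        = qJ (fun _ => True) m from by ext y; rw [mem_qJ, mem_qJ]; tauto,
      master_count]
    have hsign : ((-1:ℤ))^(3*m) = (-1)^m := by rw [pow_mul]; norm_num
    rw [hsign]
    push_cast
    ring
  · rw [if_neg h3, cls_00_empty _ h3, cls_11_empty _ h3]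
    simp

lemma hstar3 : (expand 3 phiNeg)^4
    = (expand 9 phiNeg)^4 - 8*((X * expand 3 Bser)^3 * expand 9 phiNeg) := by
  have h := hstar3'
  rw [expand3_pow] at h
  linear_combination h
    + (-((expand 9 phiNeg)^3 + (expand 9 phiNeg)^2*(tgen T0) + (expand 9 phiNeg)*(tgen T0)^2
        + (tgen T0)^3) + 8*(X*expand 3 Bser)^3) * hQtgen
    + (8 * tgen T0 * ((X*expand 3 Bser)^2 - (X*expand 3 Bser)*(tgen T1) + (tgen T1)^2)) * hXB

lemma hstar : phiNeg^4
    = (expand 3 phiNeg)^4 - 8*(X * Bser^3 * expand 3 phiNeg) := by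
  apply expand3_inj
  have hL : expand 3 (phiNeg^4) = (expand 3 phiNeg)^4 := expand3_pow _ _
  have hR : expand 3 ((expand 3 phiNeg)^4 - 8*(X * Bser^3 * expand 3 phiNeg))
      = (expand 9 phiNeg)^4 - 8*(X^3 * (expand 3 Bser)^3 * expand 9 phiNeg) := by
    simp only [expand_sub, expand3_mul, expand3_pow, expand_X, expand_expand]
    rw [expand_ofNat]
  rw [hL, hR, hstar3]
  ring

-- FINAL ASSEMBLY SUPPORT
noncomputable def Vs : PowerSeries ℤ := (expand 3 phiNeg)^3 - 8*(X*Bser^3)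
noncomputable def Vin : PowerSeries ℤ := PowerSeries.invOfUnit Vs 1

lemma constC3 : constantCoeff (expand 3 phiNeg) = 1 := by
  rw [← PowerSeries.coeff_zero_eq_constantCoeff, coeff_expand, if_pos (dvd_zero 3)]
  norm_num
  simp [phiNeg, coeff_mk]

lemma cVs : constantCoeff Vs = 1 := by
  have h := constC3
  simp [Vs, map_sub, map_pow, map_mul, constantCoeff_X, h]

lemma hVVi : Vs * Vin = 1 :=
  PowerSeries.mul_invOfUnit _ 1 (by rw [cVs]; rfl)

lemma hPP : phiNegInv * phiNeg = 1 := by rw [mul_comm]; exact phiNeg_mul_inv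

lemma hVC : Vs * expand 3 phiNeg = phiNeg^4 := by
  simp only [Vs]
  linear_combination -hstar

lemma hVC3 : Vs^3 * (expand 3 phiNeg)^3 = phiNeg^12 := by
  calc Vs^3 * (expand 3 phiNeg)^3 = (Vs * expand 3 phiNeg)^3 := by ring
    _ = (phiNeg^4)^3 := by rw [hVC]
    _ = phiNeg^12 := by ring

lemma hEV : expand 3 (Vs^3) = ((expand 9 phiNeg)^3 - 8*(X^3*(expand 3 Bser)^3))^3 := by
  simp only [Vs, expand3_pow, expand_sub, expand3_mul, expand_X, expand_expand]
  rw [expand_ofNat]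

lemma hPg : phiNeg * ((expand 9 phiNeg)^2 + 2*(X*expand 3 Bser)*(expand 9 phiNeg)
    + 4*(X*expand 3 Bser)^2) = (expand 9 phiNeg)^3 - 8*(X^3*(expand 3 Bser)^3) := by
  linear_combination ((expand 9 phiNeg)^2 + 2*(X*expand 3 Bser)*(expand 9 phiNeg)
    + 4*(X*expand 3 Bser)^2) * hD

lemma s1xi : xi^3 * expand 3 (Vs^3)
    = (expand 9 phiNeg)^3 * ((expand 9 phiNeg)^2 + 2*(X*expand 3 Bser)*(expand 9 phiNeg)
      + 4*(X*expand 3 Bser)^2)^3 := by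
  have hx : xi = expand 9 phiNeg * phiNegInv := rfl
  rw [hEV, ← hPg, hx]
  have h := phiNeg_mul_inv
  linear_combination ((expand 9 phiNeg)^3 * ((expand 9 phiNeg)^2
    + 2*(X*expand 3 Bser)*(expand 9 phiNeg) + 4*(X*expand 3 Bser)^2)^3
    * ((phiNeg*phiNegInv)^2 + phiNeg*phiNegInv + 1)) * h

lemma s2xi : expand 3 (Vs^3) * expand 3 (Vin^3) = 1 := by
  rw [← expand3_mul, show Vs^3*Vin^3 = (Vs*Vin)^3 from by ring, hVVi, one_pow, expand_one]

lemma s3xi : xi^3 = ((_root_.expand 9 phiNeg)^3 * ((_root_.expand 9 phiNeg)^2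
    + 2*(X*_root_.expand 3 Bser)*(_root_.expand 9 phiNeg) + 4*(X*_root_.expand 3 Bser)^2)^3)
      * _root_.expand 3 (Vin^3) := by
  calc xi^3 = xi^3 * (_root_.expand 3 (Vs^3) * _root_.expand 3 (Vin^3)) := by rw [s2xi, mul_one]
    _ = (xi^3 * _root_.expand 3 (Vs^3)) * _root_.expand 3 (Vin^3) := by ring
    _ = _ := by rw [s1xi]

lemma s4xi : xi^3 = _root_.expand 3 ((_root_.expand 3 phiNeg)^9 * Vin^3)
    + X^3 * _root_.expand 3 (56 * (Bser^3 * ((_root_.expand 3 phiNeg)^6 * Vin^3)))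
    + X^6 * _root_.expand 3 (64 * (Bser^6 * ((_root_.expand 3 phiNeg)^3 * Vin^3)))
    + (X^1 * _root_.expand 3 (6 * (Bser * ((_root_.expand 3 phiNeg)^8 * Vin^3)))
      + X^2 * _root_.expand 3 (24 * (Bser^2 * ((_root_.expand 3 phiNeg)^7 * Vin^3)))
      + X^4 * _root_.expand 3 (96 * (Bser^4 * ((_root_.expand 3 phiNeg)^5 * Vin^3)))
      + X^5 * _root_.expand 3 (96 * (Bser^5 * ((_root_.expand 3 phiNeg)^4 * Vin^3)))) := by
  rw [s3xi]
  simp only [expand3_mul, expand3_pow, expand_expand]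
  rw [expand_ofNat, expand_ofNat, expand_ofNat, expand_ofNat, expand_ofNat]
  ring

lemma s5xi : U (xi^3) = ((expand 3 phiNeg)^9 + 56*(X*Bser^3)*(expand 3 phiNeg)^6
    + 64*(X*Bser^3)^2*(expand 3 phiNeg)^3) * Vin^3 := by
  rw [s4xi]
  simp only [U_add]
  rw [U_expand3, U_X_expand_3, U_X_expand_6,
    U_X_expand_ndvd 1 (by norm_num), U_X_expand_ndvd 2 (by norm_num),
    U_X_expand_ndvd 4 (by norm_num), U_X_expand_ndvd 5 (by norm_num)]
  ring

lemma final_assembly : U (xi ^ 3) = xi - 12 * xi ^ 2 + 66 * xi ^ 3 - 216 * xi ^ 4 + 486 * xi ^ 5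
    - 810 * xi ^ 6 + 972 * xi ^ 7 - 729 * xi ^ 8 + 243 * xi ^ 9 := by
  have hxidef : xi = expand 9 phiNeg * phiNegInv := rfl
  have cM : constantCoeff (Vs^3*phiNeg^9*(expand 3 phiNeg)^3) = 1 := by
    have h1 := cVs
    have h2 := constCoeff_phiNeg
    have h3 := constC3
    simp [map_mul, map_pow, h1, h2, h3]
  have hMne : (Vs^3*phiNeg^9*(expand 3 phiNeg)^3) ≠ 0 := by
    intro h0
    rw [h0] at cM
    simp at cM
  refine mul_right_cancel₀ hMne ?_
  have t1 : xi * (Vs^3*phiNeg^9*(expand 3 phiNeg)^3) = (expand 9 phiNeg)^1 * phiNeg^20 := by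
    calc xi * (Vs^3*phiNeg^9*(expand 3 phiNeg)^3)
        = (expand 9 phiNeg)^1 * (phiNegInv*phiNeg)^1 * phiNeg^8 * (Vs^3*(expand 3 phiNeg)^3) := by
          rw [hxidef]; ring
      _ = (expand 9 phiNeg)^1 * phiNeg^20 := by rw [hPP, one_pow, hVC3]; ring
  have t2 : xi^2 * (Vs^3*phiNeg^9*(expand 3 phiNeg)^3) = (expand 9 phiNeg)^2 * phiNeg^19 := by
    calc xi^2 * (Vs^3*phiNeg^9*(expand 3 phiNeg)^3)
        = (expand 9 phiNeg)^2 * (phiNegInv*phiNeg)^2 * phiNeg^7 * (Vs^3*(expand 3 phiNeg)^3) := by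
          rw [hxidef]; ring
      _ = (expand 9 phiNeg)^2 * phiNeg^19 := by rw [hPP, one_pow, hVC3]; ring
  have t3 : xi^3 * (Vs^3*phiNeg^9*(expand 3 phiNeg)^3) = (expand 9 phiNeg)^3 * phiNeg^18 := by
    calc xi^3 * (Vs^3*phiNeg^9*(expand 3 phiNeg)^3)
        = (expand 9 phiNeg)^3 * (phiNegInv*phiNeg)^3 * phiNeg^6 * (Vs^3*(expand 3 phiNeg)^3) := by
          rw [hxidef]; ring
      _ = (expand 9 phiNeg)^3 * phiNeg^18 := by rw [hPP, one_pow, hVC3]; ring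
  have t4 : xi^4 * (Vs^3*phiNeg^9*(expand 3 phiNeg)^3) = (expand 9 phiNeg)^4 * phiNeg^17 := by
    calc xi^4 * (Vs^3*phiNeg^9*(expand 3 phiNeg)^3)
        = (expand 9 phiNeg)^4 * (phiNegInv*phiNeg)^4 * phiNeg^5 * (Vs^3*(expand 3 phiNeg)^3) := by
          rw [hxidef]; ring
      _ = (expand 9 phiNeg)^4 * phiNeg^17 := by rw [hPP, one_pow, hVC3]; ring
  have t5 : xi^5 * (Vs^3*phiNeg^9*(expand 3 phiNeg)^3) = (expand 9 phiNeg)^5 * phiNeg^16 := by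
    calc xi^5 * (Vs^3*phiNeg^9*(expand 3 phiNeg)^3)
        = (expand 9 phiNeg)^5 * (phiNegInv*phiNeg)^5 * phiNeg^4 * (Vs^3*(expand 3 phiNeg)^3) := by
          rw [hxidef]; ring
      _ = (expand 9 phiNeg)^5 * phiNeg^16 := by rw [hPP, one_pow, hVC3]; ring
  have t6 : xi^6 * (Vs^3*phiNeg^9*(expand 3 phiNeg)^3) = (expand 9 phiNeg)^6 * phiNeg^15 := by
    calc xi^6 * (Vs^3*phiNeg^9*(expand 3 phiNeg)^3)
        = (expand 9 phiNeg)^6 * (phiNegInv*phiNeg)^6 * phiNeg^3 * (Vs^3*(expand 3 phiNeg)^3) := by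
          rw [hxidef]; ring
      _ = (expand 9 phiNeg)^6 * phiNeg^15 := by rw [hPP, one_pow, hVC3]; ring
  have t7 : xi^7 * (Vs^3*phiNeg^9*(expand 3 phiNeg)^3) = (expand 9 phiNeg)^7 * phiNeg^14 := by
    calc xi^7 * (Vs^3*phiNeg^9*(expand 3 phiNeg)^3)
        = (expand 9 phiNeg)^7 * (phiNegInv*phiNeg)^7 * phiNeg^2 * (Vs^3*(expand 3 phiNeg)^3) := by
          rw [hxidef]; ring
      _ = (expand 9 phiNeg)^7 * phiNeg^14 := by rw [hPP, one_pow, hVC3]; ring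
  have t8 : xi^8 * (Vs^3*phiNeg^9*(expand 3 phiNeg)^3) = (expand 9 phiNeg)^8 * phiNeg^13 := by
    calc xi^8 * (Vs^3*phiNeg^9*(expand 3 phiNeg)^3)
        = (expand 9 phiNeg)^8 * (phiNegInv*phiNeg)^8 * phiNeg^1 * (Vs^3*(expand 3 phiNeg)^3) := by
          rw [hxidef]; ring
      _ = (expand 9 phiNeg)^8 * phiNeg^13 := by rw [hPP, one_pow, hVC3]; ring
  have t9 : xi^9 * (Vs^3*phiNeg^9*(expand 3 phiNeg)^3) = (expand 9 phiNeg)^9 * phiNeg^12 := by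
    calc xi^9 * (Vs^3*phiNeg^9*(expand 3 phiNeg)^3)
        = (expand 9 phiNeg)^9 * (phiNegInv*phiNeg)^9 * phiNeg^0 * (Vs^3*(expand 3 phiNeg)^3) := by
          rw [hxidef]; ring
      _ = (expand 9 phiNeg)^9 * phiNeg^12 := by rw [hPP, one_pow, hVC3]; ring
  have hL1 : U (xi^3) * (Vs^3*phiNeg^9*(expand 3 phiNeg)^3)
      = ((expand 3 phiNeg)^9 + 56*(X*Bser^3)*(expand 3 phiNeg)^6
          + 64*(X*Bser^3)^2*(expand 3 phiNeg)^3) * phiNeg^9 * (expand 3 phiNeg)^3 := by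
    rw [s5xi]
    calc (((expand 3 phiNeg)^9 + 56*(X*Bser^3)*(expand 3 phiNeg)^6
          + 64*(X*Bser^3)^2*(expand 3 phiNeg)^3) * Vin^3) * (Vs^3*phiNeg^9*(expand 3 phiNeg)^3)
        = ((expand 3 phiNeg)^9 + 56*(X*Bser^3)*(expand 3 phiNeg)^6
          + 64*(X*Bser^3)^2*(expand 3 phiNeg)^3) * phiNeg^9 * (expand 3 phiNeg)^3
          * (Vs*Vin)^3 := by ring
      _ = _ := by rw [hVVi]; ring
  have hL2 : ((expand 3 phiNeg)^9 + 56*(X*Bser^3)*(expand 3 phiNeg)^6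
          + 64*(X*Bser^3)^2*(expand 3 phiNeg)^3) * phiNeg^9 * (expand 3 phiNeg)^3
      = (((expand 3 phiNeg)^4)^3
          + 7*((expand 3 phiNeg)^4 - phiNeg^4)*((expand 3 phiNeg)^4)^2
          + ((expand 3 phiNeg)^4 - phiNeg^4)^2*((expand 3 phiNeg)^4)) * phiNeg^9 := by
    linear_combination (phiNeg^9 * (7*((expand 3 phiNeg)^4)^2
      + (expand 3 phiNeg)^4*(8*(X*(Bser^3*expand 3 phiNeg)) + (expand 3 phiNeg)^4
        - phiNeg^4))) * hstar
  have hmain : (((expand 3 phiNeg)^4)^3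
          + 7*((expand 3 phiNeg)^4 - phiNeg^4)*((expand 3 phiNeg)^4)^2
          + ((expand 3 phiNeg)^4 - phiNeg^4)^2*((expand 3 phiNeg)^4)) * phiNeg^9
      = ((expand 9 phiNeg)^1*phiNeg^20) - 12*((expand 9 phiNeg)^2*phiNeg^19) + 66*((expand 9 phiNeg)^3*phiNeg^18) - 216*((expand 9 phiNeg)^4*phiNeg^17) + 486*((expand 9 phiNeg)^5*phiNeg^16) - 810*((expand 9 phiNeg)^6*phiNeg^15) + 972*((expand 9 phiNeg)^7*phiNeg^14) - 729*((expand 9 phiNeg)^8*phiNeg^13) + 243*((expand 9 phiNeg)^9*phiNeg^12) := by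
    have hDl := hD
    rw [hstar3]
    set Q := expand 9 phiNeg with hQdef
    rw [hDl]
    ring
  have hR : (xi - 12 * xi ^ 2 + 66 * xi ^ 3 - 216 * xi ^ 4 + 486 * xi ^ 5
      - 810 * xi ^ 6 + 972 * xi ^ 7 - 729 * xi ^ 8 + 243 * xi ^ 9) * (Vs^3*phiNeg^9*(expand 3 phiNeg)^3)
      = ((expand 9 phiNeg)^1*phiNeg^20) - 12*((expand 9 phiNeg)^2*phiNeg^19) + 66*((expand 9 phiNeg)^3*phiNeg^18) - 216*((expand 9 phiNeg)^4*phiNeg^17) + 486*((expand 9 phiNeg)^5*phiNeg^16) - 810*((expand 9 phiNeg)^6*phiNeg^15) + 972*((expand 9 phiNeg)^7*phiNeg^14) - 729*((expand 9 phiNeg)^8*phiNeg^13) + 243*((expand 9 phiNeg)^9*phiNeg^12) := by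
    rw [show (xi - 12 * xi ^ 2 + 66 * xi ^ 3 - 216 * xi ^ 4 + 486 * xi ^ 5
      - 810 * xi ^ 6 + 972 * xi ^ 7 - 729 * xi ^ 8 + 243 * xi ^ 9) * (Vs^3*phiNeg^9*(expand 3 phiNeg)^3)
        = (xi * (Vs^3*phiNeg^9*(expand 3 phiNeg)^3)) - 12*(xi^2 * (Vs^3*phiNeg^9*(expand 3 phiNeg)^3)) + 66*(xi^3 * (Vs^3*phiNeg^9*(expand 3 phiNeg)^3)) - 216*(xi^4 * (Vs^3*phiNeg^9*(expand 3 phiNeg)^3)) + 486*(xi^5 * (Vs^3*phiNeg^9*(expand 3 phiNeg)^3)) - 810*(xi^6 * (Vs^3*phiNeg^9*(expand 3 phiNeg)^3)) + 972*(xi^7 * (Vs^3*phiNeg^9*(expand 3 phiNeg)^3)) - 729*(xi^8 * (Vs^3*phiNeg^9*(expand 3 phiNeg)^3)) + 243*(xi^9 * (Vs^3*phiNeg^9*(expand 3 phiNeg)^3)) from by ring, t1, t2, t3, t4, t5, t6, t7, t8, t9]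
  rw [hL1, hL2, hmain, hR]

end UXC

theorem U_xi_cube :
    U (xi ^ 3) = xi - 12 * xi ^ 2 + 66 * xi ^ 3 - 216 * xi ^ 4 + 486 * xi ^ 5
      - 810 * xi ^ 6 + 972 * xi ^ 7 - 729 * xi ^ 8 + 243 * xi ^ 9 :=
  UXC.final_assembly
end

section
/- Let ξ(q) := φ(-q⁹)/φ(-q), U the 3-dissection operator (U(Σ aₙqⁿ) = Σ a_{3n}qⁿ), and 𝒳ᵢ := U(ξⁱ). Then for every i ≥ 3, 𝒳ᵢ = (ξ - 3ξ² + 3ξ³)(3𝒳_{i-1} - 3𝒳_{i-2} + 𝒳_{i-3}). -/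
open PowerSeries

/-- sign (-1)^k for k : ℤ -/
def sgn (k : ℤ) : ℤ := if Even k then 1 else -1

lemma sgn_mul_sgn (j k : ℤ) : sgn j * sgn k = sgn (j + k) := by
  unfold sgn
  rcases Int.even_or_odd j with hj | hj <;> rcases Int.even_or_odd k with hk | hk
  · rw [if_pos hj, if_pos hk, if_pos (hj.add hk), one_mul]
  · rw [if_pos hj, if_neg (by simpa [Int.even_add, hj] using (by simp [Int.not_even_iff_odd, hk] : ¬ Even k)),
      if_neg (by simp [Int.even_add, hj, Int.not_even_iff_odd.mpr hk]), one_mul]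
  · rw [if_neg (Int.not_even_iff_odd.mpr hj), if_pos hk,
      if_neg (by simp [Int.even_add, hk, Int.not_even_iff_odd.mpr hj]), neg_one_mul]
  · rw [if_neg (Int.not_even_iff_odd.mpr hj), if_neg (Int.not_even_iff_odd.mpr hk),
      if_pos (Int.even_add.mpr (iff_of_false (Int.not_even_iff_odd.mpr hj)
        (Int.not_even_iff_odd.mpr hk)))]
    norm_num

lemma sgn_congr {a b : ℤ} (h : a % 2 = b % 2) : sgn a = sgn b := by
  unfold sgn
  have : Even a ↔ Even b := by rw [Int.even_iff, Int.even_iff, h]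
  by_cases h1 : Even a
  · rw [if_pos h1, if_pos (this.mp h1)]
  · rw [if_neg h1, if_neg (fun hb => h1 (this.mpr hb))]

structure ThRep (α : Type) (f : PowerSeries ℤ) where
  S : ℕ → Finset α
  c : α → ℤ
  E : α → ℕ
  mono : ∀ ⦃m n : ℕ⦄, m ≤ n → S m ⊆ S n
  supp : ∀ ⦃x : α⦄ ⦃n : ℕ⦄, E x ≤ n → x ∈ S n
  coeff_eq : ∀ n, PowerSeries.coeff n f = ∑ x ∈ S n, if E x = n then c x else 0

namespace ThRep

variable {α β : Type} {f g : PowerSeries ℤ}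

lemma sum_box (hf : ThRep α f) {n N : ℕ} (h : n ≤ N) :
    PowerSeries.coeff n f = ∑ x ∈ hf.S N, if hf.E x = n then hf.c x else 0 := by
  rw [hf.coeff_eq n]
  apply Finset.sum_subset (hf.mono h)
  intro x _ hnx
  rw [if_neg]
  intro hE
  exact hnx (hf.supp hE.le)

noncomputable def mul (hf : ThRep α f) (hg : ThRep β g) : ThRep (α × β) (f * g) where
  S n := hf.S n ×ˢ hg.S n
  c p := hf.c p.1 * hg.c p.2
  E p := hf.E p.1 + hg.E p.2
  mono := fun m n h => Finset.product_subset_product (hf.mono h) (hg.mono h)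
  supp := fun x n h => Finset.mem_product.2
    ⟨hf.supp (le_trans (Nat.le_add_right _ _) h), hg.supp (le_trans (Nat.le_add_left _ _) h)⟩
  coeff_eq := by
    intro n
    rw [PowerSeries.coeff_mul]
    have step : ∀ p ∈ Finset.HasAntidiagonal.antidiagonal n,
        (PowerSeries.coeff p.1 f) * (PowerSeries.coeff p.2 g) =
        ∑ x ∈ hf.S n, ∑ y ∈ hg.S n,
          (if hf.E x = p.1 then hf.c x else 0) * (if hg.E y = p.2 then hg.c y else 0) := by
      intro p hp
      rw [Finset.HasAntidiagonal.mem_antidiagonal] at hp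
      rw [hf.sum_box (show p.1 ≤ n by omega), hg.sum_box (show p.2 ≤ n by omega),
        Finset.sum_mul_sum]
    rw [Finset.sum_congr rfl step, Finset.sum_comm, Finset.sum_product]
    apply Finset.sum_congr rfl
    intro x _
    rw [Finset.sum_comm]
    apply Finset.sum_congr rfl
    intro y _
    have key : ∀ p : ℕ × ℕ,
        (if hf.E x = p.1 then hf.c x else 0) * (if hg.E y = p.2 then hg.c y else 0) =
        if p = (hf.E x, hg.E y) then hf.c x * hg.c y else 0 := by
      intro p
      obtain ⟨p1, p2⟩ := p
      by_cases h1 : hf.E x = p1 <;> by_cases h2 : hg.E y = p2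
      · subst h1; subst h2; simp
      · rw [if_neg h2, mul_zero, if_neg (fun h => h2 (congrArg Prod.snd h).symm)]
      · rw [if_neg h1, zero_mul, if_neg (fun h => h1 (congrArg Prod.fst h).symm)]
      · rw [if_neg h1, zero_mul, if_neg (fun h => h1 (congrArg Prod.fst h).symm)]
    rw [Finset.sum_congr rfl fun p _ => key p, Finset.sum_ite_eq' (Finset.HasAntidiagonal.antidiagonal n)]
    simp [Finset.HasAntidiagonal.mem_antidiagonal, eq_comm]

end ThRep


namespace ThRep
variable {α β : Type} {f g : PowerSeries ℤ}


noncomputable def expandRep (d : ℕ) (hd : 0 < d) (hf : ThRep α f) : ThRep α (expand d f) where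
  S := hf.S
  c := hf.c
  E x := d * hf.E x
  mono := hf.mono
  supp := fun x n h => hf.supp (le_trans (Nat.le_mul_of_pos_left _ hd) h)
  coeff_eq := by
    intro n
    show (PowerSeries.coeff n) (PowerSeries.mk _) = _
    rw [PowerSeries.coeff_mk]
    by_cases hdn : d ∣ n
    · rw [if_pos hdn]
      obtain ⟨m, rfl⟩ := hdn
      rw [Nat.mul_div_cancel_left m hd]
      rw [hf.sum_box (show m ≤ d * m from Nat.le_mul_of_pos_left m hd)]
      apply Finset.sum_congr rfl
      intro x _
      congr 1
      simp only [eq_iff_iff]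
      constructor
      · rintro rfl; rfl
      · intro h; exact Nat.eq_of_mul_eq_mul_left hd h
    · rw [if_neg hdn]
      symm
      apply Finset.sum_eq_zero
      intro x _
      rw [if_neg]
      intro h
      exact hdn ⟨hf.E x, h.symm⟩

noncomputable def xmul (hf : ThRep α f) : ThRep α (PowerSeries.X * f) where
  S := hf.S
  c := hf.c
  E x := hf.E x + 1
  mono := hf.mono
  supp := fun x n h => hf.supp (Nat.le_of_succ_le h)
  coeff_eq := by
    intro n
    match n with
    | 0 =>
      rw [PowerSeries.coeff_zero_eq_constantCoeff]
      simp only [map_mul, constantCoeff_X, zero_mul]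
      symm
      apply Finset.sum_eq_zero
      intro x _
      rw [if_neg (by omega)]
    | (m+1) =>
      rw [PowerSeries.coeff_succ_X_mul, hf.sum_box (Nat.le_succ m)]
      apply Finset.sum_congr rfl
      intro x _
      congr 1
      simp only [eq_iff_iff]
      omega

noncomputable def base (a : ℤ → ℤ) (En : ℤ → ℕ) (hE : ∀ k : ℤ, k.natAbs ≤ En k) :
    ThRep ℤ (PowerSeries.mk fun n => ∑ k ∈ Finset.Icc (-(n : ℤ)) n, if En k = n then a k else 0) where
  S n := Finset.Icc (-(n : ℤ)) n
  c := a
  E := En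
  mono := by
    intro m n h
    apply Finset.Icc_subset_Icc <;> push_cast <;> omega
  supp := by
    intro x n h
    have := hE x
    simp only [Finset.mem_Icc]
    omega
  coeff_eq := by intro n; rw [PowerSeries.coeff_mk]

end ThRep


lemma natAbs_sq_toNat (k : ℤ) : (k*k).toNat = k.natAbs * k.natAbs := by
  rw [← Int.natAbs_mul_self' k, ← Nat.cast_mul, Int.toNat_natCast]

lemma natAbs_le_sq_toNat (k : ℤ) : k.natAbs ≤ (k*k).toNat := by
  rw [natAbs_sq_toNat]
  rcases Nat.eq_zero_or_pos k.natAbs with h | h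
  · omega
  · exact Nat.le_mul_of_pos_left _ h

lemma sq_toNat_eq (k : ℤ) (n : ℕ) : ((k*k).toNat = n) ↔ k*k = (n:ℤ) := by
  have := mul_self_nonneg k
  omega

lemma sgn_neg (k : ℤ) : sgn (-k) = sgn k := by
  unfold sgn
  simp [even_neg]

lemma sgn_natCast (s : ℕ) : sgn (s : ℤ) = (-1) ^ s := by
  unfold sgn
  rcases Nat.even_or_odd s with h | h
  · rw [if_pos (by exact_mod_cast h.natCast), h.neg_one_pow]
  · rw [if_neg (by simpa [Int.even_coe_nat] using Nat.not_even_iff_odd.mpr h), h.neg_one_pow]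

noncomputable def phiRep : ThRep ℤ phiNeg where
  S n := Finset.Icc (-(n : ℤ)) n
  c := sgn
  E k := (k*k).toNat
  mono := by
    intro m n h
    apply Finset.Icc_subset_Icc <;> push_cast <;> omega
  supp := by
    intro x n h
    have h2 := natAbs_le_sq_toNat x
    have h' : (x*x).toNat ≤ n := h
    simp only [Finset.mem_Icc]
    omega
  coeff_eq := by
    intro n
    show (PowerSeries.coeff n) (PowerSeries.mk _) = _
    rw [PowerSeries.coeff_mk]
    by_cases h0 : n = 0
    · subst h0
      rw [if_pos rfl]
      simp [sgn]
    · rw [if_neg h0]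
      rw [← Finset.sum_filter]
      by_cases hs : Nat.sqrt n ^ 2 = n
      · rw [if_pos hs]
        have hspos : 0 < Nat.sqrt n := by
          rcases Nat.eq_zero_or_pos (Nat.sqrt n) with h | h
          · exfalso; rw [h] at hs; simp at hs; omega
          · exact h
        have hss : Nat.sqrt n * Nat.sqrt n = n := by conv_rhs => rw [← hs, pow_two]
        have hsle : Nat.sqrt n ≤ n := le_trans (Nat.le_mul_of_pos_left _ hspos) hss.le
        have hset : (Finset.Icc (-(n:ℤ)) n).filter (fun k => (k*k).toNat = n)
            = {(Nat.sqrt n : ℤ), -(Nat.sqrt n : ℤ)} := by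
          ext k
          simp only [Finset.mem_filter, Finset.mem_Icc, Finset.mem_insert, Finset.mem_singleton]
          constructor
          · rintro ⟨-, hk⟩
            rw [natAbs_sq_toNat] at hk
            have : k.natAbs = Nat.sqrt n := by rw [← hk, Nat.sqrt_eq]
            rcases Int.natAbs_eq k with h | h <;> rw [this] at h <;> [left; right] <;> omega
          · rintro (rfl | rfl)
            · refine ⟨⟨by push_cast; omega, by push_cast; omega⟩, ?_⟩
              rw [natAbs_sq_toNat]
              simp [hss]
            · refine ⟨⟨by push_cast; omega, by push_cast; omega⟩, ?_⟩
              rw [natAbs_sq_toNat]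
              simp [hss]
        rw [hset, Finset.sum_pair (by push_cast; omega : (Nat.sqrt n : ℤ) ≠ -(Nat.sqrt n : ℤ))]
        rw [sgn_neg, sgn_natCast]
        ring
      · rw [if_neg hs]
        symm
        apply Finset.sum_eq_zero
        intro k hk
        rw [Finset.mem_filter] at hk
        exfalso
        obtain ⟨-, hkk⟩ := hk
        rw [sq_toNat_eq] at hkk
        have habs : k.natAbs * k.natAbs = n := by
          have h2 : (k.natAbs : ℤ) * k.natAbs = n := by rw [Int.natAbs_mul_self' k]; exact hkk
          exact_mod_cast h2
        apply hs
        rw [← habs, Nat.sqrt_eq]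
        ring


lemma coeff_expand (d : ℕ) (f : PowerSeries ℤ) (n : ℕ) :
    PowerSeries.coeff n (expand d f) = if d ∣ n then PowerSeries.coeff (n / d) f else 0 := by
  unfold _root_.expand; rw [PowerSeries.coeff_mk]

lemma coeff_U (f : PowerSeries ℤ) (n : ℕ) :
    PowerSeries.coeff n (U f) = PowerSeries.coeff (3*n) f := by
  unfold U; rw [PowerSeries.coeff_mk]

lemma U_add (f g : PowerSeries ℤ) : U (f + g) = U f + U g := by
  ext n; simp [coeff_U, map_add]

lemma U_sub (f g : PowerSeries ℤ) : U (f - g) = U f - U g := by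
  ext n; simp [coeff_U, map_sub]

lemma U_smul (c : ℤ) (f : PowerSeries ℤ) : U (c • f) = c • U f := by
  ext n; simp only [map_zsmul, coeff_U, smul_eq_mul]

lemma U_expand (f : PowerSeries ℤ) : U (expand 3 f) = f := by
  ext n; rw [coeff_U, coeff_expand, if_pos ⟨n, rfl⟩, Nat.mul_div_cancel_left n (by norm_num)]

lemma expand_add (d : ℕ) (f g : PowerSeries ℤ) :
    expand d (f + g) = expand d f + expand d g := by
  ext n; simp only [coeff_expand, map_add]
  split <;> simp

lemma expand_sub (d : ℕ) (f g : PowerSeries ℤ) :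
    expand d (f - g) = expand d f - expand d g := by
  ext n; simp only [coeff_expand, map_sub]
  split <;> simp

lemma expand_smul (d : ℕ) (c : ℤ) (f : PowerSeries ℤ) :
    expand d (c • f) = c • expand d f := by
  ext n; simp only [coeff_expand, map_zsmul, smul_eq_mul]
  split <;> simp

lemma expand_one (d : ℕ) (hd : 0 < d) : expand d 1 = 1 := by
  ext n
  simp only [coeff_expand, PowerSeries.coeff_one]
  by_cases h : d ∣ n
  · obtain ⟨m, rfl⟩ := h
    rw [if_pos ⟨m, rfl⟩, Nat.mul_div_cancel_left m hd]
    by_cases hm : m = 0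
    · subst hm; rw [if_pos rfl, if_pos (by simp)]
    · rw [if_neg hm, if_neg (Nat.mul_ne_zero (by omega) hm)]
  · rw [if_neg h, if_neg (by rintro rfl; exact h ⟨0, by simp⟩)]

lemma expand_mul (d : ℕ) (hd : 0 < d) (f g : PowerSeries ℤ) :
    expand d (f * g) = expand d f * expand d g := by
  ext n
  have hrhs : PowerSeries.coeff n (expand d f * expand d g) =
      ∑ k ∈ (Finset.range (n+1)).filter (fun k => d ∣ k ∧ d ∣ (n - k)),
        PowerSeries.coeff (k/d) f * PowerSeries.coeff ((n-k)/d) g := by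
    rw [PowerSeries.coeff_mul, Finset.Nat.sum_antidiagonal_eq_sum_range_succ_mk]
    have hco : ∀ k, PowerSeries.coeff k (expand d f) * PowerSeries.coeff (n-k) (expand d g)
        = (if d ∣ k ∧ d ∣ (n - k) then
            PowerSeries.coeff (k/d) f * PowerSeries.coeff ((n-k)/d) g else 0) := by
      intro k
      rw [coeff_expand, coeff_expand]
      by_cases h1 : d ∣ k <;> by_cases h2 : d ∣ (n - k) <;> simp [h1, h2]
    rw [Finset.sum_congr rfl (fun k _ => hco k), ← Finset.sum_filter]
  rw [hrhs, coeff_expand]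
  by_cases h : d ∣ n
  · obtain ⟨m, rfl⟩ := h
    rw [if_pos ⟨m, rfl⟩, Nat.mul_div_cancel_left m hd, PowerSeries.coeff_mul,
      Finset.Nat.sum_antidiagonal_eq_sum_range_succ_mk]
    apply Finset.sum_nbij' (i := fun k => d * k) (j := fun k => k / d)
    · intro k hk
      simp only [Finset.mem_range] at hk
      simp only [Finset.mem_filter, Finset.mem_range]
      exact ⟨by have := Nat.mul_le_mul_left d (show k ≤ m by omega); omega,
        ⟨k, rfl⟩, ⟨m - k, by rw [Nat.mul_sub]⟩⟩
    · intro k hk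
      simp only [Finset.mem_filter, Finset.mem_range] at hk
      simp only [Finset.mem_range]
      obtain ⟨hk1, ⟨j, rfl⟩, -⟩ := hk
      rw [Nat.mul_div_cancel_left j hd]
      by_contra hc
      have : d * m < d * j := Nat.mul_lt_mul_of_le_of_lt (le_refl d) (by omega) hd
      omega
    · intro k hk
      rw [Nat.mul_div_cancel_left k hd]
    · intro k hk
      simp only [Finset.mem_filter, Finset.mem_range] at hk
      obtain ⟨-, ⟨j, rfl⟩, -⟩ := hk
      rw [Nat.mul_div_cancel_left j hd]
    · intro k hk
      rw [Nat.mul_div_cancel_left k hd, ← Nat.mul_sub, Nat.mul_div_cancel_left (m-k) hd]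
  · rw [if_neg h]
    symm
    apply Finset.sum_eq_zero
    intro k hk
    simp only [Finset.mem_filter, Finset.mem_range] at hk
    exfalso
    obtain ⟨hk1, h1, h2⟩ := hk
    exact h (by
      have hn : n = k + (n - k) := by omega
      rw [hn]; exact Nat.dvd_add h1 h2)

lemma expand_pow (d : ℕ) (hd : 0 < d) (f : PowerSeries ℤ) (k : ℕ) :
    expand d (f ^ k) = (expand d f) ^ k := by
  induction k with
  | zero => simpa using expand_one d hd
  | succ k ih => rw [pow_succ, expand_mul d hd, ih, pow_succ]

lemma expand_expand (a b : ℕ) (ha : 0 < a) (hb : 0 < b) (f : PowerSeries ℤ) :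
    expand a (expand b f) = expand (b*a) f := by
  ext n
  simp only [coeff_expand]
  by_cases h : a ∣ n
  · rw [if_pos h]
    by_cases h2 : b ∣ n / a
    · rw [if_pos h2, if_pos (by rw [Nat.dvd_div_iff_mul_dvd h] at h2; rwa [Nat.mul_comm b a]),
        Nat.div_div_eq_div_mul, Nat.mul_comm a b]
    · rw [if_neg h2, if_neg (by
        rw [Nat.dvd_div_iff_mul_dvd h] at h2
        intro hc; exact h2 (by rwa [Nat.mul_comm a b]))]
  · rw [if_neg h, if_neg (fun hc => h (dvd_trans (Dvd.intro_left b rfl) hc))]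

lemma expand_X (d : ℕ) (hd : 0 < d) : expand d PowerSeries.X = PowerSeries.X ^ d := by
  ext n
  rw [coeff_expand, PowerSeries.coeff_X_pow]
  by_cases h : d ∣ n
  · obtain ⟨m, rfl⟩ := h
    rw [if_pos ⟨m, rfl⟩, Nat.mul_div_cancel_left m hd, PowerSeries.coeff_X]
    by_cases h2 : m = 1
    · subst h2; rw [if_pos rfl, if_pos (by omega)]
    · rw [if_neg h2, if_neg (by
        intro hc
        exact h2 (by
          have : d * m = d * 1 := by omega
          exact Nat.eq_of_mul_eq_mul_left hd this))]
  · rw [if_neg h, if_neg (by rintro rfl; exact h ⟨1, by omega⟩)]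

lemma U_mul_expand (f g : PowerSeries ℤ) : U (expand 3 f * g) = f * U g := by
  ext n
  rw [coeff_U, PowerSeries.coeff_mul, Finset.Nat.sum_antidiagonal_eq_sum_range_succ_mk,
    PowerSeries.coeff_mul, Finset.Nat.sum_antidiagonal_eq_sum_range_succ_mk]
  have hco : ∀ k, PowerSeries.coeff k (expand 3 f) * PowerSeries.coeff (3*n-k) g
      = (if 3 ∣ k then PowerSeries.coeff (k/3) f * PowerSeries.coeff (3*n-k) g else 0) := by
    intro k
    rw [coeff_expand]
    by_cases h1 : 3 ∣ k <;> simp [h1]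
  rw [Finset.sum_congr rfl (fun k _ => hco k), ← Finset.sum_filter]
  symm
  apply Finset.sum_nbij' (i := fun k => 3 * k) (j := fun k => k / 3)
  · intro k hk
    simp only [Finset.mem_range] at hk
    simp only [Finset.mem_filter, Finset.mem_range]
    omega
  · intro k hk
    simp only [Finset.mem_filter, Finset.mem_range] at hk
    simp only [Finset.mem_range]
    omega
  · intro k _
    show 3 * k / 3 = k
    omega
  · intro k hk
    simp only [Finset.mem_filter, Finset.mem_range] at hk
    show 3 * (k / 3) = k
    omega
  · intro k hk
    simp only [Finset.mem_range] at hk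
    show _ = PowerSeries.coeff (3*k/3) f * _
    rw [Nat.mul_div_cancel_left k (by norm_num), coeff_U]
    have h3 : 3 * (n - k) = 3 * n - 3 * k := by omega
    rw [h3]



lemma sgn_opp {a b : ℤ} (h : (a + b) % 2 = 1) : sgn a = - sgn b := by
  unfold sgn
  rcases Int.even_or_odd a with ha | ha <;> rcases Int.even_or_odd b with hb | hb
  · exfalso; have h2 := ha.add hb; rw [Int.even_iff] at h2; omega
  · rw [if_pos ha, if_neg (Int.not_even_iff_odd.mpr hb)]; norm_num
  · rw [if_neg (Int.not_even_iff_odd.mpr ha), if_pos hb]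
  · exfalso
    have heven : Even (a + b) := ha.add_odd hb
    rw [Int.even_iff] at heven
    omega

abbrev T4 := (ℤ × ℤ) × (ℤ × ℤ)

def Q4 (x : T4) : ℤ := x.1.1*x.1.1 + x.1.2*x.1.2 + x.2.1*x.2.1 + x.2.2*x.2.2
def X4 (x : T4) : ℤ := x.1.1 + x.1.2 + x.2.1 + x.2.2
def QT (x : T4) : ℤ := 1 + 3*(x.1.1*x.1.1) + 2*x.1.1 + 3*(x.1.2*x.1.2) + 2*x.1.2
  + 3*(x.2.1*x.2.1) + 2*x.2.1 + 3*(x.2.2*x.2.2)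
noncomputable def B4 (n : ℕ) : Finset T4 :=
  (Finset.Icc (-(n:ℤ)) n ×ˢ Finset.Icc (-(n:ℤ)) n) ×ˢ
    (Finset.Icc (-(n:ℤ)) n ×ˢ Finset.Icc (-(n:ℤ)) n)
def rho (x : T4) : T4 :=
  ((x.1.1 - x.1.2 - x.2.1, x.1.1 + x.1.2 - x.2.2), (x.1.1 + x.2.1 + x.2.2, x.1.2 - x.2.1 + x.2.2))
def rhoInv (z : T4) : T4 :=
  (((z.1.1 + z.1.2 + z.2.1)/3, (z.1.2 - z.1.1 + z.2.2)/3),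
   ((z.2.1 - z.2.2 - z.1.1)/3, (z.2.2 + z.2.1 - z.1.2)/3))
def Pm (z : T4) : Prop := (z.1.1 - z.2.1 + z.2.2) % 3 = 0 ∧ (z.1.2 - z.2.1 - z.2.2) % 3 = 0
def Zc (z : T4) : Prop := z.1.1 % 3 = 0 ∧ z.1.2 % 3 = 0
def Cc (z : T4) : Prop := z.1.1 % 3 = 1 ∧ z.1.2 % 3 = 1 ∧ z.2.1 % 3 = 1 ∧ z.2.2 % 3 = 0

instance : DecidablePred Pm := fun z => by unfold Pm; infer_instance
instance : DecidablePred Zc := fun z => by unfold Zc; infer_instance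
instance : DecidablePred Cc := fun z => by unfold Cc; infer_instance

lemma zabs (m : ℤ) : m ≤ m*m ∧ -(m*m) ≤ m := by
  constructor <;> nlinarith [mul_self_nonneg m, mul_self_nonneg (m-1), mul_self_nonneg (m+1)]

lemma mem_B4 {x : T4} {n : ℕ} : x ∈ B4 n ↔
    (-(n:ℤ) ≤ x.1.1 ∧ x.1.1 ≤ n) ∧ (-(n:ℤ) ≤ x.1.2 ∧ x.1.2 ≤ n) ∧
    (-(n:ℤ) ≤ x.2.1 ∧ x.2.1 ≤ n) ∧ (-(n:ℤ) ≤ x.2.2 ∧ x.2.2 ≤ n) := by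
  unfold B4
  simp [Finset.mem_product, Finset.mem_Icc]
  tauto

lemma Q4_rho (x : T4) : Q4 (rho x) = 3 * Q4 x := by
  obtain ⟨⟨a, b⟩, ⟨c, d⟩⟩ := x
  simp only [Q4, rho]
  ring

lemma stepA (n : ℕ) :
    ∑ x ∈ (B4 n).filter (fun x => Q4 x = (n:ℤ)), sgn (X4 x)
    = ∑ z ∈ (B4 (3*n)).filter (fun z => Q4 z = 3*(n:ℤ) ∧ Pm z), sgn (X4 z) := by
  apply Finset.sum_nbij' (i := rho) (j := rhoInv)
  · intro x hx
    rw [Finset.mem_filter, mem_B4] at hx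
    obtain ⟨⟨hb1, hb2, hb3, hb4⟩, hQ⟩ := hx
    obtain ⟨⟨a, b⟩, ⟨c, d⟩⟩ := x
    simp only [Q4] at hQ
    rw [Finset.mem_filter, mem_B4]
    simp only [rho, Q4, Pm] at *
    refine ⟨?_, by linarith [hQ], by omega⟩
    push_cast
    refine ⟨⟨?_, ?_⟩, ⟨?_, ?_⟩, ⟨?_, ?_⟩, ⟨?_, ?_⟩⟩ <;>
      linarith [zabs a, zabs b, zabs c, zabs d, mul_self_nonneg a, mul_self_nonneg b,
        mul_self_nonneg c, mul_self_nonneg d]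
  · intro z hz
    rw [Finset.mem_filter, mem_B4] at hz
    obtain ⟨⟨hb1, hb2, hb3, hb4⟩, hQ, hP1, hP2⟩ := hz
    obtain ⟨⟨z1, z2⟩, ⟨z3, z4⟩⟩ := z
    simp only [Q4] at hQ
    simp only [Pm] at hP1 hP2
    simp only at hP1 hP2 hb1 hb2 hb3 hb4
    have hround : rho (rhoInv ((z1, z2), (z3, z4))) = ((z1, z2), (z3, z4)) := by
      simp only [rho, rhoInv, Prod.mk.injEq]
      refine ⟨⟨?_, ?_⟩, ?_, ?_⟩ <;> omega
    have hQ4 : Q4 ((z1,z2),(z3,z4)) = 3 * Q4 (rhoInv ((z1,z2),(z3,z4))) := by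
      conv_lhs => rw [← hround]
      rw [Q4_rho]
    have hQ'' : Q4 ((z1,z2),(z3,z4)) = 3*(n:ℤ) := by simp only [Q4]; exact hQ
    rw [Finset.mem_filter, mem_B4]
    have hQi : Q4 (rhoInv ((z1,z2),(z3,z4))) = (n:ℤ) := by
      rw [hQ''] at hQ4; linarith
    refine ⟨?_, hQi⟩
    simp only [rhoInv]
    push_cast at hb1 hb2 hb3 hb4 ⊢
    have l1 : -(3*(n:ℤ)) ≤ z1 + z2 + z3 ∧ z1 + z2 + z3 ≤ 3*(n:ℤ) := by
      constructor <;> linarith [zabs z1, zabs z2, zabs z3, mul_self_nonneg z4]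
    have l2 : -(3*(n:ℤ)) ≤ z2 - z1 + z4 ∧ z2 - z1 + z4 ≤ 3*(n:ℤ) := by
      constructor <;> linarith [zabs z1, zabs z2, zabs z4, mul_self_nonneg z3,
        (zabs (-z1)).1, (zabs (-z1)).2]
    have l3 : -(3*(n:ℤ)) ≤ z3 - z4 - z1 ∧ z3 - z4 - z1 ≤ 3*(n:ℤ) := by
      constructor <;> linarith [zabs z1, zabs z3, zabs z4, mul_self_nonneg z2,
        (zabs (-z1)).1, (zabs (-z1)).2, (zabs (-z4)).1, (zabs (-z4)).2]
    have l4 : -(3*(n:ℤ)) ≤ z4 + z3 - z2 ∧ z4 + z3 - z2 ≤ 3*(n:ℤ) := by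
      constructor <;> linarith [zabs z2, zabs z3, zabs z4, mul_self_nonneg z1,
        (zabs (-z2)).1, (zabs (-z2)).2]
    obtain ⟨l1a, l1b⟩ := l1; obtain ⟨l2a, l2b⟩ := l2
    obtain ⟨l3a, l3b⟩ := l3; obtain ⟨l4a, l4b⟩ := l4
    refine ⟨⟨?_, ?_⟩, ⟨?_, ?_⟩, ⟨?_, ?_⟩, ⟨?_, ?_⟩⟩ <;> omega
  · intro x hx
    obtain ⟨⟨a, b⟩, ⟨c, d⟩⟩ := x
    simp only [rho, rhoInv, Prod.mk.injEq]
    refine ⟨⟨?_, ?_⟩, ?_, ?_⟩ <;> omega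
  · intro z hz
    rw [Finset.mem_filter] at hz
    obtain ⟨-, -, hP1, hP2⟩ := hz
    obtain ⟨⟨z1, z2⟩, ⟨z3, z4⟩⟩ := z
    simp only [Pm] at hP1 hP2
    simp only [rho, rhoInv, Prod.mk.injEq]
    refine ⟨⟨?_, ?_⟩, ?_, ?_⟩ <;> omega
  · intro x hx
    obtain ⟨⟨a, b⟩, ⟨c, d⟩⟩ := x
    apply sgn_congr
    simp only [X4, rho]
    omega

def smul3 (y : T4) : T4 := ((3*y.1.1, 3*y.1.2), (3*y.2.1, 3*y.2.2))
def sdiv3 (z : T4) : T4 := ((z.1.1/3, z.1.2/3), (z.2.1/3, z.2.2/3))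

lemma Q4_smul3 (y : T4) : Q4 (smul3 y) = 9 * Q4 y := by
  obtain ⟨⟨a, b⟩, ⟨c, d⟩⟩ := y
  simp only [Q4, smul3]
  ring

lemma stepC (n : ℕ) :
    ∑ z ∈ ((B4 (3*n)).filter (fun z => Q4 z = 3*(n:ℤ) ∧ Pm z)).filter Zc, sgn (X4 z)
    = ∑ y ∈ (B4 n).filter (fun y => 3 * Q4 y = (n:ℤ)), sgn (X4 y) := by
  apply Finset.sum_nbij' (i := sdiv3) (j := smul3)
  · intro z hz
    rw [Finset.mem_filter, Finset.mem_filter, mem_B4] at hz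
    obtain ⟨⟨⟨hb1, hb2, hb3, hb4⟩, hQ, hP1, hP2⟩, hZ1, hZ2⟩ := hz
    obtain ⟨⟨z1, z2⟩, ⟨z3, z4⟩⟩ := z
    simp only [Q4] at hQ
    simp only [Pm] at hP1 hP2
    simp only [Zc] at hZ1 hZ2
    try simp only at *
    have hd1 : (3:ℤ) ∣ z1 := by omega
    have hd2 : (3:ℤ) ∣ z2 := by omega
    have hd3 : (3:ℤ) ∣ z3 := by omega
    have hd4 : (3:ℤ) ∣ z4 := by omega
    have hround : smul3 (sdiv3 ((z1,z2),(z3,z4))) = ((z1,z2),(z3,z4)) := by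
      simp only [smul3, sdiv3, Prod.mk.injEq]
      refine ⟨⟨?_, ?_⟩, ?_, ?_⟩ <;> omega
    have h9 : Q4 ((z1,z2),(z3,z4)) = 9 * Q4 (sdiv3 ((z1,z2),(z3,z4))) := by
      conv_lhs => rw [← hround]
      rw [Q4_smul3]
    have hQ'' : Q4 ((z1,z2),(z3,z4)) = 3*(n:ℤ) := by simp only [Q4]; exact hQ
    rw [Finset.mem_filter, mem_B4]
    refine ⟨?_, by rw [hQ''] at h9; linarith⟩
    simp only [sdiv3]
    push_cast at hb1 hb2 hb3 hb4 ⊢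
    refine ⟨⟨?_, ?_⟩, ⟨?_, ?_⟩, ⟨?_, ?_⟩, ⟨?_, ?_⟩⟩ <;> omega
  · intro y hy
    rw [Finset.mem_filter, mem_B4] at hy
    obtain ⟨⟨hb1, hb2, hb3, hb4⟩, hQ⟩ := hy
    obtain ⟨⟨a, b⟩, ⟨c, d⟩⟩ := y
    simp only [Q4] at hQ
    try simp only at *
    rw [Finset.mem_filter, Finset.mem_filter, mem_B4]
    refine ⟨⟨?_, ?_, ?_⟩, ?_⟩
    · simp only [smul3]
      push_cast
      refine ⟨⟨?_, ?_⟩, ⟨?_, ?_⟩, ⟨?_, ?_⟩, ⟨?_, ?_⟩⟩ <;> omega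
    · rw [Q4_smul3]
      simp only [Q4]
      push_cast
      linarith
    · simp only [Pm, smul3]
      constructor <;> omega
    · simp only [Zc, smul3]
      constructor <;> omega
  · intro z hz
    rw [Finset.mem_filter, Finset.mem_filter] at hz
    obtain ⟨⟨-, hQ, hP1, hP2⟩, hZ1, hZ2⟩ := hz
    obtain ⟨⟨z1, z2⟩, ⟨z3, z4⟩⟩ := z
    simp only [Pm] at hP1 hP2
    simp only [Zc] at hZ1 hZ2
    try simp only at *
    simp only [smul3, sdiv3, Prod.mk.injEq]
    refine ⟨⟨?_, ?_⟩, ?_, ?_⟩ <;> omega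
  · intro y hy
    obtain ⟨⟨a, b⟩, ⟨c, d⟩⟩ := y
    simp only [smul3, sdiv3, Prod.mk.injEq]
    refine ⟨⟨?_, ?_⟩, ?_, ?_⟩ <;> omega
  · intro z hz
    rw [Finset.mem_filter, Finset.mem_filter] at hz
    obtain ⟨⟨-, hQ, hP1, hP2⟩, hZ1, hZ2⟩ := hz
    obtain ⟨⟨z1, z2⟩, ⟨z3, z4⟩⟩ := z
    simp only [Pm] at hP1 hP2
    simp only [Zc] at hZ1 hZ2
    try simp only at *
    apply sgn_congr
    simp only [X4, sdiv3]
    omega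

def emb (t : T4) : T4 := ((3*t.1.1+1, 3*t.1.2+1), (3*t.2.1+1, 3*t.2.2))
def unemb (x : T4) : T4 := (((x.1.1-1)/3, (x.1.2-1)/3), ((x.2.1-1)/3, x.2.2/3))

lemma Q4_emb (t : T4) : Q4 (emb t) = 3 * QT t := by
  obtain ⟨⟨a, b⟩, ⟨c, d⟩⟩ := t
  simp only [Q4, QT, emb]
  ring

lemma stepE (n : ℕ) :
    ∑ z ∈ (B4 (3*n)).filter (fun z => Q4 z = 3*(n:ℤ) ∧ Cc z), sgn (X4 z)
    = - ∑ t ∈ (B4 n).filter (fun t => QT t = (n:ℤ)), sgn (X4 t) := by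
  rw [← Finset.sum_neg_distrib]
  symm
  apply Finset.sum_nbij' (i := emb) (j := unemb)
  · intro t ht
    rw [Finset.mem_filter, mem_B4] at ht
    obtain ⟨⟨hb1, hb2, hb3, hb4⟩, hQ⟩ := ht
    obtain ⟨⟨a, b⟩, ⟨c, d⟩⟩ := t
    simp only [QT] at hQ
    try simp only at *
    rw [Finset.mem_filter, mem_B4]
    have hQe : Q4 (emb ((a,b),(c,d))) = 3*(n:ℤ) := by
      rw [Q4_emb]
      simp only [QT]
      linarith
    refine ⟨?_, hQe, ?_⟩
    · simp only [emb]
      have hexp : (3*a+1)*(3*a+1) + (3*b+1)*(3*b+1) + (3*c+1)*(3*c+1) + (3*d)*(3*d)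
          = 3*(n:ℤ) := by
        simp only [Q4, emb] at hQe
        linarith [hQe]
      push_cast
      refine ⟨⟨?_, ?_⟩, ⟨?_, ?_⟩, ⟨?_, ?_⟩, ⟨?_, ?_⟩⟩ <;>
        linarith [zabs (3*a+1), zabs (3*b+1), zabs (3*c+1), zabs (3*d),
          mul_self_nonneg (3*a+1), mul_self_nonneg (3*b+1), mul_self_nonneg (3*c+1),
          mul_self_nonneg (3*d)]
    · simp only [Cc, emb]
      refine ⟨?_, ?_, ?_, ?_⟩ <;> omega
  · intro z hz
    rw [Finset.mem_filter, mem_B4] at hz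
    obtain ⟨⟨hb1, hb2, hb3, hb4⟩, hQ, hC⟩ := hz
    obtain ⟨⟨z1, z2⟩, ⟨z3, z4⟩⟩ := z
    obtain ⟨hC1, hC2, hC3, hC4⟩ := hC
    simp only [Cc] at hC1 hC2 hC3 hC4
    try simp only at *
    have hround : emb (unemb ((z1,z2),(z3,z4))) = ((z1,z2),(z3,z4)) := by
      simp only [emb, unemb, Prod.mk.injEq]
      refine ⟨⟨?_, ?_⟩, ?_, ?_⟩ <;> omega
    have h3 : Q4 ((z1,z2),(z3,z4)) = 3 * QT (unemb ((z1,z2),(z3,z4))) := by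
      conv_lhs => rw [← hround]
      rw [Q4_emb]
    rw [Finset.mem_filter, mem_B4]
    refine ⟨?_, by rw [hQ] at h3; linarith⟩
    simp only [unemb]
    push_cast at hb1 hb2 hb3 hb4 ⊢
    refine ⟨⟨?_, ?_⟩, ⟨?_, ?_⟩, ⟨?_, ?_⟩, ⟨?_, ?_⟩⟩ <;> omega
  · intro t ht
    obtain ⟨⟨a, b⟩, ⟨c, d⟩⟩ := t
    simp only [emb, unemb, Prod.mk.injEq]
    refine ⟨⟨?_, ?_⟩, ?_, ?_⟩ <;> omega
  · intro z hz
    rw [Finset.mem_filter] at hz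
    obtain ⟨-, -, hC⟩ := hz
    obtain ⟨⟨z1, z2⟩, ⟨z3, z4⟩⟩ := z
    obtain ⟨hC1, hC2, hC3, hC4⟩ := hC
    simp only [Cc] at hC1 hC2 hC3 hC4
    try simp only at *
    simp only [emb, unemb, Prod.mk.injEq]
    refine ⟨⟨?_, ?_⟩, ?_, ?_⟩ <;> omega
  · intro t ht
    obtain ⟨⟨a, b⟩, ⟨c, d⟩⟩ := t
    have hop : sgn (X4 (emb ((a,b),(c,d)))) = - sgn (X4 ((a,b),(c,d))) :=
      sgn_opp (by simp only [X4, emb]; omega)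
    show -sgn (X4 ((a,b),(c,d))) = sgn (X4 (emb ((a,b),(c,d))))
    rw [hop]

def gmap : ℕ → T4 → T4
  | 0, ((a,b),(c,d)) => ((a,b),(c,d))
  | 1, ((a,b),(c,d)) => ((-a,-b),(-c,-d))
  | 2, ((a,b),(c,d)) => ((-a,b),(d,c))
  | 3, ((a,b),(c,d)) => ((a,-b),(-d,-c))
  | 4, ((a,b),(c,d)) => ((d,-a),(b,c))
  | 5, ((a,b),(c,d)) => ((-d,a),(-b,-c))
  | 6, ((a,b),(c,d)) => ((-a,d),(b,-c))
  | _, ((a,b),(c,d)) => ((a,-d),(-b,c))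

def ginv : ℕ → T4 → T4
  | 0, ((z1,z2),(z3,z4)) => ((z1,z2),(z3,z4))
  | 1, ((z1,z2),(z3,z4)) => ((-z1,-z2),(-z3,-z4))
  | 2, ((z1,z2),(z3,z4)) => ((-z1,z2),(z4,z3))
  | 3, ((z1,z2),(z3,z4)) => ((z1,-z2),(-z4,-z3))
  | 4, ((z1,z2),(z3,z4)) => ((-z2,z3),(z4,z1))
  | 5, ((z1,z2),(z3,z4)) => ((z2,-z3),(-z4,-z1))
  | 6, ((z1,z2),(z3,z4)) => ((-z1,z3),(-z4,z2))
  | _, ((z1,z2),(z3,z4)) => ((z1,-z3),(z4,-z2))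

def tag (z : T4) : ℕ :=
  if z.1.1 % 3 = 1 ∧ z.1.2 % 3 = 1 then 0
  else if z.1.1 % 3 = 2 ∧ z.1.2 % 3 = 2 then 1
  else if z.1.1 % 3 = 2 ∧ z.1.2 % 3 = 1 then 2
  else if z.1.1 % 3 = 1 ∧ z.1.2 % 3 = 2 then 3
  else if z.1.1 % 3 = 0 ∧ z.1.2 % 3 = 2 then 4
  else if z.1.1 % 3 = 0 ∧ z.1.2 % 3 = 1 then 5
  else if z.1.1 % 3 = 2 ∧ z.1.2 % 3 = 0 then 6
  else 7

lemma tag_lt (z : T4) : tag z < 8 := by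
  unfold tag
  split_ifs <;> norm_num

lemma gmap_ginv {j : ℕ} (hj : j < 8) (z : T4) : gmap j (ginv j z) = z := by
  obtain ⟨⟨z1, z2⟩, ⟨z3, z4⟩⟩ := z
  interval_cases j <;> simp [gmap, ginv]

lemma ginv_gmap {j : ℕ} (hj : j < 8) (x : T4) : ginv j (gmap j x) = x := by
  obtain ⟨⟨a, b⟩, ⟨c, d⟩⟩ := x
  interval_cases j <;> simp [gmap, ginv]

lemma Q4_ginv {j : ℕ} (hj : j < 8) (z : T4) : Q4 (ginv j z) = Q4 z := by
  obtain ⟨⟨z1, z2⟩, ⟨z3, z4⟩⟩ := z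
  interval_cases j <;> (simp [Q4, ginv]; try ring)

lemma Q4_gmap {j : ℕ} (hj : j < 8) (x : T4) : Q4 (gmap j x) = Q4 x := by
  obtain ⟨⟨a, b⟩, ⟨c, d⟩⟩ := x
  interval_cases j <;> (simp [Q4, gmap]; try ring)

lemma sgn_X4_ginv {j : ℕ} (hj : j < 8) (z : T4) : sgn (X4 (ginv j z)) = sgn (X4 z) := by
  obtain ⟨⟨z1, z2⟩, ⟨z3, z4⟩⟩ := z
  interval_cases j <;> (apply sgn_congr; simp [X4, ginv]; try omega)

lemma stepD (n : ℕ) :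
    ∑ z ∈ ((B4 (3*n)).filter (fun z => Q4 z = 3*(n:ℤ) ∧ Pm z)).filter (fun z => ¬ Zc z),
      sgn (X4 z)
    = 8 * ∑ z ∈ (B4 (3*n)).filter (fun z => Q4 z = 3*(n:ℤ) ∧ Cc z), sgn (X4 z) := by
  have h2 : ∑ p ∈ (Finset.range 8) ×ˢ ((B4 (3*n)).filter (fun z => Q4 z = 3*(n:ℤ) ∧ Cc z)),
      sgn (X4 p.2) = 8 * ∑ z ∈ (B4 (3*n)).filter (fun z => Q4 z = 3*(n:ℤ) ∧ Cc z), sgn (X4 z) := by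
    rw [Finset.sum_product]
    have hcon : ∀ x ∈ Finset.range 8,
        (∑ y ∈ (B4 (3*n)).filter (fun z => Q4 z = 3*(n:ℤ) ∧ Cc z), sgn (X4 ((x, y)).2))
        = ∑ y ∈ (B4 (3*n)).filter (fun z => Q4 z = 3*(n:ℤ) ∧ Cc z), sgn (X4 y) :=
      fun x _ => rfl
    rw [Finset.sum_congr rfl hcon, Finset.sum_const, Finset.card_range, nsmul_eq_mul]
    norm_num
  rw [← h2]
  apply Finset.sum_nbij' (i := fun z => (tag z, ginv (tag z) z)) (j := fun p => gmap p.1 p.2)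
  · intro z hz
    rw [Finset.mem_filter, Finset.mem_filter, mem_B4] at hz
    obtain ⟨⟨⟨hb1, hb2, hb3, hb4⟩, hQ, hP⟩, hZ⟩ := hz
    obtain ⟨⟨z1, z2⟩, ⟨z3, z4⟩⟩ := z
    obtain ⟨hP1, hP2⟩ := hP
    simp only [Pm] at hP1 hP2
    simp only [Zc, not_and_or] at hZ
    try simp only at *
    rw [Finset.mem_product, Finset.mem_range, Finset.mem_filter, mem_B4]
    refine ⟨tag_lt _, ⟨?_, ?_, ?_⟩⟩
    · -- bounds for ginv (tag) z : components are ± of original components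
      have h1 : z1 % 3 = 0 ∨ z1 % 3 = 1 ∨ z1 % 3 = 2 := by omega
      have h2' : z2 % 3 = 0 ∨ z2 % 3 = 1 ∨ z2 % 3 = 2 := by omega
      rcases h1 with h1|h1|h1 <;> rcases h2' with h2'|h2'|h2' <;>
        simp only [tag, ginv, h1, h2'] <;> norm_num <;> omega
    · rw [Q4_ginv (tag_lt _)]
      exact hQ
    · -- Cc of ginv (tag z) z
      have h1 : z1 % 3 = 0 ∨ z1 % 3 = 1 ∨ z1 % 3 = 2 := by omega
      have h2' : z2 % 3 = 0 ∨ z2 % 3 = 1 ∨ z2 % 3 = 2 := by omega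
      rcases h1 with h1|h1|h1 <;> rcases h2' with h2'|h2'|h2' <;>
        simp only [tag, ginv, h1, h2', Cc] <;> norm_num <;> omega
  · intro p hp
    rw [Finset.mem_product, Finset.mem_range, Finset.mem_filter, mem_B4] at hp
    obtain ⟨hj, ⟨hb1, hb2, hb3, hb4⟩, hQ, hC⟩ := hp
    obtain ⟨j, ⟨⟨a, b⟩, ⟨c, d⟩⟩⟩ := p
    obtain ⟨hC1, hC2, hC3, hC4⟩ := hC
    simp only [Cc] at hC1 hC2 hC3 hC4
    try simp only at *
    rw [Finset.mem_filter, Finset.mem_filter, mem_B4]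
    refine ⟨⟨?_, ?_, ?_⟩, ?_⟩
    · interval_cases j <;> simp only [gmap] <;> refine ⟨⟨?_,?_⟩,⟨?_,?_⟩,⟨?_,?_⟩,⟨?_,?_⟩⟩ <;> omega
    · rw [Q4_gmap hj]
      exact hQ
    · interval_cases j <;> (simp only [gmap, Pm]; constructor <;> omega)
    · interval_cases j <;> (simp only [gmap, Zc]; omega)
  · intro z hz
    rw [Finset.mem_filter, Finset.mem_filter] at hz
    obtain ⟨⟨-, hQ, hP⟩, hZ⟩ := hz
    exact gmap_ginv (tag_lt z) z
  · intro p hp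
    rw [Finset.mem_product, Finset.mem_range, Finset.mem_filter] at hp
    obtain ⟨hj, -, -, hC⟩ := hp
    obtain ⟨j, ⟨⟨a, b⟩, ⟨c, d⟩⟩⟩ := p
    obtain ⟨hC1, hC2, hC3, hC4⟩ := hC
    simp only [Cc] at hC1 hC2 hC3 hC4
    try simp only at *
    have hna : (-a) % 3 = 2 := by omega
    have hnb : (-b) % 3 = 2 := by omega
    have hnc : (-c) % 3 = 2 := by omega
    have hnd : (-d) % 3 = 0 := by omega
    have htag : tag (gmap j ((a,b),(c,d))) = j := by
      interval_cases j <;>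
        simp [gmap, tag, hC1, hC2, hC3, hC4, hna, hnb, hnc, hnd]
    rw [Prod.mk.injEq]
    refine ⟨htag, ?_⟩
    rw [htag]
    exact ginv_gmap hj _
  · intro z hz
    exact (sgn_X4_ginv (tag_lt z) z).symm

lemma star_core (n : ℕ) :
    ∑ x ∈ (B4 n).filter (fun x => Q4 x = (n:ℤ)), sgn (X4 x)
    = ∑ y ∈ (B4 n).filter (fun y => 3 * Q4 y = (n:ℤ)), sgn (X4 y)
      - 8 * ∑ t ∈ (B4 n).filter (fun t => QT t = (n:ℤ)), sgn (X4 t) := by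
  rw [stepA, ← Finset.sum_filter_add_sum_filter_not
    ((B4 (3*n)).filter (fun z => Q4 z = 3*(n:ℤ) ∧ Pm z)) Zc, stepC, stepD, stepE]
  ring

lemma D1_core (n : ℕ) :
    ∑ k ∈ Finset.Icc (-(n:ℤ)) n, (if k*k = (n:ℤ) then sgn k else 0)
    = ∑ j ∈ Finset.Icc (-(n:ℤ)) n, (if 9*(j*j) = (n:ℤ) then sgn j else 0)
      - 2 * ∑ m ∈ Finset.Icc (-(n:ℤ)) n, (if 3*(3*(m*m)+2*m)+1 = (n:ℤ) then sgn m else 0) := by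
  rw [← Finset.sum_filter, ← Finset.sum_filter, ← Finset.sum_filter]
  rw [← Finset.sum_filter_add_sum_filter_not
    ((Finset.Icc (-(n:ℤ)) n).filter (fun k => k*k = (n:ℤ))) (fun k => k % 3 = 0)]
  rw [← Finset.sum_filter_add_sum_filter_not
    (((Finset.Icc (-(n:ℤ)) n).filter (fun k => k*k = (n:ℤ))).filter (fun k => ¬ k % 3 = 0))
    (fun k => k % 3 = 1)]
  have h0 : ∑ k ∈ ((Finset.Icc (-(n:ℤ)) n).filter (fun k => k*k = (n:ℤ))).filter
      (fun k => k % 3 = 0), sgn k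
      = ∑ j ∈ (Finset.Icc (-(n:ℤ)) n).filter (fun j => 9*(j*j) = (n:ℤ)), sgn j := by
    apply Finset.sum_nbij' (i := fun k => k / 3) (j := fun j => 3 * j)
    · intro k hk
      simp only [Finset.mem_filter, Finset.mem_Icc] at hk ⊢
      obtain ⟨⟨⟨hk1, hk2⟩, hQ⟩, hr⟩ := hk
      refine ⟨⟨by omega, by omega⟩, ?_⟩
      have hk3 : k = 3 * (k / 3) := by omega
      calc 9 * (k/3 * (k/3)) = (3*(k/3)) * (3*(k/3)) := by ring
        _ = k * k := by rw [← hk3]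
        _ = (n:ℤ) := hQ
    · intro j hj
      simp only [Finset.mem_filter, Finset.mem_Icc] at hj ⊢
      obtain ⟨⟨hj1, hj2⟩, hQ⟩ := hj
      have hb := zabs (3*j)
      refine ⟨⟨⟨by nlinarith [hb.1, hb.2], by nlinarith [hb.1, hb.2]⟩, by linarith⟩, by omega⟩
    · intro k hk
      simp only [Finset.mem_filter] at hk
      omega
    · intro j hj
      omega
    · intro k hk
      simp only [Finset.mem_filter] at hk
      apply sgn_congr
      omega
  have h1 : ∑ k ∈ (((Finset.Icc (-(n:ℤ)) n).filter (fun k => k*k = (n:ℤ))).filter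
      (fun k => ¬ k % 3 = 0)).filter (fun k => k % 3 = 1), sgn k
      = - ∑ m ∈ (Finset.Icc (-(n:ℤ)) n).filter
          (fun m => 3*(3*(m*m)+2*m)+1 = (n:ℤ)), sgn m := by
    rw [← Finset.sum_neg_distrib]
    apply Finset.sum_nbij' (i := fun k => (k-1)/3) (j := fun m => 3*m+1)
    · intro k hk
      simp only [Finset.mem_filter, Finset.mem_Icc] at hk ⊢
      obtain ⟨⟨⟨⟨hk1, hk2⟩, hQ⟩, -⟩, hr⟩ := hk
      refine ⟨⟨by omega, by omega⟩, ?_⟩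
      have hk3 : k = 3 * ((k-1)/3) + 1 := by omega
      calc 3*(3*(((k-1)/3) * ((k-1)/3)) + 2*((k-1)/3)) + 1
          = (3*((k-1)/3)+1) * (3*((k-1)/3)+1) := by ring
        _ = k * k := by rw [← hk3]
        _ = (n:ℤ) := hQ
    · intro m hm
      simp only [Finset.mem_filter, Finset.mem_Icc] at hm ⊢
      obtain ⟨⟨hm1, hm2⟩, hQ⟩ := hm
      have hb := zabs (3*m+1)
      have hsq : (3*m+1)*(3*m+1) = (n:ℤ) := by linarith [hQ]
      refine ⟨⟨⟨⟨by nlinarith [hb.1, hb.2], by nlinarith [hb.1, hb.2]⟩, hsq⟩, by omega⟩, by omega⟩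
    · intro k hk
      simp only [Finset.mem_filter] at hk
      omega
    · intro m hm
      omega
    · intro k hk
      simp only [Finset.mem_filter] at hk
      obtain ⟨⟨⟨-, -⟩, -⟩, hr⟩ := hk
      show sgn k = - sgn ((k-1)/3)
      apply sgn_opp
      omega
  have h2 : ∑ k ∈ ((((Finset.Icc (-(n:ℤ)) n).filter (fun k => k*k = (n:ℤ))).filter
      (fun k => ¬ k % 3 = 0)).filter (fun k => ¬ k % 3 = 1)), sgn k
      = - ∑ m ∈ (Finset.Icc (-(n:ℤ)) n).filter
          (fun m => 3*(3*(m*m)+2*m)+1 = (n:ℤ)), sgn m := by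
    rw [← Finset.sum_neg_distrib]
    apply Finset.sum_nbij' (i := fun k => (-k-1)/3) (j := fun m => -(3*m+1))
    · intro k hk
      simp only [Finset.mem_filter, Finset.mem_Icc] at hk ⊢
      obtain ⟨⟨⟨⟨hk1, hk2⟩, hQ⟩, hr0⟩, hr1⟩ := hk
      refine ⟨⟨by omega, by omega⟩, ?_⟩
      have hk3 : k = -(3 * ((-k-1)/3) + 1) := by omega
      calc 3*(3*((((-k-1)/3)) * (((-k-1)/3))) + 2*(((-k-1)/3))) + 1
          = (-(3*(((-k-1)/3))+1)) * (-(3*(((-k-1)/3))+1)) := by ring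
        _ = k * k := by rw [← hk3]
        _ = (n:ℤ) := hQ
    · intro m hm
      simp only [Finset.mem_filter, Finset.mem_Icc] at hm ⊢
      obtain ⟨⟨hm1, hm2⟩, hQ⟩ := hm
      have hb := zabs (3*m+1)
      have hsq : (-(3*m+1))*(-(3*m+1)) = (n:ℤ) := by linarith [hQ]
      refine ⟨⟨⟨⟨by nlinarith [hb.1, hb.2], by nlinarith [hb.1, hb.2]⟩, hsq⟩, by omega⟩, by omega⟩
    · intro k hk
      simp only [Finset.mem_filter] at hk
      omega
    · intro m hm
      omega
    · intro k hk
      simp only [Finset.mem_filter] at hk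
      obtain ⟨⟨⟨-, -⟩, -⟩, hr⟩ := hk
      show sgn k = - sgn ((-k-1)/3)
      apply sgn_opp
      omega
  rw [h0, h1, h2]
  ring



/-! ### The series W(q) = Σ (-1)^m q^{3m²+2m} and its representation -/

noncomputable def Wser : PowerSeries ℤ :=
  PowerSeries.mk fun n => ∑ k ∈ Finset.Icc (-(n:ℤ)) n,
    if (3*(k*k)+2*k).toNat = n then sgn k else 0

lemma Wnn (k : ℤ) : 0 ≤ 3*(k*k)+2*k := by
  rcases le_or_gt 0 k with h | h
  · nlinarith [mul_self_nonneg k]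
  · nlinarith [mul_nonneg (by linarith : (0:ℤ) ≤ -k) (by linarith : (0:ℤ) ≤ -(k+1))]

lemma W_growth (k : ℤ) : k.natAbs ≤ (3*(k*k)+2*k).toNat := by
  have h1 := Wnn k
  have h2 : (k.natAbs : ℤ) ≤ 3*(k*k)+2*k := by
    rcases le_or_gt 0 k with h | h
    · rw [Int.natAbs_of_nonneg h]; nlinarith [mul_self_nonneg k]
    · rw [Int.ofNat_natAbs_of_nonpos (le_of_lt h)]
      nlinarith [mul_nonneg (by linarith : (0:ℤ) ≤ -k) (by linarith : (0:ℤ) ≤ -(k+1))]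
  omega

noncomputable def WRep : ThRep ℤ Wser :=
  ThRep.base sgn (fun k => (3*(k*k)+2*k).toNat) W_growth

/-! ### Explicit coefficient formulas -/

noncomputable def e3Rep : ThRep ℤ (expand 3 phiNeg) := phiRep.expandRep 3 (by norm_num)

lemma coeff_phiNeg' (n : ℕ) : PowerSeries.coeff n phiNeg
    = ∑ k ∈ Finset.Icc (-(n:ℤ)) n, (if k*k = (n:ℤ) then sgn k else 0) := by
  rw [phiRep.coeff_eq n]
  apply Finset.sum_congr rfl
  intro k _
  apply if_congr _ rfl rfl
  show (k*k).toNat = n ↔ _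
  have := mul_self_nonneg k
  constructor <;> intro h2 <;> omega

lemma coeff_A9 (n : ℕ) : PowerSeries.coeff n (expand 9 phiNeg)
    = ∑ k ∈ Finset.Icc (-(n:ℤ)) n, (if 9*(k*k) = (n:ℤ) then sgn k else 0) := by
  rw [(phiRep.expandRep 9 (by norm_num)).coeff_eq n]
  apply Finset.sum_congr rfl
  intro k _
  apply if_congr _ rfl rfl
  show 9 * (k*k).toNat = n ↔ _
  have := mul_self_nonneg k
  omega

lemma coeff_u (n : ℕ) : PowerSeries.coeff n (PowerSeries.X * expand 3 Wser)
    = ∑ k ∈ Finset.Icc (-(n:ℤ)) n, (if 3*(3*(k*k)+2*k)+1 = (n:ℤ) then sgn k else 0) := by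
  rw [((WRep.expandRep 3 (by norm_num)).xmul).coeff_eq n]
  apply Finset.sum_congr rfl
  intro k _
  apply if_congr _ rfl rfl
  show 3 * (3*(k*k)+2*k).toNat + 1 = n ↔ _
  have := Wnn k
  omega

/-- The dissection φ(-q) = φ(-q⁹) - 2 q W(q³). -/
lemma D1S : phiNeg = expand 9 phiNeg - (2:ℤ) • (PowerSeries.X * expand 3 Wser) := by
  ext n
  rw [map_sub, map_zsmul, coeff_phiNeg', coeff_A9, coeff_u, smul_eq_mul]
  exact D1_core n

/-! ### The key theta identity (star) -/

lemma coeff_A4 (n : ℕ) : PowerSeries.coeff n ((phiNeg*phiNeg)*(phiNeg*phiNeg))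
    = ∑ x ∈ B4 n, (if Q4 x = (n:ℤ) then sgn (X4 x) else 0) := by
  rw [((phiRep.mul phiRep).mul (phiRep.mul phiRep)).coeff_eq n]
  apply Finset.sum_congr rfl
  intro x _
  obtain ⟨⟨a, b⟩, ⟨c, d⟩⟩ := x
  show (if ((a*a).toNat + (b*b).toNat) + ((c*c).toNat + (d*d).toNat) = n
      then (sgn a * sgn b) * (sgn c * sgn d) else 0) = _
  apply if_congr
  · have h1 := mul_self_nonneg a
    have h2 := mul_self_nonneg b
    have h3 := mul_self_nonneg c
    have h4 := mul_self_nonneg d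
    show _ ↔ Q4 ((a,b),(c,d)) = (n:ℤ)
    simp only [Q4]
    omega
  · rw [sgn_mul_sgn, sgn_mul_sgn, sgn_mul_sgn]
    apply sgn_congr
    show (a + b + (c + d)) % 2 = X4 ((a,b),(c,d)) % 2
    simp only [X4]
    omega
  · rfl

lemma coeff_A34 (n : ℕ) :
    PowerSeries.coeff n ((expand 3 phiNeg*expand 3 phiNeg)*(expand 3 phiNeg*expand 3 phiNeg))
    = ∑ x ∈ B4 n, (if 3 * Q4 x = (n:ℤ) then sgn (X4 x) else 0) := by
  rw [((e3Rep.mul e3Rep).mul (e3Rep.mul e3Rep)).coeff_eq n]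
  apply Finset.sum_congr rfl
  intro x _
  obtain ⟨⟨a, b⟩, ⟨c, d⟩⟩ := x
  show (if (3*(a*a).toNat + 3*(b*b).toNat) + (3*(c*c).toNat + 3*(d*d).toNat) = n
      then (sgn a * sgn b) * (sgn c * sgn d) else 0) = _
  apply if_congr
  · have h1 := mul_self_nonneg a
    have h2 := mul_self_nonneg b
    have h3 := mul_self_nonneg c
    have h4 := mul_self_nonneg d
    show _ ↔ 3 * Q4 ((a,b),(c,d)) = (n:ℤ)
    simp only [Q4]
    omega
  · rw [sgn_mul_sgn, sgn_mul_sgn, sgn_mul_sgn]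
    apply sgn_congr
    show (a + b + (c + d)) % 2 = X4 ((a,b),(c,d)) % 2
    simp only [X4]
    omega
  · rfl

lemma coeff_TT (n : ℕ) :
    PowerSeries.coeff n (((PowerSeries.X * Wser) * Wser) * (Wser * expand 3 phiNeg))
    = ∑ x ∈ B4 n, (if QT x = (n:ℤ) then sgn (X4 x) else 0) := by
  rw [(((WRep.xmul).mul WRep).mul (WRep.mul e3Rep)).coeff_eq n]
  apply Finset.sum_congr rfl
  intro x _
  obtain ⟨⟨a, b⟩, ⟨c, d⟩⟩ := x
  show (if (((3*(a*a)+2*a).toNat + 1) + (3*(b*b)+2*b).toNat)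
        + ((3*(c*c)+2*c).toNat + 3*(d*d).toNat) = n
      then (sgn a * sgn b) * (sgn c * sgn d) else 0) = _
  apply if_congr
  · have h1 := Wnn a
    have h2 := Wnn b
    have h3 := Wnn c
    have h4 := mul_self_nonneg d
    show _ ↔ QT ((a,b),(c,d)) = (n:ℤ)
    simp only [QT]
    omega
  · rw [sgn_mul_sgn, sgn_mul_sgn, sgn_mul_sgn]
    apply sgn_congr
    show (a + b + (c + d)) % 2 = X4 ((a,b),(c,d)) % 2
    simp only [X4]
    omega
  · rfl

/-- The key identity: φ(-q)⁴ = φ(-q³)⁴ - 8 q W(q)³ φ(-q³). -/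
lemma starS : (phiNeg*phiNeg)*(phiNeg*phiNeg)
    = (expand 3 phiNeg*expand 3 phiNeg)*(expand 3 phiNeg*expand 3 phiNeg)
      - (8:ℤ) • (((PowerSeries.X * Wser) * Wser) * (Wser * expand 3 phiNeg)) := by
  ext n
  rw [map_sub, map_zsmul, coeff_A4, coeff_A34, coeff_TT, smul_eq_mul,
    ← Finset.sum_filter, ← Finset.sum_filter, ← Finset.sum_filter]
  exact star_core n



/-! ### Endgame: algebraic assembly -/

lemma keyring {R : Type*} [CommRing R] [NoZeroDivisors R] (A B C D P P3 u v : R)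
    (hA : A = C - 2*u) (hB : B = D - 2*v)
    (h3 : B^4 = C^4 - 8*(u^3*C)) (h9 : C^4 = D^4 - 8*(v^3*D))
    (hAP : A * P = 1) (hBP : B * P3 = 1)
    (hAne : A ≠ 0) (hBne : B ≠ 0) (hCne : C ≠ 0) :
    (C*P)^3 = ((D*P3) - 3*(D*P3)^2 + 3*(D*P3)^3) * (3*(C*P)^2 - 3*(C*P) + 1) := by
  have hKC : C * (C^3*B^3)
      = C * ((D*B^2 - 3*D^2*B + 3*D^3) * (3*C^2*A - 3*C*A^2 + A^3)) := by
    subst hA; subst hB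
    linear_combination ((D-2*v)^3) * h9 + (D^3+2*D^2*v+4*D*v^2) * h3
  have hKpoly := mul_left_cancel₀ hCne hKC
  have hM : A^3*B^3 ≠ 0 := mul_ne_zero (pow_ne_zero _ hAne) (pow_ne_zero _ hBne)
  have t2 : (3*(C*P)^2 - 3*(C*P) + 1) * A^3 = 3*C^2*A - 3*C*A^2 + A^3 := by
    linear_combination (3*C^2*A*(A*P+1) - 3*C*A^2) * hAP
  have t3 : ((D*P3) - 3*(D*P3)^2 + 3*(D*P3)^3) * B^3 = D*B^2 - 3*D^2*B + 3*D^3 := by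
    linear_combination (D*B^2 - 3*D^2*B*(B*P3+1) + 3*D^3*((B*P3)^2+B*P3+1)) * hBP
  apply mul_right_cancel₀ hM
  calc (C*P)^3 * (A^3*B^3) = C^3*B^3 * (A*P)^3 := by ring
    _ = C^3*B^3 := by rw [hAP]; ring
    _ = (D*B^2 - 3*D^2*B + 3*D^3) * (3*C^2*A - 3*C*A^2 + A^3) := hKpoly
    _ = (((D*P3) - 3*(D*P3)^2 + 3*(D*P3)^3) * B^3) * ((3*(C*P)^2 - 3*(C*P) + 1) * A^3) := by
        rw [t2, t3]
    _ = ((D*P3) - 3*(D*P3)^2 + 3*(D*P3)^3) * (3*(C*P)^2 - 3*(C*P) + 1) * (A^3*B^3) := by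
        ring

section Endgame

private lemma h3p : (0:ℕ) < 3 := by norm_num
private lemma h9p : (0:ℕ) < 9 := by norm_num

lemma constantCoeff_phiNeg : PowerSeries.constantCoeff phiNeg = 1 := by
  rw [← PowerSeries.coeff_zero_eq_constantCoeff]
  unfold phiNeg
  rw [PowerSeries.coeff_mk]
  simp

lemma constantCoeff_expand (d : ℕ) (f : PowerSeries ℤ) :
    PowerSeries.constantCoeff (expand d f) = PowerSeries.constantCoeff f := by
  rw [← PowerSeries.coeff_zero_eq_constantCoeff, coeff_expand, if_pos (dvd_zero d),
    Nat.zero_div, PowerSeries.coeff_zero_eq_constantCoeff]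

lemma F1 : phiNeg * phiNegInv = 1 := by
  unfold phiNegInv
  exact PowerSeries.mul_invOfUnit _ _ (by rw [constantCoeff_phiNeg]; rfl)

lemma F2 : expand 3 phiNeg * expand 3 phiNegInv = 1 := by
  rw [← expand_mul 3 h3p, F1, expand_one 3 h3p]

lemma nz_of_cc {f : PowerSeries ℤ} (h : PowerSeries.constantCoeff f = 1) : f ≠ 0 := by
  intro hf
  rw [hf] at h
  simp at h

lemma hAne : phiNeg ≠ 0 := nz_of_cc constantCoeff_phiNeg
lemma hBne : expand 3 phiNeg ≠ 0 :=
  nz_of_cc (by rw [constantCoeff_expand, constantCoeff_phiNeg])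
lemma hCne : expand 9 phiNeg ≠ 0 :=
  nz_of_cc (by rw [constantCoeff_expand, constantCoeff_phiNeg])

lemma numeral_smul_one (c : ℤ) : (c : ℤ) • (1 : PowerSeries ℤ) = (PowerSeries.C (R := ℤ)) c := by
  rw [zsmul_eq_mul, mul_one]
  simp

lemma expand_C (d : ℕ) (hd : 0 < d) (c : ℤ) :
    expand d ((PowerSeries.C (R := ℤ)) c) = (PowerSeries.C (R := ℤ)) c := by
  rw [← numeral_smul_one, expand_smul, expand_one d hd]

lemma C_ofNat (m : ℕ) [m.AtLeastTwo] :
    (PowerSeries.C (R := ℤ)) (OfNat.ofNat m) = (OfNat.ofNat m : PowerSeries ℤ) :=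
  map_ofNat (PowerSeries.C (R := ℤ)) m

lemma expand_ofNat (d : ℕ) (hd : 0 < d) (m : ℕ) [m.AtLeastTwo] :
    expand d (OfNat.ofNat m : PowerSeries ℤ) = (OfNat.ofNat m : PowerSeries ℤ) := by
  rw [← C_ofNat, expand_C d hd]

/-- star in plain form -/
lemma starP : phiNeg^4 = (expand 3 phiNeg)^4
    - 8 * (PowerSeries.X * Wser^3 * expand 3 phiNeg) := by
  have h := starS
  rw [zsmul_eq_mul] at h
  push_cast at h
  linear_combination h

lemma D1P : phiNeg = expand 9 phiNeg - 2 * (PowerSeries.X * expand 3 Wser) := by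
  have h := D1S
  rw [zsmul_eq_mul] at h
  push_cast at h
  linear_combination h

lemma star3 : (expand 3 phiNeg)^4 = (expand 9 phiNeg)^4
    - 8 * (PowerSeries.X^3 * (expand 3 Wser)^3 * expand 9 phiNeg) := by
  have h := congrArg (expand 3) starP
  rw [expand_sub] at h
  simp only [expand_pow 3 h3p, expand_mul 3 h3p, expand_X 3 h3p,
    expand_expand 3 3 h3p h3p, expand_ofNat 3 h3p] at h
  norm_num at h
  exact h

lemma star9 : (expand 9 phiNeg)^4 = (expand 27 phiNeg)^4
    - 8 * (PowerSeries.X^9 * (expand 9 Wser)^3 * expand 27 phiNeg) := by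
  have h := congrArg (expand 9) starP
  rw [expand_sub] at h
  simp only [expand_pow 9 h9p, expand_mul 9 h9p, expand_X 9 h9p,
    expand_expand 9 3 h9p h3p, expand_ofNat 9 h9p] at h
  norm_num at h
  exact h

lemma D13 : expand 3 phiNeg = expand 27 phiNeg
    - 2 * (PowerSeries.X^3 * expand 9 Wser) := by
  have h := congrArg (expand 3) D1P
  rw [expand_sub] at h
  simp only [expand_mul 3 h3p, expand_X 3 h3p, expand_expand 3 9 h3p h9p,
    expand_expand 3 3 h3p h3p, expand_ofNat 3 h3p] at h
  norm_num at h
  exact h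

lemma hxi3 : expand 3 xi = expand 27 phiNeg * expand 3 phiNegInv := by
  unfold xi
  rw [expand_mul 3 h3p, expand_expand 3 9 h3p h9p]

/-- The key recurrence identity K. -/
lemma hK : xi^3 = expand 3 (xi - 3*xi^2 + 3*xi^3) * (3*xi^2 - 3*xi + 1) := by
  have hxw : expand 3 (xi - 3*xi^2 + 3*xi^3)
      = (expand 27 phiNeg * expand 3 phiNegInv)
        - 3*(expand 27 phiNeg * expand 3 phiNegInv)^2
        + 3*(expand 27 phiNeg * expand 3 phiNegInv)^3 := by
    rw [show xi - 3*xi^2 + 3*xi^3 = (xi - 3*xi^2) + 3*xi^3 from by ring,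
      expand_add, expand_sub, expand_mul 3 h3p, expand_mul 3 h3p,
      expand_pow 3 h3p, expand_pow 3 h3p, expand_ofNat 3 h3p, hxi3]
  rw [hxw]
  show (expand 9 phiNeg * phiNegInv)^3 = _
  exact keyring phiNeg (expand 3 phiNeg) (expand 9 phiNeg) (expand 27 phiNeg)
    phiNegInv (expand 3 phiNegInv) (PowerSeries.X * expand 3 Wser)
    (PowerSeries.X^3 * expand 9 Wser)
    D1P D13
    (by linear_combination star3) (by linear_combination star9)
    F1 F2 hAne hBne hCne

end Endgame


theorem U_xi_recurrence (i : ℕ) (hi : 3 ≤ i) :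
    U (xi ^ i) =
      (xi - 3 * xi ^ 2 + 3 * xi ^ 3) *
        (3 * U (xi ^ (i - 1)) - 3 * U (xi ^ (i - 2)) + U (xi ^ (i - 3))) := by
  obtain ⟨k, rfl⟩ : ∃ k, i = k + 3 := ⟨i - 3, by omega⟩
  have hXi : xi ^ (k+3)
      = expand 3 (xi - 3*xi^2 + 3*xi^3) * (3*xi^(k+2) - 3*xi^(k+1) + xi^k) := by
    calc xi^(k+3) = xi^3 * xi^k := by ring
      _ = (expand 3 (xi - 3*xi^2 + 3*xi^3) * (3*xi^2 - 3*xi + 1)) * xi^k := by rw [← hK]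
      _ = _ := by ring
  have e1 : k + 3 - 1 = k + 2 := by omega
  have e2 : k + 3 - 2 = k + 1 := by omega
  have e3 : k + 3 - 3 = k := by omega
  rw [e1, e2, e3, hXi, U_mul_expand]
  have U3 : ∀ f : PowerSeries ℤ, U (3 * f) = 3 * U f := by
    intro f
    have h : (3 : PowerSeries ℤ) * f = f + f + f := by ring
    rw [h, U_add, U_add]
    ring
  rw [U_add, U_sub, U3, U3]
end

section
/- Define integers Xᵢ(j) for i ≥ 1 by the initial data X₁ = (coefficients of ξ - 3ξ² + 3ξ³), X₂ = (coefficients of -2ξ + 9ξ² - 24ξ³ + 45ξ⁴ - 54ξ⁵ + 27ξ⁶), X₃ = (coefficients of ξ - 12ξ² + 66ξ³ - 216ξ⁴ + 486ξ⁵ - 810ξ⁶ + 972ξ⁷ - 729ξ⁸ + 243ξ⁹), and for i ≥ 4 by the polynomial recurrence Pᵢ = (x - 3x² + 3x³)(3P_{i-1} - 3P_{i-2} + P_{i-3}) in ℤ[x]. Then for every i ≥ 1, Xᵢ(j) = 0 whenever 0 ≤ j < ⌈i/3⌉. -/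
open Polynomial

/-- The polynomials Pᵢ ∈ ℤ[x] encoding the modular equations for U(ξⁱ). -/
noncomputable def P : ℕ → Polynomial ℤ
  | 0 => 1
  | 1 => X - 3 * X ^ 2 + 3 * X ^ 3
  | 2 => -2 * X + 9 * X ^ 2 - 24 * X ^ 3 + 45 * X ^ 4 - 54 * X ^ 5 + 27 * X ^ 6
  | 3 => X - 12 * X ^ 2 + 66 * X ^ 3 - 216 * X ^ 4 + 486 * X ^ 5 - 810 * X ^ 6
      + 972 * X ^ 7 - 729 * X ^ 8 + 243 * X ^ 9
  | (i + 4) => (X - 3 * X ^ 2 + 3 * X ^ 3) *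
      (3 * P (i + 3) - 3 * P (i + 2) + P (i + 1))

lemma P_X_pow_dvd : ∀ i : ℕ, 1 ≤ i → (X : Polynomial ℤ) ^ ((i + 2) / 3) ∣ P i := by
  intro i
  induction i using Nat.strong_induction_on with
  | _ i ih =>
    match i with
    | 0 => intro h; exact absurd h (by omega)
    | 1 =>
      intro _
      exact ⟨1 - 3 * X + 3 * X ^ 2, by simp [P]; ring⟩
    | 2 =>
      intro _
      exact ⟨-2 + 9 * X - 24 * X ^ 2 + 45 * X ^ 3 - 54 * X ^ 4 + 27 * X ^ 5,
        by simp [P]; ring⟩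
    | 3 =>
      intro _
      exact ⟨1 - 12 * X + 66 * X ^ 2 - 216 * X ^ 3 + 486 * X ^ 4 - 810 * X ^ 5
        + 972 * X ^ 6 - 729 * X ^ 7 + 243 * X ^ 8, by simp [P]; ring⟩
    | (i + 4) =>
      intro _
      set k := (i + 3) / 3 with hk
      have h1 : (X : Polynomial ℤ) ^ k ∣ P (i + 1) := ih (i + 1) (by omega) (by omega)
      have h2 : (X : Polynomial ℤ) ^ k ∣ P (i + 2) := by
        refine dvd_trans (pow_dvd_pow X ?_) (ih (i + 2) (by omega) (by omega))
        omega
      have h3 : (X : Polynomial ℤ) ^ k ∣ P (i + 3) := by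
        refine dvd_trans (pow_dvd_pow X ?_) (ih (i + 3) (by omega) (by omega))
        omega
      have hc : (X : Polynomial ℤ) ^ k ∣ 3 * P (i + 3) - 3 * P (i + 2) + P (i + 1) :=
        dvd_add (dvd_sub (Dvd.dvd.mul_left h3 3) (Dvd.dvd.mul_left h2 3)) h1
      have hX : (X : Polynomial ℤ) ∣ X - 3 * X ^ 2 + 3 * X ^ 3 :=
        ⟨1 - 3 * X + 3 * X ^ 2, by ring⟩
      have : (X : Polynomial ℤ) ^ (k + 1) ∣ P (i + 4) := by
        rw [show P (i + 4) = (X - 3 * X ^ 2 + 3 * X ^ 3) *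
          (3 * P (i + 3) - 3 * P (i + 2) + P (i + 1)) from rfl, pow_succ, mul_comm]
        exact mul_dvd_mul hX hc
      have he : (i + 4 + 2) / 3 = k + 1 := by omega
      rwa [he]

/-- For i ≥ 1, the coefficient of x^j in Pᵢ vanishes for j < ⌈i/3⌉. -/
theorem P_low_coeff_vanish (i j : ℕ) (hi : 1 ≤ i) (hj : j < (i + 2) / 3) :
    (P i).coeff j = 0 := by
  exact (Polynomial.X_pow_dvd_iff.mp (P_X_pow_dvd i hi)) j hj
end

section
/- With Pᵢ ∈ ℤ[x] defined by the recurrence Pᵢ = (x - 3x² + 3x³)(3P_{i-1} - 3P_{i-2} + P_{i-3}) for i ≥ 4 with initial polynomials P₁ = x-3x²+3x³, P₂ = -2x+9x²-24x³+45x⁴-54x⁵+27x⁶, P₃ = x-12x²+66x³-216x⁴+486x⁵-810x⁶+972x⁷-729x⁸+243x⁹, write dᵢ := ⌈i/3⌉ and Xᵢ(j) for the coefficient of x^j in Pᵢ. Then for every i ≥ 1, the 3-adic valuation of Xᵢ(dᵢ) is 0 (in particular Xᵢ(dᵢ) ≠ 0). -/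
open Polynomial

lemma zmod3_natCast_poly (n : ℕ) (h : (n : ZMod 3) = 0) : ((n : ℕ) : (ZMod 3)[X]) = 0 := by
  rw [← Polynomial.C_eq_natCast, Polynomial.C_eq_zero]; exact h

lemma h3' : (3 : (ZMod 3)[X]) = 0 := by simpa using zmod3_natCast_poly 3 (by decide)

lemma mapP : ∀ i, (P (i + 1)).map (Int.castRingHom (ZMod 3)) = X ^ ((i + 3) / 3) := by
  intro i
  induction i using Nat.strong_induction_on with
  | _ i ih =>
    match i with
    | 0 =>
      show (P 1).map _ = X ^ 1
      simp only [P, Polynomial.map_add, Polynomial.map_sub, Polynomial.map_mul,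
        Polynomial.map_pow, map_X, Polynomial.map_ofNat]
      linear_combination (X ^ 3 - X ^ 2 : (ZMod 3)[X]) * h3'
    | 1 =>
      show (P 2).map _ = X ^ 1
      have e9 : (9 : (ZMod 3)[X]) = 0 := by simpa using zmod3_natCast_poly 9 (by decide)
      have e24 : (24 : (ZMod 3)[X]) = 0 := by simpa using zmod3_natCast_poly 24 (by decide)
      have e45 : (45 : (ZMod 3)[X]) = 0 := by simpa using zmod3_natCast_poly 45 (by decide)
      have e54 : (54 : (ZMod 3)[X]) = 0 := by simpa using zmod3_natCast_poly 54 (by decide)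
      have e27 : (27 : (ZMod 3)[X]) = 0 := by simpa using zmod3_natCast_poly 27 (by decide)
      simp only [P, Polynomial.map_add, Polynomial.map_sub, Polynomial.map_mul,
        Polynomial.map_pow, map_X, Polynomial.map_ofNat, Polynomial.map_neg]
      linear_combination (-X : (ZMod 3)[X]) * h3' + X ^ 2 * e9 - X ^ 3 * e24 + X ^ 4 * e45
        - X ^ 5 * e54 + X ^ 6 * e27
    | 2 =>
      show (P 3).map _ = X ^ 1
      have e12 : (12 : (ZMod 3)[X]) = 0 := by simpa using zmod3_natCast_poly 12 (by decide)
      have e66 : (66 : (ZMod 3)[X]) = 0 := by simpa using zmod3_natCast_poly 66 (by decide)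
      have e216 : (216 : (ZMod 3)[X]) = 0 := by simpa using zmod3_natCast_poly 216 (by decide)
      have e486 : (486 : (ZMod 3)[X]) = 0 := by simpa using zmod3_natCast_poly 486 (by decide)
      have e810 : (810 : (ZMod 3)[X]) = 0 := by simpa using zmod3_natCast_poly 810 (by decide)
      have e972 : (972 : (ZMod 3)[X]) = 0 := by simpa using zmod3_natCast_poly 972 (by decide)
      have e729 : (729 : (ZMod 3)[X]) = 0 := by simpa using zmod3_natCast_poly 729 (by decide)
      have e243 : (243 : (ZMod 3)[X]) = 0 := by simpa using zmod3_natCast_poly 243 (by decide)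
      simp only [P, Polynomial.map_add, Polynomial.map_sub, Polynomial.map_mul,
        Polynomial.map_pow, map_X, Polynomial.map_ofNat]
      linear_combination (-X ^ 2 : (ZMod 3)[X]) * e12 + X ^ 3 * e66 - X ^ 4 * e216
        + X ^ 5 * e486 - X ^ 6 * e810 + X ^ 7 * e972 - X ^ 8 * e729 + X ^ 9 * e243
    | (n + 3) =>
      have h1 := ih n (by omega)
      show (P (n + 4)).map _ = _
      rw [show P (n + 4) = (X - 3 * X ^ 2 + 3 * X ^ 3) *
        (3 * P (n + 3) - 3 * P (n + 2) + P (n + 1)) from rfl]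
      simp only [Polynomial.map_add, Polynomial.map_sub, Polynomial.map_mul,
        Polynomial.map_pow, map_X, Polynomial.map_ofNat, h1]
      rw [show (n + 3 + 3) / 3 = (n + 3) / 3 + 1 by omega]
      linear_combination ((X - 3 * X ^ 2 + 3 * X ^ 3) *
          ((P (n + 3)).map (Int.castRingHom (ZMod 3)) - (P (n + 2)).map (Int.castRingHom (ZMod 3)))
        + (X ^ ((n + 3) / 3)) * (X ^ 3 - X ^ 2) : (ZMod 3)[X]) * h3'

/-- For i ≥ 1, the coefficient of x^{⌈i/3⌉} in Pᵢ has 3-adic valuation 0,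
i.e., it is not divisible by 3 (in particular it is nonzero). -/
theorem P_lead_coeff_not_div_three (i : ℕ) (hi : 1 ≤ i) :
    ¬ (3 : ℤ) ∣ (P i).coeff ((i + 2) / 3) := by
  obtain ⟨j, rfl⟩ : ∃ j, i = j + 1 := ⟨i - 1, by omega⟩
  intro hdvd
  have h := mapP j
  have hc : ((P (j + 1)).coeff ((j + 1 + 2) / 3) : ZMod 3) =
      (X ^ ((j + 3) / 3) : (ZMod 3)[X]).coeff ((j + 1 + 2) / 3) := by
    rw [← h, Polynomial.coeff_map]; rfl
  rw [Polynomial.coeff_X_pow, if_pos (by omega)] at hc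
  have : ((P (j + 1)).coeff ((j + 1 + 2) / 3) : ZMod 3) = 0 := by
    exact_mod_cast (ZMod.intCast_zmod_eq_zero_iff_dvd _ 3).2 (by exact_mod_cast hdvd)
  rw [this] at hc
  exact one_ne_zero hc.symm
end

section
/- With Pᵢ ∈ ℤ[x] and Xᵢ(j) as defined by the recurrence Pᵢ = (x - 3x² + 3x³)(3P_{i-1} - 3P_{i-2} + P_{i-3}) for i ≥ 4 (initial cases P₁, P₂, P₃ as given), and dᵢ := ⌈i/3⌉, we have for every i ≥ 1 and every j ≥ 1 that ν(Xᵢ(dᵢ + j)) ≥ ⌊(j+1)/2⌋, where ν is the 3-adic valuation. -/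
open Polynomial

private lemma Pmul (Q : Polynomial ℤ) : (X - 3 * X ^ 2 + 3 * X ^ 3) * Q
    = X * Q - 3 * (X * (X * Q)) + 3 * (X * (X * (X * Q))) := by ring

private lemma cf0 (Q : Polynomial ℤ) : ((X - 3 * X ^ 2 + 3 * X ^ 3) * Q).coeff 0 = 0 := by
  rw [Pmul]; simp [coeff_ofNat_mul, mul_coeff_zero]

private lemma cf1 (Q : Polynomial ℤ) :
    ((X - 3 * X ^ 2 + 3 * X ^ 3) * Q).coeff 1 = Q.coeff 0 := by
  rw [Pmul]; simp [coeff_ofNat_mul, coeff_X_mul, mul_coeff_zero]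

private lemma cf2 (Q : Polynomial ℤ) :
    ((X - 3 * X ^ 2 + 3 * X ^ 3) * Q).coeff 2 = Q.coeff 1 - 3 * Q.coeff 0 := by
  rw [Pmul]; simp [coeff_ofNat_mul, coeff_X_mul, mul_coeff_zero]

private lemma cf3 (Q : Polynomial ℤ) (k : ℕ) :
    ((X - 3 * X ^ 2 + 3 * X ^ 3) * Q).coeff (k + 3)
      = Q.coeff (k + 2) - 3 * Q.coeff (k + 1) + 3 * Q.coeff k := by
  rw [Pmul]; simp [coeff_X_mul, coeff_ofNat_mul]

private lemma coeffP1 (k : ℕ) : (P 1).coeff k =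
    ((if 1 = k then 1 else 0) - if k = 2 then 3 else 0) + if k = 3 then 3 else 0 := by
  simp [P, coeff_X, coeff_X_pow, coeff_ofNat_mul]

private lemma coeffP2 (k : ℕ) : (P 2).coeff k =
    ((((((-if 1 = k then 2 else 0) + if k = 2 then 9 else 0) - if k = 3 then 24 else 0)
      + if k = 4 then 45 else 0) - if k = 5 then 54 else 0) + if k = 6 then 27 else 0) := by
  simp [P, coeff_X, coeff_X_pow, coeff_ofNat_mul]

private lemma coeffP3 (k : ℕ) : (P 3).coeff k =
    (((((((((if 1 = k then 1 else 0) - if k = 2 then 12 else 0) + if k = 3 then 66 else 0)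
      - if k = 4 then 216 else 0) + if k = 5 then 486 else 0) - if k = 6 then 810 else 0)
      + if k = 7 then 972 else 0) - if k = 8 then 729 else 0) + if k = 9 then 243 else 0) := by
  simp [P, coeff_X, coeff_X_pow, coeff_ofNat_mul]

private lemma coeffQ (a b c : Polynomial ℤ) (t : ℕ) :
    (3 * a - 3 * b + c).coeff t = 3 * a.coeff t - 3 * b.coeff t + c.coeff t := by
  simp [coeff_ofNat_mul]

private lemma Pvanish : ∀ n k, k < (n + 2) / 3 → (P n).coeff k = 0 := by
  intro n
  induction n using Nat.strong_induction_on with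
  | _ n ih =>
    match n with
    | 0 => intro k hk; omega
    | 1 =>
      intro k hk
      have hk0 : k = 0 := by omega
      subst hk0; rw [coeffP1]; norm_num
    | 2 =>
      intro k hk
      have hk0 : k = 0 := by omega
      subst hk0; rw [coeffP2]; norm_num
    | 3 =>
      intro k hk
      have hk0 : k = 0 := by omega
      subst hk0; rw [coeffP3]; norm_num
    | (m + 4) =>
      intro k hk
      have hP : P (m + 4) = (X - 3 * X ^ 2 + 3 * X ^ 3) *
          (3 * P (m + 3) - 3 * P (m + 2) + P (m + 1)) := by rw [P]
      have v3 : ∀ t, t < (m + 5) / 3 → (P (m + 3)).coeff t = 0 :=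
        fun t ht => ih (m + 3) (by omega) t ht
      have v2 : ∀ t, t < (m + 4) / 3 → (P (m + 2)).coeff t = 0 :=
        fun t ht => ih (m + 2) (by omega) t ht
      have v1 : ∀ t, t < (m + 3) / 3 → (P (m + 1)).coeff t = 0 :=
        fun t ht => ih (m + 1) (by omega) t ht
      rw [hP]
      match k, hk with
      | 0, _ => exact cf0 _
      | 1, hk =>
        rw [cf1, coeffQ, v3 0 (by omega), v2 0 (by omega), v1 0 (by omega)]; ring
      | 2, hk =>
        rw [cf2, coeffQ, coeffQ, v3 0 (by omega), v2 0 (by omega), v1 0 (by omega),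
          v3 1 (by omega), v2 1 (by omega), v1 1 (by omega)]; ring
      | (t + 3), hk =>
        rw [cf3, coeffQ, coeffQ, coeffQ,
          v3 (t + 2) (by omega), v2 (t + 2) (by omega), v1 (t + 2) (by omega),
          v3 (t + 1) (by omega), v2 (t + 1) (by omega), v1 (t + 1) (by omega),
          v3 t (by omega), v2 t (by omega), v1 t (by omega)]; ring

private lemma term_bound (p : Polynomial ℤ) (dp a idx T : ℕ)
    (hvan : ∀ k, k < dp → p.coeff k = 0)
    (hdvd : ∀ j, 1 ≤ j → (3 : ℤ) ^ ((j + 1) / 2) ∣ p.coeff (dp + j))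
    (h1 : idx ≤ dp → T ≤ a)
    (h2 : dp < idx → T ≤ a + (idx - dp + 1) / 2) :
    (3 : ℤ) ^ T ∣ (3 : ℤ) ^ a * p.coeff idx := by
  rcases lt_trichotomy idx dp with h | h | h
  · rw [hvan idx h, mul_zero]; exact dvd_zero _
  · subst h; exact dvd_mul_of_dvd_left (pow_dvd_pow 3 (h1 le_rfl)) _
  · have hidx : idx = dp + (idx - dp) := by omega
    rw [hidx]
    calc (3 : ℤ) ^ T ∣ (3 : ℤ) ^ (a + (idx - dp + 1) / 2) := pow_dvd_pow 3 (h2 h)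
      _ ∣ (3 : ℤ) ^ a * p.coeff (dp + (idx - dp)) := by
          rw [pow_add]
          exact mul_dvd_mul_left _ (hdvd _ (by omega))

private lemma Pmain : ∀ n j, 1 ≤ j →
    (3 : ℤ) ^ ((j + 1) / 2) ∣ (P n).coeff ((n + 2) / 3 + j) := by
  intro n
  induction n using Nat.strong_induction_on with
  | _ n ih =>
    match n with
    | 0 =>
      intro j hj
      have h0 : (P 0).coeff ((0 + 2) / 3 + j) = 0 := by
        show (1 : Polynomial ℤ).coeff _ = 0
        rw [coeff_one, if_neg (by omega)]
      rw [h0]; exact dvd_zero _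
    | 1 =>
      intro j hj
      have hidx : (1 + 2) / 3 + j = 1 + j := by norm_num
      rw [hidx, coeffP1]
      match j, hj with
      | 1, _ => norm_num
      | 2, _ => norm_num
      | (t + 3), _ =>
        rw [if_neg (by omega), if_neg (by omega), if_neg (by omega)]
        norm_num
    | 2 =>
      intro j hj
      have hidx : (2 + 2) / 3 + j = 1 + j := by norm_num
      rw [hidx, coeffP2]
      match j, hj with
      | 1, _ => norm_num
      | 2, _ => norm_num
      | 3, _ => norm_num
      | 4, _ => norm_num
      | 5, _ => norm_num
      | (t + 6), _ =>
        rw [if_neg (by omega), if_neg (by omega), if_neg (by omega), if_neg (by omega),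
          if_neg (by omega), if_neg (by omega)]
        norm_num
    | 3 =>
      intro j hj
      have hidx : (3 + 2) / 3 + j = 1 + j := by norm_num
      rw [hidx, coeffP3]
      match j, hj with
      | 1, _ => norm_num
      | 2, _ => norm_num
      | 3, _ => norm_num
      | 4, _ => norm_num
      | 5, _ => norm_num
      | 6, _ => norm_num
      | 7, _ => norm_num
      | 8, _ => norm_num
      | (t + 9), _ =>
        rw [if_neg (by omega), if_neg (by omega), if_neg (by omega), if_neg (by omega),
          if_neg (by omega), if_neg (by omega), if_neg (by omega), if_neg (by omega),
          if_neg (by omega)]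
        norm_num
    | (m + 4) =>
      intro j hj
      have hP : P (m + 4) = (X - 3 * X ^ 2 + 3 * X ^ 3) *
          (3 * P (m + 3) - 3 * P (m + 2) + P (m + 1)) := by rw [P]
      have hb3 : ∀ a idx T, (idx ≤ (m + 5) / 3 → T ≤ a) →
          ((m + 5) / 3 < idx → T ≤ a + (idx - (m + 5) / 3 + 1) / 2) →
          (3 : ℤ) ^ T ∣ (3 : ℤ) ^ a * (P (m + 3)).coeff idx :=
        fun a idx T h1 h2 => term_bound _ _ _ _ _ (Pvanish (m + 3))
          (ih (m + 3) (by omega)) h1 h2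
      have hb2 : ∀ a idx T, (idx ≤ (m + 4) / 3 → T ≤ a) →
          ((m + 4) / 3 < idx → T ≤ a + (idx - (m + 4) / 3 + 1) / 2) →
          (3 : ℤ) ^ T ∣ (3 : ℤ) ^ a * (P (m + 2)).coeff idx :=
        fun a idx T h1 h2 => term_bound _ _ _ _ _ (Pvanish (m + 2))
          (ih (m + 2) (by omega)) h1 h2
      have hb1 : ∀ a idx T, (idx ≤ (m + 3) / 3 → T ≤ a) →
          ((m + 3) / 3 < idx → T ≤ a + (idx - (m + 3) / 3 + 1) / 2) →
          (3 : ℤ) ^ T ∣ (3 : ℤ) ^ a * (P (m + 1)).coeff idx :=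
        fun a idx T h1 h2 => term_bound _ _ _ _ _ (Pvanish (m + 1))
          (ih (m + 1) (by omega)) h1 h2
      obtain ⟨t, ht⟩ : ∃ t, (m + 4 + 2) / 3 + j = t + 3 := ⟨(m + 4 + 2) / 3 + j - 3, by omega⟩
      rw [hP, ht, cf3, coeffQ, coeffQ, coeffQ]
      have h1 : (3 : ℤ) ^ ((j + 1) / 2) ∣ (3 * (P (m + 3)).coeff (t + 2)
          - 3 * (P (m + 2)).coeff (t + 2) + (P (m + 1)).coeff (t + 2)) := by
        have a := hb3 1 (t + 2) ((j + 1) / 2) (by omega) (by omega)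
        have b := hb2 1 (t + 2) ((j + 1) / 2) (by omega) (by omega)
        have c := hb1 0 (t + 2) ((j + 1) / 2) (by omega) (by omega)
        rw [pow_one] at a b
        rw [pow_zero, one_mul] at c
        exact dvd_add (dvd_sub a b) c
      have h2 : (3 : ℤ) ^ ((j + 1) / 2) ∣ 3 * (3 * (P (m + 3)).coeff (t + 1)
          - 3 * (P (m + 2)).coeff (t + 1) + (P (m + 1)).coeff (t + 1)) := by
        have a := hb3 2 (t + 1) ((j + 1) / 2) (by omega) (by omega)
        have b := hb2 2 (t + 1) ((j + 1) / 2) (by omega) (by omega)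
        have c := hb1 1 (t + 1) ((j + 1) / 2) (by omega) (by omega)
        have e : (3 : ℤ) * (3 * (P (m + 3)).coeff (t + 1)
            - 3 * (P (m + 2)).coeff (t + 1) + (P (m + 1)).coeff (t + 1))
            = 3 ^ 2 * (P (m + 3)).coeff (t + 1) - 3 ^ 2 * (P (m + 2)).coeff (t + 1)
              + 3 ^ 1 * (P (m + 1)).coeff (t + 1) := by ring
        rw [e]
        exact dvd_add (dvd_sub a b) c
      have h3 : (3 : ℤ) ^ ((j + 1) / 2) ∣ 3 * (3 * (P (m + 3)).coeff t
          - 3 * (P (m + 2)).coeff t + (P (m + 1)).coeff t) := by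
        have a := hb3 2 t ((j + 1) / 2) (by omega) (by omega)
        have b := hb2 2 t ((j + 1) / 2) (by omega) (by omega)
        have c := hb1 1 t ((j + 1) / 2) (by omega) (by omega)
        have e : (3 : ℤ) * (3 * (P (m + 3)).coeff t
            - 3 * (P (m + 2)).coeff t + (P (m + 1)).coeff t)
            = 3 ^ 2 * (P (m + 3)).coeff t - 3 ^ 2 * (P (m + 2)).coeff t
              + 3 ^ 1 * (P (m + 1)).coeff t := by ring
        rw [e]
        exact dvd_add (dvd_sub a b) c
      exact dvd_add (dvd_sub h1 h2) h3

/-- For i ≥ 1 and j ≥ 1, ν₃(Xᵢ(dᵢ + j)) ≥ ⌊(j+1)/2⌋, i.e.,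
3^⌊(j+1)/2⌋ divides the coefficient of x^{⌈i/3⌉+j} in Pᵢ. -/
theorem P_coeff_three_adic (i j : ℕ) (hi : 1 ≤ i) (hj : 1 ≤ j) :
    (3 : ℤ) ^ ((j + 1) / 2) ∣ (P i).coeff ((i + 2) / 3 + j) := by
  exact Pmain i j hj
end
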